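/- arXiv:math/9907102 — 8 statements merged into one kernel-verified Lean document; each statement's English description precedes it below -/
import Mathlib

section
/- Let n ≥ 1 and let m, μ be integers with 0 ≤ μ < m. For j = 2μ, …, 2m let A_j : ℝⁿ → ℂ be a homogeneous polynomial of degree j and set A(ξ,λ) = Σ_{j=2μ}^{2m} λ^{2m−j} A_j(ξ). Then there exists a constant C > 0 with |A(ξ,λ)| ≥ C |ξ|^{2μ} (λ + |ξ|)^{2m−2μ} for all ξ ∈ ℝⁿ and all λ ∈ [0,∞) if and only if the following three conditions hold: (i) A_{2m}(ξ) ≠ 0 for all ξ ∈ ℝⁿ \ {0}; (ii) A_{2μ}(ξ) ≠ 0 for all ξ ∈ ℝⁿ \ {0}; (iii) A(ξ,λ) ≠ 0 for all ξ ∈ ℝⁿ \ {0} and all λ ∈ [0,∞). -/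
open MeasureTheory Finset Polynomial

noncomputable section

/-- `A : ℝⁿ → ℂ` is a (complex-valued) polynomial map, homogeneous of degree `j`
(under positive scaling). -/
def IsHomogPoly (n j : ℕ) (A : EuclideanSpace ℝ (Fin n) → ℂ) : Prop :=
  (∃ p : MvPolynomial (Fin n) ℂ, ∀ ξ, A ξ = MvPolynomial.eval (fun i => (ξ i : ℂ)) p) ∧
    ∀ t : ℝ, 0 < t → ∀ ξ, A (t • ξ) = (t : ℂ) ^ j * A ξ

/-- The operator pencil `A(ξ,λ) = Σ_{j=2μ}^{2m} λ^{2m−j} A_j(ξ)`. -/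
def pencil {n : ℕ} (m μ : ℕ) (A : ℕ → EuclideanSpace ℝ (Fin n) → ℂ)
    (ξ : EuclideanSpace ℝ (Fin n)) (lam : ℝ) : ℂ :=
  ∑ j ∈ Finset.Icc (2 * μ) (2 * m), (lam : ℂ) ^ (2 * m - j) * A j ξ

lemma IsHomogPoly.continuous {n j : ℕ} {A : EuclideanSpace ℝ (Fin n) → ℂ}
    (h : IsHomogPoly n j A) : Continuous A := by
  obtain ⟨⟨p, hp⟩, -⟩ := h
  have : A = (fun x => MvPolynomial.eval x p) ∘ (fun ξ i => (ξ i : ℂ)) := funext hp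
  rw [this]
  exact Continuous.comp (MvPolynomial.continuous_eval p)
    (continuous_pi fun i => Complex.continuous_ofReal.comp (EuclideanSpace.proj i).continuous)

/-- A positive-degree homogeneous polynomial vanishes at the origin. -/
lemma IsHomogPoly.zero_at_zero {n j : ℕ} {A : EuclideanSpace ℝ (Fin n) → ℂ}
    (h : IsHomogPoly n j A) (hj : 1 ≤ j) : A 0 = 0 := by
  have h2 := h.2 2 (by norm_num) 0
  rw [smul_zero] at h2
  have habs := congrArg (‖·‖) h2
  rw [norm_mul, norm_pow, Complex.norm_real, Real.norm_eq_abs] at habs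
  have h2j : (1:ℝ) < |(2:ℝ)| ^ j := by
    rw [abs_of_pos (by norm_num : (0:ℝ) < 2)]
    exact one_lt_pow₀ (by norm_num) (by omega)
  have hz : ‖A 0‖ = 0 := by
    nlinarith [norm_nonneg (A 0)]
  exact norm_eq_zero.mp hz

/-- A degree-zero homogeneous polynomial is constant. -/
lemma IsHomogPoly.const {n : ℕ} {A : EuclideanSpace ℝ (Fin n) → ℂ}
    (h : IsHomogPoly n 0 A) (ξ : EuclideanSpace ℝ (Fin n)) : A ξ = A 0 := by
  have hcont := h.continuous
  have hlim : Filter.Tendsto (fun t : ℝ => A (t • ξ)) (nhdsWithin 0 (Set.Ioi 0)) (nhds (A 0)) := by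
    have h1 : Filter.Tendsto (fun t : ℝ => t • ξ) (nhdsWithin 0 (Set.Ioi 0)) (nhds 0) := by
      have := (continuous_id.smul (continuous_const (y := ξ))).tendsto (0:ℝ)
      simp only [Pi.smul_apply', id_eq, zero_smul] at this
      exact this.mono_left nhdsWithin_le_nhds
    exact (hcont.tendsto 0).comp h1
  have hlim2 : Filter.Tendsto (fun _ : ℝ => A ξ) (nhdsWithin 0 (Set.Ioi 0)) (nhds (A 0)) := by
    refine hlim.congr' ?_
    filter_upwards [self_mem_nhdsWithin] with t ht
    simpa using h.2 t ht ξ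
  exact (tendsto_nhds_unique hlim2 tendsto_const_nhds).symm

/-- characterization of `N`-ellipticity with parameter in `[0,∞)`. -/
theorem statement0 (n m μ : ℕ) (hn : 1 ≤ n) (hμm : μ < m)
    (A : ℕ → EuclideanSpace ℝ (Fin n) → ℂ)
    (hA : ∀ j ∈ Finset.Icc (2 * μ) (2 * m), IsHomogPoly n j (A j)) :
    (∃ C > (0 : ℝ), ∀ (ξ : EuclideanSpace ℝ (Fin n)) (lam : ℝ), 0 ≤ lam →
        C * ‖ξ‖ ^ (2 * μ) * (lam + ‖ξ‖) ^ (2 * m - 2 * μ) ≤ ‖pencil m μ A ξ lam‖)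
      ↔ ((∀ ξ : EuclideanSpace ℝ (Fin n), ξ ≠ 0 → A (2 * m) ξ ≠ 0) ∧
          (∀ ξ : EuclideanSpace ℝ (Fin n), ξ ≠ 0 → A (2 * μ) ξ ≠ 0) ∧
          (∀ ξ : EuclideanSpace ℝ (Fin n), ξ ≠ 0 → ∀ lam : ℝ, 0 ≤ lam →
            pencil m μ A ξ lam ≠ 0)) := by
  have hmem2m : 2 * m ∈ Finset.Icc (2 * μ) (2 * m) := by
    simp [Finset.mem_Icc]; omega
  have hmem2μ : 2 * μ ∈ Finset.Icc (2 * μ) (2 * m) := by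
    rw [Finset.mem_Icc]; omega
  constructor
  · rintro ⟨C, hC, hbound⟩
    have hiii : ∀ ξ : EuclideanSpace ℝ (Fin n), ξ ≠ 0 → ∀ lam : ℝ, 0 ≤ lam →
        pencil m μ A ξ lam ≠ 0 := by
      intro ξ hξ lam hlam
      have hb := hbound ξ lam hlam
      have hpos : 0 < C * ‖ξ‖ ^ (2 * μ) * (lam + ‖ξ‖) ^ (2 * m - 2 * μ) := by
        have h1 : 0 < ‖ξ‖ := norm_pos_iff.mpr hξ
        positivity
      intro hc
      rw [hc] at hb
      simp at hb
      linarith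
    refine ⟨?_, ?_, hiii⟩
    · -- A_{2m} ≠ 0, via λ = 0
      intro ξ hξ
      have := hiii ξ hξ 0 le_rfl
      have hp0 : pencil m μ A ξ 0 = A (2 * m) ξ := by
        rw [pencil]
        rw [Finset.sum_eq_single (2 * m)]
        · simp
        · intro j hj hne
          rw [Finset.mem_Icc] at hj
          have : 2 * m - j ≠ 0 := by omega
          simp [zero_pow this]
        · intro h; exact absurd hmem2m h
      rwa [hp0] at this
    · -- A_{2μ} ≠ 0 via scaling
      intro ξ hξ hc
      have hnξ : 0 < ‖ξ‖ := norm_pos_iff.mpr hξ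
      set M : ℝ := ∑ j ∈ Finset.Icc (2 * μ) (2 * m), ‖A j ξ‖ with hM
      have hM0 : 0 ≤ M := Finset.sum_nonneg fun j _ => norm_nonneg _
      have key : ∀ s : ℝ, 0 < s → s ≤ 1 → C * ‖ξ‖ ^ (2 * μ) ≤ s * M := by
        intro s hs hs1
        have hb := hbound (s • ξ) 1 zero_le_one
        have hns : ‖s • ξ‖ = s * ‖ξ‖ := by
          rw [norm_smul, Real.norm_eq_abs, abs_of_pos hs]
        rw [hns] at hb
        have hpen : pencil m μ A (s • ξ) 1 =
            ∑ j ∈ Finset.Icc (2 * μ) (2 * m), (s : ℂ) ^ j * A j ξ := by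
          rw [pencil]
          refine Finset.sum_congr rfl fun j hj => ?_
          rw [(hA j hj).2 s hs]
          simp
        rw [hpen] at hb
        have hge1 : (1:ℝ) ≤ (1 + s * ‖ξ‖) ^ (2 * m - 2 * μ) := by
          apply one_le_pow₀
          nlinarith
        have hb2 : C * (s * ‖ξ‖) ^ (2 * μ) ≤
            ‖∑ j ∈ Finset.Icc (2 * μ) (2 * m), (s : ℂ) ^ j * A j ξ‖ := by
          calc C * (s * ‖ξ‖) ^ (2 * μ)
              = C * (s * ‖ξ‖) ^ (2 * μ) * 1 := by ring
            _ ≤ C * (s * ‖ξ‖) ^ (2 * μ) * (1 + s * ‖ξ‖) ^ (2 * m - 2 * μ) := by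
                apply mul_le_mul_of_nonneg_left hge1
                positivity
            _ ≤ _ := hb
        have hub : ‖∑ j ∈ Finset.Icc (2 * μ) (2 * m), (s : ℂ) ^ j * A j ξ‖ ≤
            s ^ (2 * μ + 1) * M := by
          calc ‖∑ j ∈ Finset.Icc (2 * μ) (2 * m), (s : ℂ) ^ j * A j ξ‖
              ≤ ∑ j ∈ Finset.Icc (2 * μ) (2 * m), ‖(s : ℂ) ^ j * A j ξ‖ :=
                norm_sum_le _ _
            _ ≤ ∑ j ∈ Finset.Icc (2 * μ) (2 * m), s ^ (2 * μ + 1) * ‖A j ξ‖ := by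
                refine Finset.sum_le_sum fun j hj => ?_
                rw [Finset.mem_Icc] at hj
                rcases eq_or_ne j (2 * μ) with rfl | hne
                · rw [hc]
                  simp
                · rw [norm_mul, norm_pow, Complex.norm_real, Real.norm_eq_abs, abs_of_pos hs]
                  apply mul_le_mul_of_nonneg_right _ (norm_nonneg _)
                  apply pow_le_pow_of_le_one (le_of_lt hs) hs1
                  omega
            _ = s ^ (2 * μ + 1) * M := by rw [hM, Finset.mul_sum]
        have hfin : C * (s * ‖ξ‖) ^ (2 * μ) ≤ s ^ (2 * μ + 1) * M := le_trans hb2 hub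
        rw [mul_pow] at hfin
        have hs2μ : 0 < s ^ (2 * μ) := by positivity
        have h' : s ^ (2 * μ) * (C * ‖ξ‖ ^ (2 * μ)) ≤ s ^ (2 * μ) * (s * M) := by
          calc s ^ (2 * μ) * (C * ‖ξ‖ ^ (2 * μ)) = C * (s ^ (2 * μ) * ‖ξ‖ ^ (2 * μ)) := by ring
            _ ≤ s ^ (2 * μ + 1) * M := hfin
            _ = s ^ (2 * μ) * (s * M) := by ring
        exact le_of_mul_le_mul_left h' hs2μ
      set Kc := C * ‖ξ‖ ^ (2 * μ) with hKc
      have hKpos : 0 < Kc := by positivity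
      set s₀ := min 1 (Kc / (2 * (M + 1))) with hs₀
      have hs₀pos : 0 < s₀ := lt_min one_pos (by positivity)
      have hkey := key s₀ hs₀pos (min_le_left _ _)
      have hlt : s₀ * M < Kc := by
        calc s₀ * M ≤ (Kc / (2 * (M + 1))) * M := by
              apply mul_le_mul_of_nonneg_right (min_le_right _ _) hM0
          _ < Kc := by
              rw [div_mul_eq_mul_div, div_lt_iff₀ (by positivity)]
              nlinarith
      linarith
  · rintro ⟨_, hii, hiii⟩
    set ω₀ : EuclideanSpace ℝ (Fin n) := EuclideanSpace.single ⟨0, hn⟩ (1:ℝ) with hω₀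
    have hnω₀ : ‖ω₀‖ = 1 := by simp [hω₀, EuclideanSpace.norm_single]
    set T : Set (ℝ × ℝ) := (fun t : ℝ => (t, 1 - t)) '' Set.Icc 0 1 with hT
    set K : Set (EuclideanSpace ℝ (Fin n) × ℝ × ℝ) := Metric.sphere 0 1 ×ˢ T with hKs
    have hKcomp : IsCompact K :=
      (isCompact_sphere 0 1).prod ((isCompact_Icc).image (by fun_prop))
    have hKne : K.Nonempty := ⟨(ω₀, (1, 0)), by
      constructor
      · simpa [mem_sphere_zero_iff_norm] using hnω₀
      · exact ⟨1, by norm_num, by norm_num⟩⟩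
    set f : EuclideanSpace ℝ (Fin n) × ℝ × ℝ → ℝ := fun q =>
      ‖∑ j ∈ Finset.Icc (2 * μ) (2 * m),
        (q.2.2 : ℂ) ^ (2 * m - j) * (q.2.1 : ℂ) ^ (j - 2 * μ) * A j q.1‖ with hf
    have hfcont : Continuous f := by
      apply continuous_norm.comp
      apply continuous_finset_sum
      intro j hj
      have hAc : Continuous (A j) := (hA j hj).continuous
      fun_prop
    obtain ⟨q₀, hq₀K, hq₀min⟩ := hKcomp.exists_isMinOn hKne hfcont.continuousOn
    -- f is positive on K
    have hfpos : ∀ q ∈ K, 0 < f q := by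
      rintro ⟨ω, r, lam⟩ ⟨hωs, hrl⟩
      obtain ⟨t, ht, htev⟩ := hrl
      obtain ⟨ht0, ht1⟩ := ht
      simp only [Prod.mk.injEq] at htev
      obtain ⟨hr, hlam⟩ := htev
      subst hr hlam
      have hωnorm : ‖ω‖ = 1 := by simpa [mem_sphere_zero_iff_norm] using hωs
      have hωne : ω ≠ 0 := by intro h; rw [h] at hωnorm; simp at hωnorm
      rcases eq_or_lt_of_le ht0 with hteq | htpos
      · -- t = 0 : value is |A_{2μ} ω|
        subst hteq
        have hval : f (ω, (0:ℝ), (1:ℝ) - 0) = ‖A (2 * μ) ω‖ := by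
          show ‖_‖ = _
          congr 1
          rw [Finset.sum_eq_single (2 * μ)]
          · simp
          · intro j hj hne
            rw [Finset.mem_Icc] at hj
            have : j - 2 * μ ≠ 0 := by omega
            simp [zero_pow this]
          · intro h; exact absurd hmem2μ h
        rw [hval]
        exact norm_pos_iff.mpr (hii ω hωne)
      · -- t > 0 : relate to the pencil
        have hsum : (t : ℂ) ^ (2 * μ) * (∑ j ∈ Finset.Icc (2 * μ) (2 * m),
            ((1 - t : ℝ) : ℂ) ^ (2 * m - j) * (t : ℂ) ^ (j - 2 * μ) * A j ω)
            = pencil m μ A (t • ω) (1 - t) := by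
          rw [pencil, Finset.mul_sum]
          refine Finset.sum_congr rfl fun j hj => ?_
          rw [Finset.mem_Icc] at hj
          rw [(hA j (by rw [Finset.mem_Icc]; exact hj)).2 t htpos]
          obtain ⟨b, hb⟩ : ∃ b, j = 2 * μ + b := ⟨j - 2 * μ, by omega⟩
          have h2 : j - 2 * μ = b := by omega
          rw [h2, hb]
          push_cast
          ring
        have hpne : pencil m μ A (t • ω) (1 - t) ≠ 0 := by
          apply hiii
          · exact smul_ne_zero (ne_of_gt htpos) hωne
          · linarith
        have hsumne : (∑ j ∈ Finset.Icc (2 * μ) (2 * m),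
            ((1 - t : ℝ) : ℂ) ^ (2 * m - j) * (t : ℂ) ^ (j - 2 * μ) * A j ω) ≠ 0 := by
          intro h
          rw [h, mul_zero] at hsum
          exact hpne hsum.symm
        exact norm_pos_iff.mpr hsumne
    set C := f q₀ with hCdef
    have hCpos : 0 < C := hfpos q₀ hq₀K
    have hClb : ∀ q ∈ K, C ≤ f q := fun q hq => hq₀min hq
    refine ⟨C, hCpos, ?_⟩
    intro ξ lam hlam
    by_cases hξ : ξ = 0
    · subst hξ
      rw [norm_zero]
      rcases Nat.eq_zero_or_pos μ with hμ0 | hμpos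
      · -- μ = 0 : pencil(0,λ) = λ^{2m} A₀(0)
        subst hμ0
        have hA0 : IsHomogPoly n 0 (A 0) := by simpa using hA 0 (by simp)
        have hp0 : pencil m 0 A 0 lam = (lam : ℂ) ^ (2 * m) * A 0 0 := by
          rw [pencil]
          rw [Finset.sum_eq_single 0]
          · simp
          · intro j hj hne
            rw [Finset.mem_Icc] at hj
            have hj1 : 1 ≤ j := by omega
            rw [(hA j (by rw [Finset.mem_Icc]; omega)).zero_at_zero hj1, mul_zero]
          · intro h
            simp at h
        -- C ≤ |A 0 0| via the point (ω₀, 0, 1)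
        have hmemK : (ω₀, ((0:ℝ), (1:ℝ))) ∈ K := by
          constructor
          · simpa [mem_sphere_zero_iff_norm] using hnω₀
          · exact ⟨0, by norm_num, by norm_num⟩
        have hfval : f (ω₀, ((0:ℝ), (1:ℝ))) = ‖A 0 ω₀‖ := by
          show ‖_‖ = _
          congr 1
          rw [Finset.sum_eq_single 0]
          · simp
          · intro j hj hne
            rw [Finset.mem_Icc] at hj
            have hz : j - 2 * 0 ≠ 0 := by omega
            have hzero : ((0:ℝ):ℂ) ^ (j - 2 * 0) = 0 := by
              rw [Complex.ofReal_zero]; exact zero_pow hz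
            rw [hzero]
            ring
          · intro h
            simp at h
        have hCA : C ≤ ‖A 0 0‖ := by
          have := hClb _ hmemK
          rw [hfval] at this
          rwa [hA0.const ω₀] at this
        rw [hp0, norm_mul, norm_pow, Complex.norm_real, Real.norm_eq_abs, abs_of_nonneg hlam]
        simp only [Nat.mul_zero, pow_zero, mul_one, add_zero, Nat.sub_zero]
        calc C * lam ^ (2 * m) ≤ ‖A 0 0‖ * lam ^ (2 * m) := by
              apply mul_le_mul_of_nonneg_right hCA (by positivity)
          _ = lam ^ (2 * m) * ‖A 0 0‖ := by ring
      · -- μ > 0 : LHS is zero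
        have : (0:ℝ) ^ (2 * μ) = 0 := zero_pow (by omega)
        rw [this, mul_zero, zero_mul]
        exact norm_nonneg _
    · -- ξ ≠ 0 : rescale to the compact set
      have hR : 0 < ‖ξ‖ := norm_pos_iff.mpr hξ
      set R := ‖ξ‖ with hRdef
      set s := lam + R with hs
      have hspos : 0 < s := by positivity
      set ω : EuclideanSpace ℝ (Fin n) := ‖ξ‖⁻¹ • ξ with hω
      have hωn : ‖ω‖ = 1 := norm_smul_inv_norm hξ
      set r := R / s with hr
      set lam' := lam / s with hlam'
      have hr0 : 0 ≤ r := by positivity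
      have hr1 : r ≤ 1 := by
        rw [hr, div_le_one hspos, hs]
        linarith
      have hrl : 1 - r = lam' := by
        rw [hr, hlam', hs]
        field_simp
        ring
      have hmemK : (ω, (r, lam')) ∈ K := by
        constructor
        · simpa [mem_sphere_zero_iff_norm] using hωn
        · exact ⟨r, ⟨hr0, hr1⟩, by dsimp only; rw [hrl]⟩
      have hfq := hClb _ hmemK
      have hRs : R = s * r := by
        rw [hr]; field_simp
      have hlams : lam = s * lam' := by
        rw [hlam']; field_simp
      have hξeq : ξ = R • ω := by
        rw [hω, hRdef, smul_smul, mul_inv_cancel₀ hR.ne', one_smul]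
      -- key identity
      have hkey : pencil m μ A ξ lam =
          ((s ^ (2 * m - 2 * μ) * R ^ (2 * μ) : ℝ) : ℂ) *
            (∑ j ∈ Finset.Icc (2 * μ) (2 * m),
              (lam' : ℂ) ^ (2 * m - j) * (r : ℂ) ^ (j - 2 * μ) * A j ω) := by
        rw [pencil, Finset.mul_sum]
        refine Finset.sum_congr rfl fun j hj => ?_
        rw [Finset.mem_Icc] at hj
        rw [hξeq, (hA j (by rw [Finset.mem_Icc]; exact hj)).2 R hR]
        obtain ⟨b, hb⟩ : ∃ b, j = 2 * μ + b := ⟨j - 2 * μ, by omega⟩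
        obtain ⟨a, ha⟩ : ∃ a, 2 * m = j + a := ⟨2 * m - j, by omega⟩
        have h1 : 2 * m - j = a := by omega
        have h2 : j - 2 * μ = b := by omega
        have h3 : 2 * m - 2 * μ = a + b := by omega
        rw [h1, h2, h3, hRs, hlams]
        have hj' : j = 2 * μ + b := hb
        rw [hj']
        push_cast
        ring
      rw [hkey, norm_mul, Complex.norm_real, Real.norm_eq_abs]
      have habs : |s ^ (2 * m - 2 * μ) * R ^ (2 * μ)| = s ^ (2 * m - 2 * μ) * R ^ (2 * μ) := by
        apply abs_of_nonneg
        positivity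
      rw [habs]
      have hfval : C ≤ ‖∑ j ∈ Finset.Icc (2 * μ) (2 * m),
          (lam' : ℂ) ^ (2 * m - j) * (r : ℂ) ^ (j - 2 * μ) * A j ω‖ := hfq
      calc C * R ^ (2 * μ) * (lam + R) ^ (2 * m - 2 * μ)
          = (s ^ (2 * m - 2 * μ) * R ^ (2 * μ)) * C := by rw [hs]; ring
        _ ≤ (s ^ (2 * m - 2 * μ) * R ^ (2 * μ)) *
              ‖∑ j ∈ Finset.Icc (2 * μ) (2 * m),
                (lam' : ℂ) ^ (2 * m - j) * (r : ℂ) ^ (j - 2 * μ) * A j ω‖ := by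
            apply mul_le_mul_of_nonneg_left hfval
            positivity
end
end

section
/- Let A(ξ,λ) = Σ_{j=2μ}^{2m} λ^{2m−j} A_j(ξ) be N-elliptic with parameter in [0,∞). Then the function Q(τ) := τ^{−2μ} A((0,…,0,τ), 1), defined for real τ ≠ 0, extends to a polynomial in τ of degree exactly 2m − 2μ, and there exists a constant C > 0 such that |Q(τ)| ≥ C (1 + |τ|)^{2m−2μ} for all τ ∈ ℝ; in particular Q(0) ≠ 0 and Q has no real roots. -/
open MeasureTheory Finset Polynomial

noncomputable section

/-- `N`-ellipticity with parameter in `[0,∞)`. -/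
def NElliptic {n : ℕ} (m μ : ℕ) (A : ℕ → EuclideanSpace ℝ (Fin n) → ℂ) : Prop :=
  ∃ C > (0 : ℝ), ∀ (ξ : EuclideanSpace ℝ (Fin n)) (lam : ℝ), 0 ≤ lam →
    C * ‖ξ‖ ^ (2 * μ) * (lam + ‖ξ‖) ^ (2 * m - 2 * μ) ≤ ‖pencil m μ A ξ lam‖

/-- The vector `(ξ', t) ∈ ℝ^{k+1}` obtained by appending a last coordinate. -/
def snocVec {k : ℕ} (ξ' : EuclideanSpace ℝ (Fin k)) (t : ℝ) :
    EuclideanSpace ℝ (Fin (k + 1)) :=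
  (WithLp.equiv 2 (Fin (k + 1) → ℝ)).symm (Fin.snoc (WithLp.equiv 2 (Fin k → ℝ) ξ') t)

lemma snocVec_zero (k : ℕ) (τ : ℝ) :
    snocVec (0 : EuclideanSpace ℝ (Fin k)) τ = EuclideanSpace.single (Fin.last k) τ := by
  ext i
  simp only [snocVec, WithLp.equiv_symm_apply, PiLp.toLp_apply, EuclideanSpace.single_apply]
  induction i using Fin.lastCases with
  | last => simp
  | cast i =>
    simp [Fin.snoc_castSucc, (Fin.castSucc_lt_last i).ne]

lemma smul_snoc (k : ℕ) (τ : ℝ) :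
    (τ • snocVec (0 : EuclideanSpace ℝ (Fin k)) 1) = snocVec (0 : EuclideanSpace ℝ (Fin k)) τ := by
  rw [snocVec_zero, snocVec_zero]
  ext i
  simp only [PiLp.smul_apply, EuclideanSpace.single_apply, smul_eq_mul]
  split <;> simp

lemma norm_snoc (k : ℕ) (τ : ℝ) : ‖snocVec (0 : EuclideanSpace ℝ (Fin k)) τ‖ = |τ| := by
  rw [snocVec_zero, EuclideanSpace.norm_single]; exact Real.norm_eq_abs τ

lemma homog_eval (k j : ℕ) (A : EuclideanSpace ℝ (Fin (k+1)) → ℂ)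
    (h : IsHomogPoly (k+1) j A) (τ : ℝ) :
    A (snocVec (0 : EuclideanSpace ℝ (Fin k)) τ) =
      A (snocVec (0 : EuclideanSpace ℝ (Fin k)) 1) * (τ : ℂ) ^ j := by
  obtain ⟨⟨p, hp⟩, hhom⟩ := h
  set g : Fin (k+1) → Polynomial ℂ := fun i => if i = Fin.last k then (X : ℂ[X]) else 0 with hg
  set q : Polynomial ℂ := MvPolynomial.aeval g p with hqdef
  have hq : ∀ σ : ℝ, Polynomial.eval (σ:ℂ) q = A (snocVec (0 : EuclideanSpace ℝ (Fin k)) σ) := by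
    intro σ
    rw [hp, hqdef, ← Polynomial.coe_aeval_eq_eval,
      MvPolynomial.comp_aeval_apply (f := g) (Polynomial.aeval (σ:ℂ)) p]
    rw [snocVec_zero]
    have haeval : ∀ (f : Fin (k+1) → ℂ) (r : MvPolynomial (Fin (k+1)) ℂ),
        MvPolynomial.aeval f r = MvPolynomial.eval f r := fun f r => rfl
    rw [haeval]
    have hfun : (fun i => (Polynomial.aeval (σ:ℂ)) (g i))
        = fun i => ((EuclideanSpace.single (Fin.last k) σ i : ℝ) : ℂ) := by
      funext i
      by_cases hi : i = Fin.last k <;> simp [hg, hi, EuclideanSpace.single_apply]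
    rw [hfun]
  have key : q = Polynomial.C (A (snocVec (0 : EuclideanSpace ℝ (Fin k)) 1)) * X ^ j := by
    apply Polynomial.eq_of_infinite_eval_eq
    apply Set.Infinite.mono (s := (fun σ : ℝ => (σ:ℂ)) '' Set.Ioi 1)
    · rintro _ ⟨σ, hσ, rfl⟩
      have hσ0 : (0:ℝ) < σ := lt_trans one_pos hσ
      simp only [Set.mem_setOf_eq, hq σ, Polynomial.eval_mul, Polynomial.eval_C,
        Polynomial.eval_pow, Polynomial.eval_X]
      rw [← smul_snoc, hhom σ hσ0]
      ring
    · exact Set.Infinite.image (fun a _ b _ h => Complex.ofReal_inj.mp h)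
        (Set.Ioi_infinite 1)
  have := hq τ
  rw [key] at this
  simpa using this.symm

/-- the polynomial `Q(τ) = τ^{-2μ} A((0,…,0,τ),1)` for an `N`-elliptic pencil:
it has degree exactly `2m - 2μ`, satisfies `|Q(τ)| ≥ C (1+|τ|)^{2m-2μ}` on ℝ, `Q(0) ≠ 0`
and `Q` has no real roots. -/
theorem statement1 (k m μ : ℕ) (hμm : μ < m)
    (A : ℕ → EuclideanSpace ℝ (Fin (k + 1)) → ℂ)
    (hA : ∀ j ∈ Finset.Icc (2 * μ) (2 * m), IsHomogPoly (k + 1) j (A j))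
    (hell : NElliptic m μ A) :
    ∃ Q : Polynomial ℂ,
      (∀ τ : ℝ, τ ≠ 0 →
        Polynomial.eval (τ : ℂ) Q
          = ((τ : ℂ) ^ (2 * μ))⁻¹ * pencil m μ A (snocVec (0 : EuclideanSpace ℝ (Fin k)) τ) 1) ∧
      Q.degree = (2 * m - 2 * μ : ℕ) ∧
      (∃ C > (0 : ℝ), ∀ τ : ℝ,
        C * (1 + |τ|) ^ (2 * m - 2 * μ) ≤ ‖Polynomial.eval (τ : ℂ) Q‖) ∧
      Polynomial.eval 0 Q ≠ 0 ∧
      (∀ τ : ℝ, Polynomial.eval (τ : ℂ) Q ≠ 0) := by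
  obtain ⟨C, hC, hCle⟩ := hell
  set d : ℕ := 2 * m - 2 * μ with hd
  set c : ℕ → ℂ := fun j => A j (snocVec (0 : EuclideanSpace ℝ (Fin k)) 1) with hc
  have hval : ∀ j ∈ Finset.Icc (2 * μ) (2 * m), ∀ τ : ℝ,
      A j (snocVec (0 : EuclideanSpace ℝ (Fin k)) τ) = c j * (τ : ℂ) ^ j :=
    fun j hj τ => homog_eval k j (A j) (hA j hj) τ
  set Q : Polynomial ℂ :=
    ∑ j ∈ Finset.Icc (2 * μ) (2 * m), Polynomial.C (c j) * X ^ (j - 2 * μ) with hQ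
  have hevalQ : ∀ z : ℂ, Q.eval z = ∑ j ∈ Finset.Icc (2 * μ) (2 * m), c j * z ^ (j - 2 * μ) := by
    intro z; simp [hQ, Polynomial.eval_finset_sum]
  have hpencil : ∀ τ : ℝ, pencil m μ A (snocVec (0 : EuclideanSpace ℝ (Fin k)) τ) 1
      = ∑ j ∈ Finset.Icc (2 * μ) (2 * m), c j * (τ : ℂ) ^ j := by
    intro τ
    unfold pencil
    refine Finset.sum_congr rfl fun j hj => ?_
    rw [hval j hj τ]; simp
  have hfac : ∀ τ : ℝ, (τ : ℂ) ^ (2 * μ) * Q.eval (τ : ℂ)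
      = pencil m μ A (snocVec (0 : EuclideanSpace ℝ (Fin k)) τ) 1 := by
    intro τ
    rw [hevalQ, hpencil, Finset.mul_sum]
    refine Finset.sum_congr rfl fun j hj => ?_
    rw [Finset.mem_Icc] at hj
    rw [mul_comm ((τ:ℂ) ^ (2 * μ)), mul_assoc, ← pow_add, Nat.sub_add_cancel hj.1]
  -- the evaluation identity
  have hitem1 : ∀ τ : ℝ, τ ≠ 0 →
      Polynomial.eval (τ : ℂ) Q
        = ((τ : ℂ) ^ (2 * μ))⁻¹ * pencil m μ A (snocVec (0 : EuclideanSpace ℝ (Fin k)) τ) 1 := by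
    intro τ hτ
    rw [← hfac τ, inv_mul_cancel_left₀ (pow_ne_zero _ (by exact_mod_cast hτ))]
  -- lower bound away from zero
  have hbound_ne : ∀ τ : ℝ, τ ≠ 0 →
      C * (1 + |τ|) ^ d ≤ ‖Q.eval (τ : ℂ)‖ := by
    intro τ hτ
    have h := hCle (snocVec (0 : EuclideanSpace ℝ (Fin k)) τ) 1 zero_le_one
    rw [norm_snoc, ← hfac τ, norm_mul, norm_pow, Complex.norm_real, Real.norm_eq_abs] at h
    have hτpos : 0 < |τ| ^ (2 * μ) := pow_pos (abs_pos.mpr hτ) _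
    have h2 : C * (1 + |τ|) ^ d * |τ| ^ (2 * μ)
        ≤ ‖Q.eval (τ : ℂ)‖ * |τ| ^ (2 * μ) := by
      calc C * (1 + |τ|) ^ d * |τ| ^ (2 * μ)
          = C * |τ| ^ (2 * μ) * (1 + |τ|) ^ d := by ring
        _ ≤ |τ| ^ (2 * μ) * ‖Q.eval (τ : ℂ)‖ := h
        _ = ‖Q.eval (τ : ℂ)‖ * |τ| ^ (2 * μ) := by ring
    exact le_of_mul_le_mul_right h2 hτpos
  -- continuity of τ ↦ |Q(τ)|
  have hcont : Continuous fun τ : ℝ => ‖Q.eval (τ : ℂ)‖ :=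
    continuous_norm.comp ((Polynomial.continuous Q).comp Complex.continuous_ofReal)
  have hone_le : ∀ τ : ℝ, (1:ℝ) ≤ (1 + |τ|) ^ d := fun τ =>
    one_le_pow₀ (by linarith [abs_nonneg τ])
  have h0 : C ≤ ‖Q.eval ((0:ℝ) : ℂ)‖ := by
    have htd : Filter.Tendsto (fun τ : ℝ => ‖Q.eval (τ : ℂ)‖)
        (nhdsWithin 0 {(0:ℝ)}ᶜ) (nhds (‖Q.eval ((0:ℝ) : ℂ)‖)) :=
      (hcont.tendsto 0).mono_left nhdsWithin_le_nhds
    refine ge_of_tendsto htd ?_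
    filter_upwards [self_mem_nhdsWithin] with τ hτ
    have hτne : τ ≠ 0 := hτ
    calc C = C * 1 := by ring
      _ ≤ C * (1 + |τ|) ^ d := by
          exact mul_le_mul_of_nonneg_left (hone_le τ) hC.le
      _ ≤ ‖Q.eval (τ : ℂ)‖ := hbound_ne τ hτne
  have hbound : ∀ τ : ℝ, C * (1 + |τ|) ^ d ≤ ‖Q.eval (τ : ℂ)‖ := by
    intro τ
    by_cases hτ : τ = 0
    · subst hτ; simpa using h0
    · exact hbound_ne τ hτ
  -- nonvanishing
  have hpos : ∀ τ : ℝ, 0 < ‖Q.eval (τ : ℂ)‖ := fun τ =>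
    lt_of_lt_of_le (by positivity) (hbound τ)
  have hnroot : ∀ τ : ℝ, Q.eval (τ : ℂ) ≠ 0 := fun τ h => by
    have := hpos τ; rw [h] at this; simp at this
  have h0ne : Q.eval (0:ℂ) ≠ 0 := by
    have := hnroot 0; simpa using this
  -- the leading coefficient
  have h2m_mem : 2 * m ∈ Finset.Icc (2 * μ) (2 * m) := by
    rw [Finset.mem_Icc]; omega
  have hcoeff : Q.coeff d = c (2 * m) := by
    rw [hQ, Polynomial.finset_sum_coeff]
    rw [Finset.sum_eq_single_of_mem (2 * m) h2m_mem]
    · simp [hd]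
    · intro j hj hjne
      rw [Finset.mem_Icc] at hj
      have : j - 2 * μ ≠ d := by omega
      simp only [Polynomial.coeff_C_mul, Polynomial.coeff_X_pow, if_neg (Ne.symm this), mul_zero]
  have hc2m : c (2 * m) ≠ 0 := by
    have h := hCle (snocVec (0 : EuclideanSpace ℝ (Fin k)) 1) 0 le_rfl
    rw [norm_snoc] at h
    simp only [abs_one, one_pow, zero_add, mul_one] at h
    have hpe : pencil m μ A (snocVec (0 : EuclideanSpace ℝ (Fin k)) 1) 0 = c (2 * m) := by
      unfold pencil
      rw [Finset.sum_eq_single_of_mem (2 * m) h2m_mem]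
      · simp [hc]
      · intro j hj hjne
        rw [Finset.mem_Icc] at hj
        rw [Complex.ofReal_zero, zero_pow (by omega : 2 * m - j ≠ 0), zero_mul]
    rw [hpe] at h
    intro hcon
    rw [hcon] at h
    simp at h
    linarith
  have hdegle : Q.degree ≤ (d : WithBot ℕ) := by
    rw [hQ]
    refine le_trans (Polynomial.degree_sum_le _ _) ?_
    refine Finset.sup_le fun j hj => ?_
    rw [Finset.mem_Icc] at hj
    refine le_trans (Polynomial.degree_C_mul_X_pow_le _ _) ?_
    exact_mod_cast Nat.cast_le.mpr (by omega : j - 2 * μ ≤ d)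
  have hdeg : Q.degree = (d : WithBot ℕ) :=
    Polynomial.degree_eq_of_le_of_coeff_ne_zero hdegle (by rw [hcoeff]; exact hc2m)
  refine ⟨Q, hitem1, hdeg, ⟨C, hC, hbound⟩, h0ne, hnroot⟩

end
end

section
/- Let A(ξ,λ) = A_{2m}(ξ) + λ² A_{2m−2}(ξ) + … + λ^{2m−2μ−2} A_{2μ+2}(ξ) + λ^{2m−2μ} A_{2μ}(ξ) contain only even powers of λ (i.e. A_j ≡ 0 for all odd j), and assume A is N-elliptic with parameter in [0,∞). Then Q(τ) := τ^{−2μ} A((0,…,0,τ),1) is a polynomial in τ², and Q has exactly m − μ roots, counted with multiplicity, with positive imaginary part (i.e. A degenerates regularly for λ → ∞). -/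
open MeasureTheory Finset Polynomial

noncomputable section

/- ### Auxiliary lemmas -/

lemma aux_dvd (p : ℂ[X]) (hp : p.comp (-X) = p) (b : ℂ) (n : ℕ)
    (h : (X - C b) ^ n ∣ p) : (X - C (-b)) ^ n ∣ p := by
  obtain ⟨g, hg⟩ := h
  refine ⟨(-1 : ℂ[X]) ^ n * g.comp (-X), ?_⟩
  calc p = ((X - C b) ^ n * g).comp (-X) := by rw [← hg, hp]
    _ = ((X - C b).comp (-X)) ^ n * g.comp (-X) := by rw [mul_comp, pow_comp]
    _ = (-(X - C (-b))) ^ n * g.comp (-X) := by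
          rw [sub_comp, X_comp, C_comp, map_neg]; ring_nf
    _ = (X - C (-b)) ^ n * ((-1 : ℂ[X]) ^ n * g.comp (-X)) := by rw [neg_pow]; ring

lemma rm_neg (p : ℂ[X]) (hp0 : p ≠ 0) (hp : p.comp (-X) = p) (b : ℂ) :
    rootMultiplicity (-b) p = rootMultiplicity b p := by
  have h1 : ∀ c : ℂ, rootMultiplicity c p ≤ rootMultiplicity (-c) p := by
    intro c
    rw [le_rootMultiplicity_iff hp0]
    exact aux_dvd p hp c _ (pow_rootMultiplicity_dvd p c)
  have := h1 (-b)
  rw [neg_neg] at this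
  exact le_antisymm this (h1 b)

lemma roots_neg_eq (p : ℂ[X]) (hp0 : p ≠ 0) (hp : p.comp (-X) = p) :
    p.roots.map (fun z => -z) = p.roots := by
  ext b
  have hinj : Function.Injective (fun z : ℂ => -z) := fun x y h => by simpa using h
  have : b = (fun z : ℂ => -z) (-b) := by simp
  rw [this, Multiset.count_map_eq_count' _ _ hinj, count_roots, count_roots]
  simp only []
  rw [rm_neg p hp0 hp, neg_neg]

lemma snocVec_apply {k : ℕ} (τ : ℝ) (i : Fin (k+1)) :
    snocVec (0 : EuclideanSpace ℝ (Fin k)) τ i = if (i : ℕ) = k then τ else 0 := by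
  induction i using Fin.lastCases with
  | last => simp [snocVec]
  | cast j =>
    simp [snocVec, Fin.snoc_castSucc]
    intro h; exact absurd h (Nat.ne_of_lt j.isLt)

lemma snocVec_norm {k : ℕ} (τ : ℝ) :
    ‖snocVec (0 : EuclideanSpace ℝ (Fin k)) τ‖ = |τ| := by
  rw [EuclideanSpace.norm_eq]
  have : ∀ i : Fin (k+1), ‖snocVec (0 : EuclideanSpace ℝ (Fin k)) τ i‖ ^ 2
      = if (i:ℕ) = k then τ^2 else 0 := by
    intro i; rw [snocVec_apply]; split <;> simp [sq_abs]
  rw [Finset.sum_congr rfl fun i _ => this i, Fin.sum_univ_castSucc]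
  simp only [Fin.coe_castSucc, Fin.val_last]
  rw [Finset.sum_eq_zero fun x _ => if_neg (Nat.ne_of_lt x.isLt), zero_add]
  simp [Real.sqrt_sq_eq_abs]

lemma snocVec_smul {k : ℕ} (τ : ℝ) :
    τ • (snocVec (0 : EuclideanSpace ℝ (Fin k)) 1) = snocVec 0 τ := by
  ext i
  have : (τ • (snocVec (0 : EuclideanSpace ℝ (Fin k)) 1)) i
      = τ * (snocVec (0 : EuclideanSpace ℝ (Fin k)) 1) i := rfl
  rw [this, snocVec_apply, snocVec_apply]
  split <;> simp

lemma homog_line {k j : ℕ} {A : EuclideanSpace ℝ (Fin (k+1)) → ℂ}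
    (h : IsHomogPoly (k+1) j A) (τ : ℝ) :
    A (snocVec (0 : EuclideanSpace ℝ (Fin k)) τ)
      = A (snocVec (0 : EuclideanSpace ℝ (Fin k)) 1) * (τ : ℂ) ^ j := by
  obtain ⟨⟨p, hpoly⟩, hhom⟩ := h
  set c : ℂ := A (snocVec (0 : EuclideanSpace ℝ (Fin k)) 1) with hc
  set q : Polynomial ℂ :=
    MvPolynomial.aeval (fun i : Fin (k+1) =>
      if (i : ℕ) = k then (Polynomial.X : Polynomial ℂ) else 0) p with hq
  have heval : ∀ σ : ℝ, Polynomial.eval (σ : ℂ) q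
      = A (snocVec (0 : EuclideanSpace ℝ (Fin k)) σ) := by
    intro σ
    have h1 : Polynomial.eval (σ : ℂ) q = (Polynomial.aeval (σ : ℂ)) q := by
      rw [Polynomial.coe_aeval_eq_eval]
    rw [h1, hq, MvPolynomial.comp_aeval_apply, hpoly]
    have hg1 : (fun i : Fin (k+1) => Polynomial.aeval (σ : ℂ)
        (if (i : ℕ) = k then (Polynomial.X : Polynomial ℂ) else 0))
        = fun i : Fin (k+1) => if (i : ℕ) = k then (σ : ℂ) else 0 := by
      funext i; split <;> simp
    have hg2 : (fun i : Fin (k+1) => (↑(snocVec (0 : EuclideanSpace ℝ (Fin k)) σ i) : ℂ))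
        = fun i : Fin (k+1) => if (i : ℕ) = k then (σ : ℂ) else 0 := by
      funext i; rw [snocVec_apply]; split <;> simp
    rw [hg1, hg2, ← MvPolynomial.coe_aeval_eq_eval]
    rfl
  have hpos : ∀ σ : ℝ, 0 < σ → Polynomial.eval (σ : ℂ) q
      = Polynomial.eval (σ : ℂ) (Polynomial.C c * Polynomial.X ^ j) := by
    intro σ hσ
    rw [heval, ← snocVec_smul, hhom σ hσ]
    simp only [Polynomial.eval_mul, Polynomial.eval_C, Polynomial.eval_pow, Polynomial.eval_X]
    ring
  have hqeq : q = Polynomial.C c * Polynomial.X ^ j := by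
    apply Polynomial.eq_of_infinite_eval_eq
    apply Set.Infinite.mono (s := (fun σ : ℝ => (σ : ℂ)) '' Set.Ioi 0)
    · rintro x ⟨σ, hσ, rfl⟩
      exact hpos σ hσ
    · exact Set.Infinite.image (fun a _ b _ h => Complex.ofReal_injective h)
        (Set.Ioi_infinite 0)
  rw [← heval, hqeq]
  simp

/-- if the pencil contains only even powers of `λ` (i.e. `A_j ≡ 0` for odd `j`)
and is `N`-elliptic with parameter in `[0,∞)`, then `Q(τ) = τ^{-2μ}A((0,…,0,τ),1)` is a
polynomial in `τ²` and has exactly `m − μ` roots (with multiplicity) with positive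
imaginary part, i.e. `A` degenerates regularly for `λ → ∞`. -/
theorem statement2 (k m μ : ℕ) (hμm : μ < m)
    (A : ℕ → EuclideanSpace ℝ (Fin (k + 1)) → ℂ)
    (hA : ∀ j ∈ Finset.Icc (2 * μ) (2 * m), IsHomogPoly (k + 1) j (A j))
    (hodd : ∀ j : ℕ, Odd j → ∀ ξ, A j ξ = 0)
    (hell : NElliptic m μ A) :
    ∃ Q : Polynomial ℂ,
      (∀ τ : ℝ, τ ≠ 0 →
        Polynomial.eval (τ : ℂ) Q
          = ((τ : ℂ) ^ (2 * μ))⁻¹ * pencil m μ A (snocVec (0 : EuclideanSpace ℝ (Fin k)) τ) 1) ∧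
      (∃ R : Polynomial ℂ, Q = R.comp (Polynomial.X ^ 2)) ∧
      Multiset.card (Q.roots.filter fun z => 0 < z.im) = m - μ := by
  obtain ⟨C, hC, hE⟩ := hell
  set c : ℕ → ℂ := fun j => A j (snocVec (0 : EuclideanSpace ℝ (Fin k)) 1) with hcdef
  have hAval : ∀ j ∈ Finset.Icc (2*μ) (2*m), ∀ τ : ℝ,
      A j (snocVec (0 : EuclideanSpace ℝ (Fin k)) τ) = c j * (τ : ℂ) ^ j :=
    fun j hj τ => homog_line (hA j hj) τ
  have hpen : ∀ τ : ℝ, pencil m μ A (snocVec (0 : EuclideanSpace ℝ (Fin k)) τ) 1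
      = ∑ j ∈ Finset.Icc (2*μ) (2*m), c j * (τ : ℂ) ^ j := by
    intro τ
    unfold pencil
    refine Finset.sum_congr rfl fun j hj => ?_
    rw [hAval j hj τ]
    simp
  set R : Polynomial ℂ :=
    ∑ l ∈ Finset.Icc μ m, Polynomial.C (c (2*l)) * Polynomial.X ^ (l - μ) with hRdef
  set Q : Polynomial ℂ := R.comp (Polynomial.X ^ 2) with hQdef
  have hQeval : ∀ z : ℂ, Polynomial.eval z Q
      = ∑ l ∈ Finset.Icc μ m, c (2*l) * z ^ (2*(l - μ)) := by
    intro z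
    rw [hQdef, Polynomial.eval_comp, hRdef, Polynomial.eval_finset_sum]
    exact Finset.sum_congr rfl fun l _ => by
      simp [pow_mul]
  have hkey : ∀ τ : ℝ, pencil m μ A (snocVec (0 : EuclideanSpace ℝ (Fin k)) τ) 1
      = (τ : ℂ) ^ (2*μ) * Polynomial.eval (τ : ℂ) Q := by
    intro τ
    rw [hpen, hQeval, Finset.mul_sum]
    have hR : ∑ l ∈ Finset.Icc μ m, (τ:ℂ)^(2*μ) * (c (2*l) * (τ:ℂ)^(2*(l - μ)))
        = ∑ l ∈ Finset.Icc μ m, c (2*l) * (τ:ℂ)^(2*l) := by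
      refine Finset.sum_congr rfl fun l hl => ?_
      have hμl : μ ≤ l := (Finset.mem_Icc.1 hl).1
      have he : 2*μ + 2*(l - μ) = 2*l := by omega
      rw [← he, pow_add]; ring
    rw [hR]
    have hsub : Finset.image (fun l => 2*l) (Finset.Icc μ m) ⊆ Finset.Icc (2*μ) (2*m) := by
      intro j hj
      obtain ⟨l, hl, rfl⟩ := Finset.mem_image.1 hj
      rw [Finset.mem_Icc] at hl ⊢
      omega
    have hzero : ∀ j ∈ Finset.Icc (2*μ) (2*m),
        j ∉ Finset.image (fun l => 2*l) (Finset.Icc μ m) → c j * (τ:ℂ)^j = 0 := by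
      intro j hj hnot
      rcases Nat.even_or_odd j with he | ho
      · exfalso
        obtain ⟨l, rfl⟩ := he
        apply hnot
        rw [Finset.mem_Icc] at hj
        exact Finset.mem_image.2 ⟨l, Finset.mem_Icc.2 (by omega), by omega⟩
      · rw [hcdef]
        simp [hodd _ ho]
    rw [← Finset.sum_subset hsub hzero, Finset.sum_image (fun a _ b _ h => by omega)]
  -- the leading coefficient is nonzero
  have hc2m : c (2*m) ≠ 0 := by
    have h1 := hE (snocVec (0 : EuclideanSpace ℝ (Fin k)) 1) 0 le_rfl
    have hp0 : pencil m μ A (snocVec (0 : EuclideanSpace ℝ (Fin k)) 1) 0 = c (2*m) := by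
      unfold pencil
      rw [Finset.sum_eq_single_of_mem (2*m) (Finset.mem_Icc.2 ⟨by omega, le_rfl⟩)]
      · simp; rfl
      · intro j hj hne
        rw [Finset.mem_Icc] at hj
        rw [Complex.ofReal_zero, zero_pow (by omega : 2*m - j ≠ 0), zero_mul]
    rw [hp0, snocVec_norm] at h1
    simp only [abs_one, one_pow, zero_add, mul_one] at h1
    intro h
    rw [h] at h1
    simp at h1
    linarith
  -- degree computations
  have hRcoeff : R.coeff (m - μ) = c (2*m) := by
    rw [hRdef, Polynomial.finset_sum_coeff]
    rw [Finset.sum_eq_single_of_mem m (Finset.mem_Icc.2 ⟨hμm.le, le_rfl⟩)]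
    · simp
    · intro l hl hne
      rw [Finset.mem_Icc] at hl
      rw [Polynomial.coeff_C_mul, Polynomial.coeff_X_pow, if_neg (by omega), mul_zero]
  have hRdegle : R.natDegree ≤ m - μ := by
    rw [hRdef]
    refine Polynomial.natDegree_sum_le_of_forall_le _ _ fun l hl => ?_
    rw [Finset.mem_Icc] at hl
    exact (Polynomial.natDegree_C_mul_le _ _).trans
      (by rw [Polynomial.natDegree_X_pow]; omega)
  have hRdeg : R.natDegree = m - μ :=
    le_antisymm hRdegle (Polynomial.le_natDegree_of_ne_zero (hRcoeff ▸ hc2m))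
  have hQdeg : Q.natDegree = 2*(m - μ) := by
    rw [hQdef, Polynomial.natDegree_comp, hRdeg, Polynomial.natDegree_X_pow]
    ring
  have hQ0 : Q ≠ 0 := by
    intro h
    rw [h, Polynomial.natDegree_zero] at hQdeg
    omega
  -- lower bound on |Q| on the real axis
  have hQbound : ∀ τ : ℝ, τ ≠ 0 →
      C * (1 + |τ|) ^ (2*m - 2*μ) ≤ ‖Polynomial.eval (τ : ℂ) Q‖ := by
    intro τ hτ
    have h1 := hE (snocVec (0 : EuclideanSpace ℝ (Fin k)) τ) 1 zero_le_one
    rw [snocVec_norm, hkey, norm_mul, norm_pow, Complex.norm_real, Real.norm_eq_abs] at h1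
    have hτpow : (0:ℝ) < |τ| ^ (2*μ) := pow_pos (abs_pos.2 hτ) _
    have h2 : |τ| ^ (2*μ) * (C * (1 + |τ|) ^ (2*m - 2*μ))
        ≤ |τ| ^ (2*μ) * ‖Polynomial.eval (τ : ℂ) Q‖ := by
      calc |τ| ^ (2*μ) * (C * (1 + |τ|) ^ (2*m - 2*μ))
          = C * |τ| ^ (2*μ) * (1 + |τ|) ^ (2*m - 2*μ) := by ring
        _ ≤ _ := h1
    exact le_of_mul_le_mul_left h2 hτpow
  -- Q has no real roots
  have hno : ∀ τ : ℝ, Polynomial.eval (τ : ℂ) Q ≠ 0 := by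
    intro τ
    rcases eq_or_ne τ 0 with rfl | hτ
    · have hcont : Continuous fun σ : ℝ => ‖Polynomial.eval (σ : ℂ) Q‖ :=
        continuous_norm.comp (Q.continuous.comp Complex.continuous_ofReal)
      have hten : Filter.Tendsto (fun σ : ℝ => ‖Polynomial.eval (σ : ℂ) Q‖)
          (nhdsWithin 0 {(0:ℝ)}ᶜ) (nhds ‖Polynomial.eval ((0:ℝ) : ℂ) Q‖) :=
        (hcont.tendsto 0).mono_left nhdsWithin_le_nhds
      have hev : ∀ᶠ σ : ℝ in nhdsWithin (0:ℝ) {(0:ℝ)}ᶜ,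
          C ≤ ‖Polynomial.eval (σ : ℂ) Q‖ := by
        refine Filter.eventually_of_mem self_mem_nhdsWithin fun σ hσ => ?_
        have hσ0 : σ ≠ 0 := hσ
        have hone : (1:ℝ) ≤ (1 + |σ|) ^ (2*m - 2*μ) := by
          calc (1:ℝ) = 1 ^ (2*m - 2*μ) := (one_pow _).symm
            _ ≤ (1 + |σ|) ^ (2*m - 2*μ) :=
              pow_le_pow_left₀ one_pos.le (by linarith [abs_nonneg σ]) _
        calc C = C * 1 := by ring
          _ ≤ C * (1 + |σ|) ^ (2*m - 2*μ) := by nlinarith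
          _ ≤ _ := hQbound σ hσ0
      have hge := ge_of_tendsto hten hev
      intro h
      rw [h] at hge
      simp at hge
      linarith
    · intro h
      have := hQbound τ hτ
      rw [h] at this
      simp at this
      nlinarith [pow_pos (by linarith [abs_nonneg τ] : (0:ℝ) < 1 + |τ|) (2*m - 2*μ)]
  have him : ∀ z ∈ Q.roots, z.im ≠ 0 := by
    intro z hz h0
    have hroot : Polynomial.eval z Q = 0 := Polynomial.isRoot_of_mem_roots hz
    have hzre : ((z.re : ℝ) : ℂ) = z := Complex.ext (by simp) (by simp [h0])
    exact hno z.re (by rw [hzre]; exact hroot)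
  have heven : Q.comp (-Polynomial.X) = Q := by
    rw [hQdef, Polynomial.comp_assoc, Polynomial.pow_comp, Polynomial.X_comp, neg_sq]
  have hcard : Multiset.card Q.roots = 2*(m - μ) := by
    have hs := Polynomial.Splits.natDegree_eq_card_roots
      (IsAlgClosed.splits Q)
    rw [← hs, hQdeg]
  -- pair up the roots via z ↦ -z
  have hmapneg : Q.roots.map (fun z => -z) = Q.roots := roots_neg_eq Q hQ0 heven
  have hneg_filter : Q.roots.filter (fun z => ¬ 0 < z.im)
      = Q.roots.filter (fun z => z.im < 0) := by
    refine Multiset.filter_congr fun z hz => ?_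
    have := him z hz
    constructor
    · intro h; exact lt_of_le_of_ne (not_lt.1 h) this
    · intro h; exact not_lt.2 h.le
  have hmapfilter : (Q.roots.filter fun z => z.im < 0).map (fun z => -z)
      = Q.roots.filter fun z => 0 < z.im := by
    conv_rhs => rw [← hmapneg]
    rw [Multiset.filter_map]
    congr 1
    refine Multiset.filter_congr fun z hz => ?_
    simp only [Function.comp_apply, Complex.neg_im]
    constructor
    · intro h; linarith
    · intro h; linarith
  have hcards : Multiset.card (Q.roots.filter fun z => z.im < 0)
      = Multiset.card (Q.roots.filter fun z => 0 < z.im) := by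
    rw [← hmapfilter, Multiset.card_map]
  have hsplit2 := congrArg Multiset.card (Multiset.filter_add_not (fun z => 0 < z.im) Q.roots)
  rw [Multiset.card_add, hneg_filter, hcard, hcards] at hsplit2
  refine ⟨Q, ?_, ⟨R, hQdef⟩, by omega⟩
  intro τ hτ
  have hτc : ((τ : ℂ)) ^ (2*μ) ≠ 0 :=
    pow_ne_zero _ (by exact_mod_cast Complex.ofReal_ne_zero.2 hτ)
  rw [hkey τ, inv_mul_cancel_left₀ hτc]

end
end

section
/- Let A(ξ,λ) = Σ_{j=2μ}^{2m} λ^{2m−j} A_j(ξ), where for all ξ ∈ ℝⁿ the values A_j(ξ) are real for even j and purely imaginary for odd j (the situation of a differential operator with real coefficients). Assume the strong ellipticity estimate Re A(ξ,λ) ≥ C |ξ|^{2μ} (λ + |ξ|)^{2m−2μ} holds for all ξ ∈ ℝⁿ and λ ∈ [0,∞) with some C > 0. Then the polynomial Q(τ) := τ^{−2μ} A((0,…,0,τ),1) has exactly m − μ roots, counted with multiplicity, with positive imaginary part (i.e. A degenerates regularly for λ → ∞). -/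
open MeasureTheory Finset Polynomial

noncomputable section

section StatementThreeAux

open Complex Filter Topology Real

lemma aux3_inv_atBot : Tendsto (fun r : ℝ => r⁻¹) atBot (𝓝 0) := by
  have h := (tendsto_inv_atTop_zero (𝕜 := ℝ)).comp tendsto_neg_atBot_atTop
  have h2 : Tendsto (fun r : ℝ => -(-r)⁻¹) atBot (𝓝 (-0)) := h.neg
  simpa [inv_neg] using h2

lemma aux3_arg_continuous (z : ℂ) (hz : z.im ≠ 0) :
    Continuous fun τ : ℝ => Complex.arg (↑τ - z) := by
  rw [continuous_iff_continuousAt]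
  intro τ
  have hmem : ((τ:ℂ) - z) ∈ Complex.slitPlane :=
    Complex.mem_slitPlane_iff.mpr (Or.inr (by simp [hz]))
  have hf : ContinuousAt (fun τ : ℝ => (τ:ℂ) - z) τ :=
    (Complex.continuous_ofReal.sub continuous_const).continuousAt
  exact ContinuousAt.comp (x := τ) (f := fun τ : ℝ => (τ:ℂ) - z)
    (Complex.continuousAt_arg hmem) hf

lemma aux3_arg_atTop (z : ℂ) : Tendsto (fun τ : ℝ => Complex.arg (↑τ - z)) atTop (𝓝 0) := by
  have hinv : Tendsto (fun τ : ℝ => ((τ:ℂ))⁻¹) atTop (𝓝 0) := by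
    have h := (Complex.continuous_ofReal.tendsto 0).comp (tendsto_inv_atTop_zero (𝕜 := ℝ))
    simpa [Function.comp_def] using h
  have h1 : Tendsto (fun τ : ℝ => (1 : ℂ) - z * (↑τ)⁻¹) atTop (𝓝 1) := by
    have := (tendsto_const_nhds (x := (1:ℂ)) (f := atTop)).sub (hinv.const_mul z)
    simpa using this
  have h2 : Tendsto (fun τ : ℝ => Complex.arg (1 - z * (↑τ)⁻¹)) atTop (𝓝 0) := by
    have hc := (Complex.continuousAt_arg (Complex.one_mem_slitPlane)).tendsto
    rw [Complex.arg_one] at hc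
    exact hc.comp h1
  refine h2.congr' ?_
  filter_upwards [eventually_gt_atTop 0] with τ hτ
  have hτ' : (τ:ℂ) ≠ 0 := Complex.ofReal_ne_zero.mpr hτ.ne'
  have h3 : ((τ:ℂ) - z) = ↑τ * (1 - z * (↑τ)⁻¹) := by field_simp
  rw [h3, Complex.arg_real_mul _ hτ]

lemma aux3_abs_atBot (z : ℂ) : Tendsto (fun τ : ℝ => ‖(↑τ - z)‖) atBot atTop := by
  have h1 : Tendsto (fun τ : ℝ => |τ - z.re|) atBot atTop :=
    tendsto_abs_atBot_atTop.comp (tendsto_atBot_add_const_right atBot (-z.re) tendsto_id)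
  refine tendsto_atTop_mono (fun τ => ?_) h1
  have := Complex.abs_re_le_norm ((τ:ℂ) - z)
  simpa [Complex.sub_re] using this

lemma aux3_arg_atBot_pos (z : ℂ) (hz : 0 < z.im) :
    Tendsto (fun τ : ℝ => Complex.arg (↑τ - z)) atBot (𝓝 (-π)) := by
  have h0 : Tendsto (fun τ : ℝ => z.im * ‖((τ:ℂ) - z)‖⁻¹) atBot (𝓝 0) := by
    have := (tendsto_inv_atTop_zero.comp (aux3_abs_atBot z)).const_mul z.im
    simpa [Function.comp_def] using this
  have harct : Tendsto (fun τ : ℝ => Real.arcsin (z.im * ‖((τ:ℂ) - z)‖⁻¹) - π)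
      atBot (𝓝 (-π)) := by
    have h1 := (Real.continuous_arcsin.tendsto 0).comp h0
    have h2 := h1.sub (tendsto_const_nhds (x := π))
    simpa [Function.comp_def] using h2
  refine harct.congr' ?_
  filter_upwards [eventually_lt_atBot z.re] with τ hτ
  have hre : ((τ:ℂ) - z).re < 0 := by simp [Complex.sub_re, sub_neg, hτ]
  have him : ((τ:ℂ) - z).im < 0 := by simp [Complex.sub_im, hz]
  rw [Complex.arg_of_re_neg_of_im_neg hre him]
  have h1 : (-((τ:ℂ) - z)).im = z.im := by simp
  rw [h1, div_eq_mul_inv]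

lemma aux3_arg_atBot_neg (z : ℂ) (hz : z.im < 0) :
    Tendsto (fun τ : ℝ => Complex.arg (↑τ - z)) atBot (𝓝 π) := by
  have h0 : Tendsto (fun τ : ℝ => z.im * ‖((τ:ℂ) - z)‖⁻¹) atBot (𝓝 0) := by
    have := (tendsto_inv_atTop_zero.comp (aux3_abs_atBot z)).const_mul z.im
    simpa [Function.comp_def] using this
  have harct : Tendsto (fun τ : ℝ => Real.arcsin (z.im * ‖((τ:ℂ) - z)‖⁻¹) + π)
      atBot (𝓝 π) := by
    have h1 := (Real.continuous_arcsin.tendsto 0).comp h0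
    have h2 := h1.add (tendsto_const_nhds (x := π))
    simpa [Function.comp_def] using h2
  refine harct.congr' ?_
  filter_upwards [eventually_lt_atBot z.re] with τ hτ
  have hre : ((τ:ℂ) - z).re < 0 := by simp [Complex.sub_re, sub_neg, hτ]
  have him : (0:ℝ) ≤ ((τ:ℂ) - z).im := by simp [Complex.sub_im]; linarith
  rw [Complex.arg_of_re_neg_of_im_nonneg hre him]
  have h1 : (-((τ:ℂ) - z)).im = z.im := by simp
  rw [h1, div_eq_mul_inv]

lemma aux3_multiset_tendsto_sum {α : Type*} (S : Multiset α) (g : ℝ → α → ℝ) (L : α → ℝ)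
    (l : Filter ℝ) :
    (∀ z ∈ S, Tendsto (fun τ => g τ z) l (𝓝 (L z))) →
      Tendsto (fun τ => ((S.map (g τ)).sum)) l (𝓝 ((S.map L).sum)) := by
  refine Multiset.induction_on S (fun _ => by simpa using tendsto_const_nhds) ?_
  intro a s ih h
  simp only [Multiset.map_cons, Multiset.sum_cons]
  exact (h a (Multiset.mem_cons_self a s)).add (ih fun z hz => h z (Multiset.mem_cons_of_mem hz))

lemma aux3_multiset_continuous_sum {α : Type*} (S : Multiset α) (g : ℝ → α → ℝ) :
    (∀ z ∈ S, Continuous fun τ => g τ z) → Continuous fun τ => ((S.map (g τ)).sum) := by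
  refine Multiset.induction_on S (fun _ => by simpa using continuous_const) ?_
  intro a s ih h
  simp only [Multiset.map_cons, Multiset.sum_cons]
  exact (h a (Multiset.mem_cons_self a s)).add (ih fun z hz => h z (Multiset.mem_cons_of_mem hz))

lemma aux3_const_of_two_pi_int (g : ℝ → ℝ) (hc : Continuous g)
    (h : ∀ τ, ∃ n : ℤ, g τ = n * (2 * π)) (a b : ℝ) : g a = g b := by
  have hπ : (0:ℝ) < π := Real.pi_pos
  have claim : ∀ a b : ℝ, g a < g b → False := by
    intro a b hab
    obtain ⟨na, hna⟩ := h a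
    obtain ⟨nb, hnb⟩ := h b
    have hnanb : na < nb := by
      by_contra hle
      push_neg at hle
      have : (nb:ℝ) ≤ na := by exact_mod_cast hle
      nlinarith
    have hv1 : g a ≤ (na:ℝ) * (2*π) + π := by rw [hna]; linarith
    have hv2 : (na:ℝ) * (2*π) + π ≤ g b := by
      rw [hnb]
      have : (na:ℝ) + 1 ≤ nb := by exact_mod_cast hnanb
      nlinarith
    have hmem : (na:ℝ) * (2*π) + π ∈ Set.uIcc (g a) (g b) :=
      Set.mem_uIcc.mpr (Or.inl ⟨hv1, hv2⟩)
    obtain ⟨c, _, hc'⟩ := intermediate_value_uIcc (hc.continuousOn) hmem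
    obtain ⟨n, hn⟩ := h c
    rw [hn] at hc'
    have hz : ((2*n - 2*na - 1 : ℤ) : ℝ) * π = 0 := by push_cast; ring_nf; linarith
    have : (2*n - 2*na - 1 : ℤ) = 0 := by
      rcases mul_eq_zero.mp hz with h' | h'
      · exact_mod_cast h'
      · exact absurd h' hπ.ne'
    omega
  rcases lt_trichotomy (g a) (g b) with h' | h' | h'
  · exact absurd (claim a b h') not_false
  · exact h'
  · exact absurd (claim b a h') not_false

lemma aux3_exp_arg (w : ℂ) (hw : w ≠ 0) :
    Complex.exp (↑(Complex.arg w) * Complex.I) = w / ((‖w‖ : ℝ) : ℂ) := by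
  have h := Complex.norm_mul_exp_arg_mul_I w
  have habs : ((‖w‖ : ℝ) : ℂ) ≠ 0 :=
    Complex.ofReal_ne_zero.mpr (norm_ne_zero_iff.mpr hw)
  field_simp
  rw [mul_comm] at h
  exact h

lemma aux3_abs_prod (S : Multiset ℂ) : (S.map (fun w : ℂ => ‖w‖)).prod = ‖S.prod‖ := by
  refine Multiset.induction_on S (by simp) ?_
  intro a s ih
  simp [ih]

lemma aux3_exp_sum_args (S : Multiset ℂ) :
    (∀ w ∈ S, w ≠ 0) → Complex.exp (↑((S.map Complex.arg).sum) * Complex.I)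
      = S.prod / (((S.map (fun w : ℂ => ‖w‖)).prod : ℝ) : ℂ) := by
  refine Multiset.induction_on S (by simp) ?_
  intro a s ih h
  have ha : a ≠ 0 := h a (Multiset.mem_cons_self a s)
  simp only [Multiset.map_cons, Multiset.sum_cons, Multiset.prod_cons]
  have hsplit : ((Complex.arg a + ((s.map Complex.arg).sum) : ℝ) : ℂ) * Complex.I
      = ↑(Complex.arg a) * Complex.I + ↑((s.map Complex.arg).sum) * Complex.I := by
    push_cast; ring
  rw [hsplit, Complex.exp_add, aux3_exp_arg a ha,
    ih (fun w hw => h w (Multiset.mem_cons_of_mem hw)), Complex.ofReal_mul, div_mul_div_comm]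

end StatementThreeAux

/-- for a strongly elliptic pencil coming from an operator with real
coefficients (`A_j` real for even `j`, purely imaginary for odd `j`), the polynomial
`Q(τ) = τ^{-2μ}A((0,…,0,τ),1)` has exactly `m − μ` roots (with multiplicity) with
positive imaginary part, i.e. `A` degenerates regularly for `λ → ∞`. -/
theorem statement3 (k m μ : ℕ) (hμm : μ < m)
    (A : ℕ → EuclideanSpace ℝ (Fin (k + 1)) → ℂ)
    (hA : ∀ j ∈ Finset.Icc (2 * μ) (2 * m), IsHomogPoly (k + 1) j (A j))
    (hreal : ∀ j : ℕ, Even j → ∀ ξ, (A j ξ).im = 0)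
    (himag : ∀ j : ℕ, Odd j → ∀ ξ, (A j ξ).re = 0)
    (hstrong : ∃ C > (0 : ℝ), ∀ (ξ : EuclideanSpace ℝ (Fin (k + 1))) (lam : ℝ), 0 ≤ lam →
      C * ‖ξ‖ ^ (2 * μ) * (lam + ‖ξ‖) ^ (2 * m - 2 * μ) ≤ (pencil m μ A ξ lam).re) :
    ∃ Q : Polynomial ℂ,
      (∀ τ : ℝ, τ ≠ 0 →
        Polynomial.eval (τ : ℂ) Q
          = ((τ : ℂ) ^ (2 * μ))⁻¹ * pencil m μ A (snocVec (0 : EuclideanSpace ℝ (Fin k)) τ) 1) ∧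
      Multiset.card (Q.roots.filter fun z => 0 < z.im) = m - μ := by
  classical
  obtain ⟨c0, hc0, hstr⟩ := hstrong
  set e : EuclideanSpace ℝ (Fin (k + 1)) := snocVec (0 : EuclideanSpace ℝ (Fin k)) 1 with he
  -- pointwise descriptions of snocVec
  have hsmul : ∀ τ : ℝ, snocVec (0 : EuclideanSpace ℝ (Fin k)) τ = τ • e := by
    intro τ
    ext i
    show Fin.snoc (α := fun _ => ℝ) (fun j => (0 : EuclideanSpace ℝ (Fin k)) j) τ i
      = τ * Fin.snoc (α := fun _ => ℝ) (fun j => (0 : EuclideanSpace ℝ (Fin k)) j) 1 i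
    refine Fin.lastCases ?_ (fun i => ?_) i
    · simp
    · simp
  have hnorm : ∀ τ : ℝ, ‖snocVec (0 : EuclideanSpace ℝ (Fin k)) τ‖ = |τ| := by
    intro τ
    rw [EuclideanSpace.norm_eq]
    have h : ∑ i, ‖(snocVec (0 : EuclideanSpace ℝ (Fin k)) τ) i‖ ^ 2 = τ ^ 2 := by
      rw [Fin.sum_univ_castSucc]
      have h1 : ∀ i : Fin k, (snocVec (0 : EuclideanSpace ℝ (Fin k)) τ) i.castSucc = 0 := by
        intro i
        show Fin.snoc (α := fun _ => ℝ) (fun j => (0 : EuclideanSpace ℝ (Fin k)) j) τ i.castSucc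
          = 0
        simp
      have h2 : (snocVec (0 : EuclideanSpace ℝ (Fin k)) τ) (Fin.last k) = τ := by
        show Fin.snoc (α := fun _ => ℝ) (fun j => (0 : EuclideanSpace ℝ (Fin k)) j) τ (Fin.last k)
          = τ
        simp
      simp [h1, h2, sq_abs]
    rw [h, Real.sqrt_sq_eq_abs]
  have hnorme : ‖e‖ = 1 := by rw [he, hnorm 1]; norm_num
  -- homogeneity for all real scalars, via polynomiality
  have key : ∀ j ∈ Finset.Icc (2 * μ) (2 * m), ∀ τ : ℝ,
      A j (snocVec (0 : EuclideanSpace ℝ (Fin k)) τ) = (τ : ℂ) ^ j * A j e := by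
    intro j hj
    obtain ⟨⟨p, hp⟩, hhom⟩ := hA j hj
    set r : Polynomial ℂ :=
      MvPolynomial.eval₂ Polynomial.C (fun i => Polynomial.C ((e i : ℝ) : ℂ) * Polynomial.X) p
      with hr
    have hreval : ∀ t : ℝ, r.eval (t : ℂ) = A j (t • e) := by
      intro t
      rw [hp]
      have h1 : Polynomial.eval (t : ℂ) r
          = MvPolynomial.eval₂ ((Polynomial.evalRingHom (t : ℂ)).comp Polynomial.C)
              (fun i => Polynomial.eval (t : ℂ) (Polynomial.C ((e i : ℝ) : ℂ) * Polynomial.X))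
              p := by
        rw [hr]
        exact MvPolynomial.eval₂_comp_left (Polynomial.evalRingHom (t : ℂ)) _ _ _
      rw [h1]
      have h2 : (Polynomial.evalRingHom (t : ℂ)).comp Polynomial.C = RingHom.id ℂ := by
        ext x; simp
      rw [h2]
      have h3 : (fun i => Polynomial.eval (t : ℂ) (Polynomial.C ((e i : ℝ) : ℂ) * Polynomial.X))
          = fun i => (((t • e : EuclideanSpace ℝ (Fin (k + 1))) i : ℝ) : ℂ) := by
        funext i
        show _ = (((t * e i : ℝ)) : ℂ)
        simp only [Polynomial.eval_mul, Polynomial.eval_C, Polynomial.eval_X]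
        push_cast
        ring
      rw [h3]
      rfl
    have hco : r = Polynomial.C (A j e) * Polynomial.X ^ j := by
      apply Polynomial.eq_of_infinite_eval_eq
      apply Set.Infinite.mono (s := (fun t : ℝ => (t : ℂ)) '' Set.Ioi 0)
      · rintro _ ⟨t, ht, rfl⟩
        simp only [Set.mem_setOf_eq, Polynomial.eval_mul, Polynomial.eval_C, Polynomial.eval_pow,
          Polynomial.eval_X]
        rw [hreval t, hhom t ht]
        ring
      · exact (Set.Ioi_infinite 0).image (fun a _ b _ h => by exact_mod_cast h)
    intro τ
    rw [hsmul τ, ← hreval τ, hco]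
    simp only [Polynomial.eval_mul, Polynomial.eval_C, Polynomial.eval_pow, Polynomial.eval_X]
    ring
  -- the polynomial Q
  set Q : Polynomial ℂ :=
    ∑ j ∈ Finset.Icc (2 * μ) (2 * m), Polynomial.C (A j e) * Polynomial.X ^ (j - 2 * μ)
    with hQdef
  have hQeval : ∀ τ : ℝ,
      (τ : ℂ) ^ (2 * μ) * Q.eval (τ : ℂ)
        = pencil m μ A (snocVec (0 : EuclideanSpace ℝ (Fin k)) τ) 1 := by
    intro τ
    rw [hQdef, Polynomial.eval_finset_sum, Finset.mul_sum]
    unfold pencil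
    refine Finset.sum_congr rfl (fun j hj => ?_)
    obtain ⟨hj1, hj2⟩ := Finset.mem_Icc.mp hj
    rw [key j hj τ]
    simp only [Polynomial.eval_mul, Polynomial.eval_C, Polynomial.eval_pow, Polynomial.eval_X,
      one_pow, one_mul]
    rw [show (τ : ℂ) ^ (2 * μ) * (A j e * (τ : ℂ) ^ (j - 2 * μ))
        = (τ : ℂ) ^ (2 * μ + (j - 2 * μ)) * A j e by rw [pow_add]; ring,
      Nat.add_sub_cancel' hj1]
    norm_num
  refine ⟨Q, fun τ hτ => ?_, ?_⟩
  · rw [← hQeval τ]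
    have hτ' : ((τ : ℂ)) ^ (2 * μ) ≠ 0 := pow_ne_zero _ (Complex.ofReal_ne_zero.mpr hτ)
    rw [inv_mul_cancel_left₀ hτ']
  -- positivity of Re Q on the real axis
  have hevenE : Even (2 * μ) := even_two_mul μ
  have hpos' : ∀ τ : ℝ, τ ≠ 0 → c0 ≤ (Q.eval (τ:ℂ)).re := by
    intro τ hτ
    have habs : 0 < |τ| := abs_pos.mpr hτ
    have h1 := hstr (snocVec (0 : EuclideanSpace ℝ (Fin k)) τ) 1 (by norm_num)
    rw [hnorm τ, ← hQeval τ] at h1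
    have h2 : ((τ:ℂ) ^ (2*μ) * Q.eval (τ:ℂ)).re = |τ|^(2*μ) * (Q.eval (τ:ℂ)).re := by
      rw [show ((τ:ℂ)) ^ (2*μ) = ((τ^(2*μ) : ℝ) : ℂ) by push_cast; ring,
        Complex.re_ofReal_mul, ← Even.pow_abs hevenE]
    rw [h2] at h1
    have hXpos : (0:ℝ) < |τ|^(2*μ) := pow_pos habs _
    have h3 : c0 * (1 + |τ|)^(2*m - 2*μ) ≤ (Q.eval (τ:ℂ)).re := by
      have h1' : |τ|^(2*μ) * (c0 * (1 + |τ|)^(2*m - 2*μ))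
          ≤ |τ|^(2*μ) * (Q.eval (τ:ℂ)).re := by
        calc |τ|^(2*μ) * (c0 * (1 + |τ|)^(2*m - 2*μ))
            = c0 * |τ|^(2*μ) * (1 + |τ|)^(2*m - 2*μ) := by ring
          _ ≤ _ := h1
      exact (mul_le_mul_iff_right₀ hXpos).mp h1'
    have h4 : (1:ℝ) ≤ (1 + |τ|)^(2*m - 2*μ) := one_le_pow₀ (by linarith [abs_nonneg τ])
    nlinarith
  have hpos : ∀ τ : ℝ, c0 ≤ (Q.eval (τ:ℂ)).re := by
    have hcont : Continuous fun τ : ℝ => (Q.eval (τ:ℂ)).re :=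
      Complex.continuous_re.comp (Q.continuous.comp Complex.continuous_ofReal)
    intro τ
    by_cases hτ : τ = 0
    · subst hτ
      have htd : Filter.Tendsto (fun τ:ℝ => (Q.eval (τ:ℂ)).re)
          (nhdsWithin (0:ℝ) {(0:ℝ)}ᶜ) (nhds ((Q.eval (((0:ℝ)):ℂ)).re)) :=
        (hcont.tendsto 0).mono_left nhdsWithin_le_nhds
      refine ge_of_tendsto htd ?_
      exact Filter.eventually_of_mem self_mem_nhdsWithin
        (fun τ hτ => hpos' τ (Set.mem_compl_singleton_iff.mp hτ))
    · exact hpos' τ hτ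
  -- the leading coefficient
  have ha2m_pencil : pencil m μ A e 0 = A (2*m) e := by
    unfold pencil
    rw [Finset.sum_eq_single_of_mem (2*m) (Finset.mem_Icc.mpr ⟨by omega, le_refl _⟩)]
    · rw [Nat.sub_self, pow_zero, one_mul]
    · intro j hj hne
      have hb := Finset.mem_Icc.mp hj
      rw [show ((0:ℝ):ℂ) = 0 by norm_num, zero_pow (by omega : 2*m - j ≠ 0), zero_mul]
  have ha2m_re : c0 ≤ (A (2*m) e).re := by
    have h1 := hstr e 0 le_rfl
    rw [hnorme, ha2m_pencil] at h1
    simpa using h1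
  have ha2m_im : (A (2*m) e).im = 0 := hreal (2*m) (even_two_mul m) e
  have ha2m_ne : A (2*m) e ≠ 0 := by
    intro h
    rw [h] at ha2m_re
    simp at ha2m_re
    linarith
  set c1 : ℝ := (A (2*m) e).re with hc1def
  have hc1pos : (0:ℝ) < c1 := lt_of_lt_of_le hc0 ha2m_re
  have ha2m_eq : A (2*m) e = (c1 : ℂ) := Complex.ext (by simp [hc1def]) (by simp [ha2m_im])
  -- degree of Q
  have hcoeffE : Q.coeff (2*m - 2*μ) = A (2*m) e := by
    rw [hQdef, Polynomial.finset_sum_coeff]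
    rw [Finset.sum_eq_single_of_mem (2*m) (Finset.mem_Icc.mpr ⟨by omega, le_refl _⟩)]
    · rw [Polynomial.coeff_C_mul, Polynomial.coeff_X_pow, if_pos rfl, mul_one]
    · intro j hj hne
      have hb := Finset.mem_Icc.mp hj
      rw [Polynomial.coeff_C_mul, Polynomial.coeff_X_pow, if_neg (by omega), mul_zero]
  have hdegle : Q.natDegree ≤ 2*m - 2*μ := by
    rw [hQdef]
    refine Polynomial.natDegree_sum_le_of_forall_le _ _ (fun j hj => ?_)
    have hb := Finset.mem_Icc.mp hj
    exact (Polynomial.natDegree_C_mul_X_pow_le _ _).trans (by omega)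
  have hQne : Q ≠ 0 := fun h => ha2m_ne (by rw [← hcoeffE, h, Polynomial.coeff_zero])
  have hndeg : Q.natDegree = 2*m - 2*μ :=
    le_antisymm hdegle (Polynomial.le_natDegree_of_ne_zero (by rw [hcoeffE]; exact ha2m_ne))
  have hlead : Q.leadingCoeff = A (2*m) e := by
    rw [Polynomial.leadingCoeff, hndeg, hcoeffE]
  -- roots
  set R : Multiset ℂ := Q.roots with hRdef
  have hsplits : Polynomial.Splits Q := IsAlgClosed.splits Q
  have hcardR : Multiset.card R = 2*m - 2*μ := by
    rw [hRdef, ← hndeg]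
    exact Polynomial.splits_iff_card_roots.mp hsplits
  have hfact : Q = Polynomial.C (A (2*m) e)
      * (R.map fun z => Polynomial.X - Polynomial.C z).prod := by
    rw [← hlead]
    exact hsplits.eq_prod_roots
  have hQne0 : ∀ τ : ℝ, Q.eval (τ:ℂ) ≠ 0 := by
    intro τ h
    have := hpos τ
    rw [h] at this
    simp at this
    linarith
  have him_ne : ∀ z ∈ R, z.im ≠ 0 := by
    intro z hz him
    have hroot : Q.eval z = 0 := (Polynomial.mem_roots'.mp hz).2
    have hzre : z = ((z.re : ℝ) : ℂ) := Complex.ext rfl (by simp [him])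
    exact hQne0 z.re (by rw [← hzre]; exact hroot)
  have hne0 : ∀ (τ:ℝ), ∀ z ∈ R, ((τ:ℂ) - z) ≠ 0 := by
    intro τ z hz h
    apply him_ne z hz
    have h2 : ((τ:ℂ) - z).im = 0 := by rw [h]; simp
    rw [Complex.sub_im, Complex.ofReal_im] at h2
    linarith
  have hQevalz : ∀ τ : ℝ, Q.eval (τ:ℂ) = (c1:ℂ) * (R.map fun z => (τ:ℂ) - z).prod := by
    intro τ
    conv_lhs => rw [hfact]
    rw [Polynomial.eval_mul, Polynomial.eval_C, ha2m_eq, Polynomial.eval_multiset_prod,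
      Multiset.map_map]
    exact congrArg (fun t => (c1:ℂ) * t) (congrArg Multiset.prod (Multiset.map_congr rfl (fun z _ => by
      simp only [Function.comp_apply, Polynomial.eval_sub, Polynomial.eval_X,
        Polynomial.eval_C])))
  -- the two angle functions
  set Sf : ℝ → ℝ := fun τ => ((R.map fun z => Complex.arg ((τ:ℂ) - z)).sum) with hSfdef
  set G : ℝ → ℝ := fun τ => Complex.arg (Q.eval (τ:ℂ)) with hGdef
  have hGbound : ∀ τ, |G τ| < Real.pi/2 := fun τ =>
    Complex.abs_arg_lt_pi_div_two_iff.mpr (Or.inl (lt_of_lt_of_le hc0 (hpos τ)))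
  have hπ : (0:ℝ) < Real.pi := Real.pi_pos
  -- S - G takes values in 2πℤ
  have hint : ∀ τ, ∃ n : ℤ, Sf τ - G τ = n * (2*Real.pi) := by
    intro τ
    have hprodne : ∀ w ∈ R.map (fun z => (τ:ℂ) - z), w ≠ 0 := by
      intro w hw
      obtain ⟨z, hz, rfl⟩ := Multiset.mem_map.mp hw
      exact hne0 τ z hz
    have hexpS := aux3_exp_sum_args (R.map fun z => (τ:ℂ) - z) hprodne
    rw [Multiset.map_map, Multiset.map_map] at hexpS
    have hexpG := aux3_exp_arg (Q.eval (τ:ℂ)) (hQne0 τ)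
    have hPne : (R.map fun z => (τ:ℂ) - z).prod ≠ 0 :=
      Multiset.prod_ne_zero (by
        intro h0
        obtain ⟨z, hz, heq⟩ := Multiset.mem_map.mp h0
        exact hne0 τ z hz heq)
    have hPabs_pos : (0:ℝ) < (R.map fun z => ‖((τ:ℂ) - z)‖).prod := by
      have : (R.map fun z => ‖((τ:ℂ) - z)‖).prod
          = ‖((R.map fun z => (τ:ℂ) - z).prod)‖ := by
        rw [← aux3_abs_prod, Multiset.map_map]
        rfl
      rw [this]
      exact norm_pos_iff.mpr hPne
    have hexp1 : Complex.exp (((Sf τ - G τ : ℝ):ℂ) * Complex.I) = 1 := by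
      rw [show ((Sf τ - G τ : ℝ):ℂ) * Complex.I
          = ((Sf τ:ℝ):ℂ) * Complex.I - ((G τ:ℝ):ℂ) * Complex.I by push_cast; ring]
      rw [Complex.exp_sub]
      have hS1 : Complex.exp (((Sf τ:ℝ):ℂ) * Complex.I)
          = (R.map fun z => (τ:ℂ) - z).prod
            / (((R.map fun z => ‖((τ:ℂ) - z)‖).prod : ℝ) : ℂ) := hexpS
      have hG1 : Complex.exp (((G τ:ℝ):ℂ) * Complex.I)
          = Q.eval (τ:ℂ) / ((‖Q.eval (τ:ℂ)‖ : ℝ) : ℂ) := hexpG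
      rw [hS1, hG1]
      have habsQ : ‖Q.eval (τ:ℂ)‖
          = c1 * (R.map fun z => ‖((τ:ℂ) - z)‖).prod := by
        rw [hQevalz τ, norm_mul, Complex.norm_of_nonneg hc1pos.le]
        congr 1
        rw [← aux3_abs_prod, Multiset.map_map]
        rfl
      rw [habsQ, hQevalz τ]
      set P : ℂ := (R.map fun z => (τ:ℂ) - z).prod
      set Pa : ℝ := (R.map fun z => ‖((τ:ℂ) - z)‖).prod
      have hPa_ne : (Pa:ℂ) ≠ 0 := Complex.ofReal_ne_zero.mpr hPabs_pos.ne'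
      have hc1ne : ((c1:ℝ):ℂ) ≠ 0 := Complex.ofReal_ne_zero.mpr hc1pos.ne'
      field_simp
      push_cast
      ring
    obtain ⟨n, hn⟩ := Complex.exp_eq_one_iff.mp hexp1
    refine ⟨n, ?_⟩
    have h2 : ((Sf τ - G τ:ℝ):ℂ) * Complex.I = ((n:ℂ) * (2*(Real.pi:ℂ))) * Complex.I := by
      rw [hn]; push_cast; ring
    have h3 : ((Sf τ - G τ:ℝ):ℂ) = (n:ℂ) * (2*(Real.pi:ℂ)) :=
      mul_right_cancel₀ Complex.I_ne_zero h2
    exact_mod_cast h3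
  -- continuity
  have hScont : Continuous Sf :=
    aux3_multiset_continuous_sum R (fun τ z => Complex.arg ((τ:ℂ) - z))
      (fun z hz => aux3_arg_continuous z (him_ne z hz))
  have hGcont : Continuous G := by
    rw [continuous_iff_continuousAt]
    intro τ
    have hQcont : Continuous fun τ:ℝ => Q.eval (τ:ℂ) :=
      Q.continuous.comp Complex.continuous_ofReal
    have hmem : Q.eval ((τ:ℂ)) ∈ Complex.slitPlane :=
      Complex.mem_slitPlane_iff.mpr (Or.inl (lt_of_lt_of_le hc0 (hpos τ)))
    exact ContinuousAt.comp (x := τ) (f := fun τ:ℝ => Q.eval (τ:ℂ))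
      (Complex.continuousAt_arg hmem) hQcont.continuousAt
  -- constancy of S - G
  set c2 : ℝ := Sf 0 - G 0 with hc2def
  have hconst : ∀ τ, Sf τ - G τ = c2 :=
    fun τ => aux3_const_of_two_pi_int _ (hScont.sub hGcont) hint τ 0
  -- limits at +∞ : c2 = 0
  open Filter Topology in
  have hStop : Filter.Tendsto Sf Filter.atTop (nhds 0) := by
    have h := aux3_multiset_tendsto_sum R (fun τ z => Complex.arg ((τ:ℂ) - z)) (fun _ => 0)
      Filter.atTop (fun z _ => aux3_arg_atTop z)
    simpa using h
  have hGfun : G = fun τ => Sf τ - c2 := funext fun τ => by have := hconst τ; linarith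
  have hGtop : Filter.Tendsto G Filter.atTop (nhds (0 - c2)) := by
    rw [hGfun]
    exact hStop.sub tendsto_const_nhds
  have habs_c2 : |0 - c2| ≤ Real.pi/2 :=
    le_of_tendsto hGtop.abs (Filter.Eventually.of_forall fun τ => (hGbound τ).le)
  have hc2 : c2 = 0 := by
    obtain ⟨n, hn⟩ := hint 0
    have hc2n : c2 = n * (2*Real.pi) := by rw [hc2def, ← hn]
    by_contra hne
    have hn0 : n ≠ 0 := by
      intro h0
      rw [h0] at hc2n
      simp at hc2n
      exact hne hc2n
    have h1 : (1:ℝ) ≤ |(n:ℝ)| := by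
      have := Int.one_le_abs hn0
      calc (1:ℝ) = ((1:ℤ):ℝ) := by norm_num
        _ ≤ ((|n|:ℤ):ℝ) := by exact_mod_cast this
        _ = |(n:ℝ)| := by push_cast; rfl
    have h2 : |0 - c2| = |(n:ℝ)| * (2*Real.pi) := by
      rw [hc2n]
      rw [zero_sub, abs_neg, abs_mul]
      congr 1
      rw [abs_of_pos (by linarith)]
    rw [h2] at habs_c2
    nlinarith
  -- limits at -∞
  set L : ℂ → ℝ := fun z => if 0 < z.im then -Real.pi else Real.pi with hLdef
  have hSbot : Filter.Tendsto Sf Filter.atBot (nhds ((R.map L).sum)) := by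
    refine aux3_multiset_tendsto_sum R _ L Filter.atBot (fun z hz => ?_)
    by_cases h : 0 < z.im
    · simpa [hLdef, h] using aux3_arg_atBot_pos z h
    · have hlt : z.im < 0 := lt_of_le_of_ne (not_lt.mp h) (him_ne z hz)
      simpa [hLdef, h] using aux3_arg_atBot_neg z hlt
  have hGbot : Filter.Tendsto G Filter.atBot (nhds ((R.map L).sum)) := by
    rw [hGfun, hc2]
    simpa using hSbot
  have habsL : |(R.map L).sum| ≤ Real.pi/2 :=
    le_of_tendsto hGbot.abs (Filter.Eventually.of_forall fun τ => (hGbound τ).le)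
  -- counting
  set p : ℕ := Multiset.card (R.filter fun z => 0 < z.im) with hpdef
  set q : ℕ := Multiset.card (R.filter fun z => ¬ 0 < z.im) with hqdef
  have hsumL : (R.map L).sum = (q:ℝ)*Real.pi - (p:ℝ)*Real.pi := by
    conv_lhs => rw [← Multiset.filter_add_not (fun z => 0 < z.im) R]
    rw [Multiset.map_add, Multiset.sum_add]
    have h1 : (R.filter fun z => 0 < z.im).map L = Multiset.replicate p (-Real.pi) := by
      rw [Multiset.map_congr rfl (f := L) (g := fun _ => -Real.pi) (fun z hz => by
        have hz' := Multiset.of_mem_filter hz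
        simp [hLdef, hz'])]
      rw [Multiset.map_const']
    have h2 : (R.filter fun z => ¬ 0 < z.im).map L = Multiset.replicate q Real.pi := by
      rw [Multiset.map_congr rfl (f := L) (g := fun _ => Real.pi) (fun z hz => by
        have hz' := Multiset.of_mem_filter hz
        simp [hLdef, hz'])]
      rw [Multiset.map_const']
    rw [h1, h2, Multiset.sum_replicate, Multiset.sum_replicate]
    simp [nsmul_eq_mul]
    ring
  have hpq_card : p + q = 2*m - 2*μ := by
    rw [← hcardR]
    conv_rhs => rw [← Multiset.filter_add_not (fun z => 0 < z.im) R]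
    rw [Multiset.card_add]
  have hpq : p = q := by
    by_contra hne
    have h2 : (1:ℤ) ≤ |(q:ℤ) - (p:ℤ)| := Int.one_le_abs (by omega)
    have h1 : (1:ℝ) ≤ |(q:ℝ) - (p:ℝ)| := by
      calc (1:ℝ) = ((1:ℤ):ℝ) := by norm_num
        _ ≤ ((|(q:ℤ) - (p:ℤ)|:ℤ):ℝ) := by exact_mod_cast h2
        _ = |(q:ℝ) - (p:ℝ)| := by push_cast; rfl
    rw [hsumL] at habsL
    have h3 : |(q:ℝ) - (p:ℝ)| * Real.pi ≤ Real.pi/2 := by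
      have h4 : |((q:ℝ) - (p:ℝ)) * Real.pi| ≤ Real.pi/2 := by
        rw [show ((q:ℝ)-(p:ℝ))*Real.pi = (q:ℝ)*Real.pi - (p:ℝ)*Real.pi from by ring]
        exact habsL
      rwa [abs_mul, abs_of_pos hπ] at h4
    nlinarith
  show Multiset.card (Multiset.filter (fun z => 0 < z.im) Q.roots) = m - μ
  rw [← hRdef, ← hpdef]
  omega

end
end

section
/- Let S ≥ 1, let 1 ≤ a_1 < a_2 < … < a_S be real numbers and m_1, …, m_S positive integers. Let l be an integer with 0 ≤ l < 2(m_1 + … + m_S) and define κ ∈ {1,…,S} by 2(m_1 + … + m_{κ−1}) ≤ l < 2(m_1 + … + m_κ) (with the empty sum equal to 0). Then there exists a constant C > 0, depending only on S, l and m_1, …, m_S but not on a_1, …, a_S, such that C^{−1} · a_κ^{2l+1−4(m_1+…+m_κ)} · ∏_{s=κ+1}^S a_s^{−4m_s} ≤ ∫_{−∞}^{∞} t^{2l} ∏_{s=1}^S (t² + a_s²)^{−2m_s} dt ≤ C · a_κ^{2l+1−4(m_1+…+m_κ)} · ∏_{s=κ+1}^S a_s^{−4m_s}. -/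
open MeasureTheory Finset

noncomputable section

lemma epow_nonneg (k : ℕ) (u : ℝ) : 0 ≤ u ^ (2 * k) :=
  Even.pow_nonneg ⟨k, two_mul k⟩ u

lemma model_le (k n : ℕ) (h : k < 2 * n) (u : ℝ) :
    u ^ (2 * k) / (1 + u ^ 2) ^ (2 * n) ≤ (1 + u ^ 2)⁻¹ := by
  have h1 : (0:ℝ) < 1 + u ^ 2 := by positivity
  rw [← one_div, div_le_div_iff₀ (by positivity) h1, one_mul]
  calc u ^ (2 * k) * (1 + u ^ 2) = (u ^ 2) ^ k * (1 + u ^ 2) := by rw [pow_mul]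
    _ ≤ (1 + u ^ 2) ^ k * (1 + u ^ 2) := by
        gcongr
        · nlinarith [sq_nonneg u]
    _ = (1 + u ^ 2) ^ (k + 1) := (pow_succ _ _).symm
    _ ≤ (1 + u ^ 2) ^ (2 * n) := pow_le_pow_right₀ (by nlinarith [sq_nonneg u]) (by omega)

lemma model_integrable (k n : ℕ) (h : k < 2 * n) :
    Integrable (fun u : ℝ => u ^ (2 * k) / (1 + u ^ 2) ^ (2 * n)) := by
  refine integrable_inv_one_add_sq.mono' ?_ ?_
  · exact ((continuous_pow _).div (((continuous_const : Continuous fun _ : ℝ => (1:ℝ)).add (continuous_pow 2)).pow _)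
      (fun u => pow_ne_zero _ (show (1:ℝ) + u ^ 2 ≠ 0 by positivity))).aestronglyMeasurable
  · filter_upwards with u
    rw [Real.norm_of_nonneg (div_nonneg (epow_nonneg k u) (by positivity))]
    exact model_le k n h u

lemma model_pos (k n : ℕ) (h : k < 2 * n) :
    0 < ∫ u : ℝ, u ^ (2 * k) / (1 + u ^ 2) ^ (2 * n) := by
  rw [integral_pos_iff_support_of_nonneg
    (fun u => div_nonneg (epow_nonneg k u) (by positivity)) (model_integrable k n h)]
  have hs : Set.Ioi (0:ℝ) ⊆ Function.support fun u : ℝ => u ^ (2 * k) / (1 + u ^ 2) ^ (2 * n) := by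
    intro u hu
    have h2 : (0:ℝ) < u := hu
    simp only [Function.mem_support]
    positivity
  calc (0:ENNReal) < volume (Set.Ioi (0:ℝ)) := by simp
    _ ≤ _ := measure_mono hs

lemma scaled_key (k n : ℕ) {a : ℝ} (ha : 0 < a) (t : ℝ) :
    t ^ (2 * k) / (t ^ 2 + a ^ 2) ^ (2 * n)
      = (a ^ (2 * k) / a ^ (4 * n)) * ((t / a) ^ (2 * k) / (1 + (t / a) ^ 2) ^ (2 * n)) := by
  have ha' : a ≠ 0 := ha.ne'
  have h2 : (t ^ 2 + a ^ 2) ≠ 0 := by positivity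
  have h3 : (1 + (t / a) ^ 2) ≠ 0 := by positivity
  simp only [div_pow]
  rw [one_add_div (pow_ne_zero 2 ha'), div_pow]
  field_simp
  ring

lemma scaled_integrable (k n : ℕ) (h : k < 2 * n) {a : ℝ} (ha : 0 < a) :
    Integrable (fun t : ℝ => t ^ (2 * k) / (t ^ 2 + a ^ 2) ^ (2 * n)) := by
  have h1 := ((model_integrable k n h).comp_div ha.ne').const_mul (a ^ (2 * k) / a ^ (4 * n))
  refine h1.congr ?_
  filter_upwards with t
  exact (scaled_key k n ha t).symm

lemma scaled_eq (k n : ℕ) {a : ℝ} (ha : 0 < a) :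
    (∫ t : ℝ, t ^ (2 * k) / (t ^ 2 + a ^ 2) ^ (2 * n))
      = a ^ ((2 * k + 1 : ℝ) - 4 * n) * ∫ u : ℝ, u ^ (2 * k) / (1 + u ^ 2) ^ (2 * n) := by
  have ha' : a ≠ 0 := ha.ne'
  calc (∫ t : ℝ, t ^ (2 * k) / (t ^ 2 + a ^ 2) ^ (2 * n))
      = ∫ t : ℝ, (a ^ (2 * k) / a ^ (4 * n)) *
          ((t / a) ^ (2 * k) / (1 + (t / a) ^ 2) ^ (2 * n)) := by
        congr 1; funext t; exact scaled_key k n ha t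
    _ = (a ^ (2 * k) / a ^ (4 * n)) *
          ∫ t : ℝ, ((t / a) ^ (2 * k) / (1 + (t / a) ^ 2) ^ (2 * n)) :=
        MeasureTheory.integral_const_mul _ _
    _ = (a ^ (2 * k) / a ^ (4 * n)) * (|a| • ∫ u : ℝ, u ^ (2 * k) / (1 + u ^ 2) ^ (2 * n)) := by
        rw [MeasureTheory.Measure.integral_comp_div
          (fun u : ℝ => u ^ (2 * k) / (1 + u ^ 2) ^ (2 * n)) a]
    _ = a ^ ((2 * k + 1 : ℝ) - 4 * n) * ∫ u : ℝ, u ^ (2 * k) / (1 + u ^ 2) ^ (2 * n) := by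
        rw [abs_of_pos ha, smul_eq_mul,
          show ((2 * k + 1 : ℝ) - 4 * n) = ((2 * k + 1 : ℕ) : ℝ) - ((4 * n : ℕ) : ℝ) by
            push_cast; ring,
          Real.rpow_sub ha, Real.rpow_natCast, Real.rpow_natCast, pow_succ]
        field_simp

set_option maxHeartbeats 1600000 in
/-- two-sided estimate for `∫ t^{2l} ∏_s (t² + a_s²)^{-2m_s} dt`
with a constant depending only on `S`, `l` and `m₁,…,m_S` (not on `a₁,…,a_S`),
assuming `1 ≤ a₁ < … < a_S`. -/
theorem statement6 (S : ℕ) (hS : 0 < S) (m : Fin S → ℕ) (hm : ∀ s, 0 < m s)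
    (l : ℕ) (hl : l < 2 * ∑ s, m s) (κ : Fin S)
    (hκ1 : 2 * ∑ s ∈ Finset.Iio κ, m s ≤ l)
    (hκ2 : l < 2 * ∑ s ∈ Finset.Iic κ, m s) :
    ∃ C > (0 : ℝ), ∀ a : Fin S → ℝ, StrictMono a → 1 ≤ a ⟨0, hS⟩ →
      C⁻¹ * (a κ ^ ((2 * l + 1 : ℝ) - 4 * ∑ s ∈ Finset.Iic κ, (m s : ℝ))
            / ∏ s ∈ Finset.Ioi κ, a s ^ (4 * m s))
          ≤ (∫ t : ℝ, t ^ (2 * l) / ∏ s, (t ^ 2 + a s ^ 2) ^ (2 * m s)) ∧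
      (∫ t : ℝ, t ^ (2 * l) / ∏ s, (t ^ 2 + a s ^ 2) ^ (2 * m s))
          ≤ C * (a κ ^ ((2 * l + 1 : ℝ) - 4 * ∑ s ∈ Finset.Iic κ, (m s : ℝ))
            / ∏ s ∈ Finset.Ioi κ, a s ^ (4 * m s)) := by
  classical
  set P : ℕ := ∑ s ∈ Finset.Iio κ, m s with hPdef
  set Mκ : ℕ := ∑ s ∈ Finset.Iic κ, m s with hMκdef
  set Q : ℕ := ∑ s ∈ Finset.Ioi κ, m s with hQdef
  set Mtot : ℕ := ∑ s, m s with hMtotdef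
  set j : ℕ := l - 2 * P with hjdef
  -- interval decompositions
  have hunion : Finset.Iic κ ∪ Finset.Ioi κ = (Finset.univ : Finset (Fin S)) := by
    ext s; simp [le_or_gt]
  have hdisj : Disjoint (Finset.Iic κ) (Finset.Ioi κ) :=
    Finset.disjoint_left.mpr fun s hs hs' =>
      absurd (Finset.mem_Ioi.mp hs') (not_lt.mpr (Finset.mem_Iic.mp hs))
  have hIic : ∀ f : Fin S → ℝ, ∏ s ∈ Finset.Iic κ, f s
      = f κ * ∏ s ∈ Finset.Iio κ, f s := by
    intro f
    rw [← Finset.Iio_insert, Finset.prod_insert (by simp)]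
  have hsplit : ∀ f : Fin S → ℝ, ∏ s, f s
      = (∏ s ∈ Finset.Iic κ, f s) * ∏ s ∈ Finset.Ioi κ, f s := by
    intro f
    rw [← hunion, Finset.prod_union hdisj]
  have hMκP : Mκ = m κ + P := by
    rw [hMκdef, hPdef, ← Finset.Iio_insert, Finset.sum_insert (by simp)]
  have hMtotsplit : Mtot = Mκ + Q := by
    rw [hMtotdef, hMκdef, hQdef, ← hunion, Finset.sum_union hdisj]
  have hj : j < 2 * m κ := by omega
  have hjl : 2 * l = 2 * j + 2 * (2 * P) := by omega
  set J1 : ℝ := ∫ u : ℝ, u ^ (2 * j) / (1 + u ^ 2) ^ (2 * m κ) with hJ1def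
  set J0 : ℝ := ∫ u : ℝ, u ^ (2 * l) / (1 + u ^ 2) ^ (2 * Mtot) with hJ0def
  have hJ1pos : 0 < J1 := model_pos _ _ hj
  have hJ0pos : 0 < J0 := model_pos _ _ hl
  refine ⟨max J1 J0⁻¹, lt_of_lt_of_le hJ1pos (le_max_left _ _), fun a hmono ha1 => ?_⟩
  set C : ℝ := max J1 J0⁻¹ with hCdef
  have hone : ∀ s, 1 ≤ a s := fun s =>
    le_trans ha1 (hmono.monotone (by simp [Fin.le_def]))
  have hapos : ∀ s, 0 < a s := fun s => lt_of_lt_of_le one_pos (hone s)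
  have haκ : 0 < a κ := hapos κ
  have hD : ∀ t : ℝ, 0 < ∏ s, (t ^ 2 + a s ^ 2) ^ (2 * m s) := fun t =>
    Finset.prod_pos fun s _ =>
      pow_pos (add_pos_of_nonneg_of_pos (sq_nonneg t) (pow_pos (hapos s) 2)) _
  set PI : ℝ := ∏ s ∈ Finset.Ioi κ, a s ^ (4 * m s) with hPIdef
  have hPIpos : 0 < PI := Finset.prod_pos fun s _ => pow_pos (hapos s) _
  -- exponent bookkeeping
  set E : ℝ := (2 * l + 1 : ℝ) - 4 * ∑ s ∈ Finset.Iic κ, (m s : ℝ) with hEdef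
  have hMκcast : (∑ s ∈ Finset.Iic κ, (m s : ℝ)) = (Mκ : ℝ) := by
    rw [hMκdef]; push_cast; ring
  have hjcast : (j : ℝ) = (l : ℝ) - 2 * P := by
    rw [hjdef]; push_cast [Nat.cast_sub (by omega : 2 * P ≤ l)]; ring
  have hE1 : (2 * (j:ℝ) + 1) - 4 * (m κ) = E := by
    rw [hEdef, hMκcast, hjcast]
    have : (Mκ : ℝ) = (m κ : ℝ) + P := by rw [hMκP]; push_cast; ring
    rw [this]; ring
  -- pointwise upper bound
  have hup : ∀ t : ℝ, t ^ (2 * l) / ∏ s, (t ^ 2 + a s ^ 2) ^ (2 * m s)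
      ≤ (t ^ (2 * j) / (t ^ 2 + a κ ^ 2) ^ (2 * m κ)) / PI := by
    intro t
    rw [div_div, div_le_div_iff₀ (hD t) (by positivity)]
    have key1 : (t ^ 2) ^ (2 * P) ≤ ∏ s ∈ Finset.Iio κ, (t ^ 2 + a s ^ 2) ^ (2 * m s) := by
      calc (t ^ 2) ^ (2 * P) = ∏ s ∈ Finset.Iio κ, (t ^ 2) ^ (2 * m s) := by
            rw [Finset.prod_pow_eq_pow_sum]
            congr 1
            rw [hPdef, Finset.mul_sum]
        _ ≤ _ := Finset.prod_le_prod (fun s _ => by positivity)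
            (fun s _ => pow_le_pow_left₀ (sq_nonneg t) (le_add_of_nonneg_right (by positivity)) _)
    have key2 : PI ≤ ∏ s ∈ Finset.Ioi κ, (t ^ 2 + a s ^ 2) ^ (2 * m s) := by
      refine Finset.prod_le_prod (fun s _ => pow_nonneg (hapos s).le _) (fun s _ => ?_)
      calc a s ^ (4 * m s) = (a s ^ 2) ^ (2 * m s) := by
            rw [← pow_mul]; congr 1; ring
        _ ≤ (t ^ 2 + a s ^ 2) ^ (2 * m s) :=
            pow_le_pow_left₀ (by positivity) (le_add_of_nonneg_left (sq_nonneg t)) _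
    calc t ^ (2 * l) * ((t ^ 2 + a κ ^ 2) ^ (2 * m κ) * PI)
        = (t ^ (2 * j) * (t ^ 2 + a κ ^ 2) ^ (2 * m κ)) * ((t ^ 2) ^ (2 * P) * PI) := by
          rw [hjl, pow_add, pow_mul]
          ring
      _ ≤ (t ^ (2 * j) * (t ^ 2 + a κ ^ 2) ^ (2 * m κ)) *
            ((∏ s ∈ Finset.Iio κ, (t ^ 2 + a s ^ 2) ^ (2 * m s)) *
              ∏ s ∈ Finset.Ioi κ, (t ^ 2 + a s ^ 2) ^ (2 * m s)) := by
          refine mul_le_mul_of_nonneg_left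
            (mul_le_mul key1 key2 hPIpos.le (Finset.prod_nonneg fun s _ => by positivity))
            (mul_nonneg (epow_nonneg j t) (by positivity))
      _ = t ^ (2 * j) * ∏ s, (t ^ 2 + a s ^ 2) ^ (2 * m s) := by
          rw [hsplit (fun s => (t ^ 2 + a s ^ 2) ^ (2 * m s)),
            hIic (fun s => (t ^ 2 + a s ^ 2) ^ (2 * m s))]
          ring
  -- pointwise lower bound
  have hlo : ∀ t : ℝ, (a κ ^ (4 * Q) * (t ^ (2 * l) / (t ^ 2 + a κ ^ 2) ^ (2 * Mtot))) / PI
      ≤ t ^ (2 * l) / ∏ s, (t ^ 2 + a s ^ 2) ^ (2 * m s) := by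
    intro t
    rw [mul_div_assoc', div_div, div_le_div_iff₀ (by positivity) (hD t)]
    have keyA : ∏ s ∈ Finset.Iic κ, (t ^ 2 + a s ^ 2) ^ (2 * m s)
        ≤ (t ^ 2 + a κ ^ 2) ^ (2 * Mκ) := by
      calc ∏ s ∈ Finset.Iic κ, (t ^ 2 + a s ^ 2) ^ (2 * m s)
          ≤ ∏ s ∈ Finset.Iic κ, (t ^ 2 + a κ ^ 2) ^ (2 * m s) := by
            refine Finset.prod_le_prod (fun s _ => by positivity) (fun s hs => ?_)
            have h1 : a s ≤ a κ := hmono.monotone (Finset.mem_Iic.mp hs)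
            have h2 : 0 < a s := hapos s
            exact pow_le_pow_left₀ (by positivity) (by nlinarith) _
        _ = (t ^ 2 + a κ ^ 2) ^ (2 * Mκ) := by
            rw [Finset.prod_pow_eq_pow_sum]
            congr 1
            rw [hMκdef, Finset.mul_sum]
    have hsum2Q : (∑ x ∈ Finset.Ioi κ, 2 * m x) = 2 * Q := by
      rw [hQdef, Finset.mul_sum]
    have hPI2 : ∏ s ∈ Finset.Ioi κ, (a s ^ 2) ^ (2 * m s) = PI := by
      rw [hPIdef]
      exact Finset.prod_congr rfl fun s _ => by
        rw [← pow_mul, show 2 * (2 * m s) = 4 * m s by omega]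
    have keyB : a κ ^ (4 * Q) * ∏ s ∈ Finset.Ioi κ, (t ^ 2 + a s ^ 2) ^ (2 * m s)
        ≤ PI * (t ^ 2 + a κ ^ 2) ^ (2 * Q) := by
      calc a κ ^ (4 * Q) * ∏ s ∈ Finset.Ioi κ, (t ^ 2 + a s ^ 2) ^ (2 * m s)
          = ∏ s ∈ Finset.Ioi κ, (a κ ^ 2 * (t ^ 2 + a s ^ 2)) ^ (2 * m s) := by
            rw [Finset.prod_congr rfl fun (s : Fin S) _ =>
                mul_pow (a κ ^ 2) (t ^ 2 + a s ^ 2) (2 * m s),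
              Finset.prod_mul_distrib, Finset.prod_pow_eq_pow_sum, hsum2Q, ← pow_mul,
              show 2 * (2 * Q) = 4 * Q by omega]
        _ ≤ ∏ s ∈ Finset.Ioi κ, (a s ^ 2 * (t ^ 2 + a κ ^ 2)) ^ (2 * m s) := by
            refine Finset.prod_le_prod (fun s _ => by positivity) (fun s hs => ?_)
            have h1 : a κ ≤ a s := (hmono (Finset.mem_Ioi.mp hs)).le
            have h2 : 0 < a κ := haκ
            have h3 : a κ ^ 2 ≤ a s ^ 2 := by nlinarith
            refine pow_le_pow_left₀ (by positivity) ?_ _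
            nlinarith [mul_nonneg (sub_nonneg.mpr h3) (sq_nonneg t)]
        _ = PI * (t ^ 2 + a κ ^ 2) ^ (2 * Q) := by
            rw [Finset.prod_congr rfl fun (s : Fin S) _ =>
                mul_pow (a s ^ 2) (t ^ 2 + a κ ^ 2) (2 * m s),
              Finset.prod_mul_distrib, hPI2, Finset.prod_pow_eq_pow_sum, hsum2Q]
    calc a κ ^ (4 * Q) * t ^ (2 * l) * ∏ s, (t ^ 2 + a s ^ 2) ^ (2 * m s)
        = t ^ (2 * l) * ((∏ s ∈ Finset.Iic κ, (t ^ 2 + a s ^ 2) ^ (2 * m s)) *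
            (a κ ^ (4 * Q) * ∏ s ∈ Finset.Ioi κ, (t ^ 2 + a s ^ 2) ^ (2 * m s))) := by
          rw [hsplit (fun s => (t ^ 2 + a s ^ 2) ^ (2 * m s))]
          ring
      _ ≤ t ^ (2 * l) * ((t ^ 2 + a κ ^ 2) ^ (2 * Mκ) * (PI * (t ^ 2 + a κ ^ 2) ^ (2 * Q))) := by
          refine mul_le_mul_of_nonneg_left
            (mul_le_mul keyA keyB (by positivity) (by positivity)) (epow_nonneg l t)
      _ = t ^ (2 * l) * ((t ^ 2 + a κ ^ 2) ^ (2 * Mtot) * PI) := by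
          rw [show 2 * Mtot = 2 * Mκ + 2 * Q by omega, pow_add]
          ring
  -- integrability
  have hgUint : Integrable (fun t : ℝ =>
      (t ^ (2 * j) / (t ^ 2 + a κ ^ 2) ^ (2 * m κ)) / PI) :=
    (scaled_integrable j (m κ) hj haκ).div_const PI
  have hgLint : Integrable (fun t : ℝ =>
      (a κ ^ (4 * Q) * (t ^ (2 * l) / (t ^ 2 + a κ ^ 2) ^ (2 * Mtot))) / PI) :=
    ((scaled_integrable l Mtot hl haκ).const_mul _).div_const PI
  have hfcont : Continuous (fun t : ℝ => t ^ (2 * l) / ∏ s, (t ^ 2 + a s ^ 2) ^ (2 * m s)) := by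
    refine (continuous_pow _).div ?_ (fun t => (hD t).ne')
    exact continuous_finset_prod _ fun s _ =>
      ((continuous_pow 2).add continuous_const).pow _
  have hfint : Integrable (fun t : ℝ => t ^ (2 * l) / ∏ s, (t ^ 2 + a s ^ 2) ^ (2 * m s)) := by
    refine hgUint.mono' hfcont.aestronglyMeasurable ?_
    filter_upwards with t
    rw [Real.norm_of_nonneg (div_nonneg (epow_nonneg l t) (hD t).le)]
    exact hup t
  constructor
  · -- lower bound
    calc C⁻¹ * (a κ ^ E / PI)
        ≤ J0 * (a κ ^ E / PI) := by
          refine mul_le_mul_of_nonneg_right ?_ (by positivity)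
          rw [hCdef]
          calc (max J1 J0⁻¹)⁻¹ ≤ (J0⁻¹)⁻¹ :=
                inv_anti₀ (inv_pos.mpr hJ0pos) (le_max_right _ _)
            _ = J0 := inv_inv J0
      _ = (∫ t : ℝ, (a κ ^ (4 * Q) * (t ^ (2 * l) / (t ^ 2 + a κ ^ 2) ^ (2 * Mtot))) / PI) := by
          rw [integral_div, MeasureTheory.integral_const_mul, scaled_eq l Mtot haκ, ← hJ0def,
            ← mul_assoc, ← Real.rpow_natCast (a κ) (4 * Q), ← Real.rpow_add haκ]
          rw [show ((4 * Q : ℕ) : ℝ) + ((2 * l + 1 : ℝ) - 4 * Mtot) = E by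
            rw [hEdef, hMκcast]
            have : (Mtot : ℝ) = (Mκ : ℝ) + Q := by rw [hMtotsplit]; push_cast; ring
            rw [this]; push_cast; ring]
          ring
      _ ≤ _ := integral_mono hgLint hfint hlo
  · -- upper bound
    calc (∫ t : ℝ, t ^ (2 * l) / ∏ s, (t ^ 2 + a s ^ 2) ^ (2 * m s))
        ≤ ∫ t : ℝ, (t ^ (2 * j) / (t ^ 2 + a κ ^ 2) ^ (2 * m κ)) / PI :=
          integral_mono hfint hgUint hup
      _ = J1 * (a κ ^ E / PI) := by
          rw [integral_div, scaled_eq j (m κ) haκ, ← hJ1def]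
          rw [hE1]
          ring
      _ ≤ C * (a κ ^ E / PI) := by
          have h9 : J1 ≤ C := le_max_left _ _
          have h10 : (0:ℝ) ≤ a κ ^ E / PI := by positivity
          exact mul_le_mul_of_nonneg_right h9 h10

end
end

section
/- Let S ≥ 1, let 0 < a_1 < a_2 < … < a_S be real numbers and m_1, …, m_S positive integers. Let l be an integer with 0 ≤ l < 2(m_1 + … + m_S) and define κ ∈ {1,…,S} by 2(m_1 + … + m_{κ−1}) ≤ l < 2(m_1 + … + m_κ) (with the empty sum equal to 0). Then there exists a constant C > 0, depending only on S, l and m_1, …, m_S but not on a_1, …, a_S, such that C^{−1} · a_κ^{2l+1−4(m_1+…+m_κ)} · ∏_{s=κ+1}^S a_s^{−4m_s} ≤ ∫_{−∞}^{∞} t^{2l} ∏_{s=1}^S (t² + a_s²)^{−2m_s} dt ≤ C · a_κ^{2l+1−4(m_1+…+m_κ)} · ∏_{s=κ+1}^S a_s^{−4m_s}; that is, the two-sided integral estimate holds under the weaker hypothesis a_1 > 0 in place of a_1 ≥ 1. -/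
open MeasureTheory Finset

noncomputable section

lemma aux_intJ (j n : ℕ) (h : j < n) :
    Integrable (fun v : ℝ => v ^ (2*j) / (v ^ 2 + 1) ^ n) := by
  apply integrable_inv_one_add_sq.mono'
  · exact ((continuous_pow _).div (by continuity) (fun v => by positivity)).aestronglyMeasurable
  · refine Filter.Eventually.of_forall (fun v => ?_)
    have h0 : (0:ℝ) < v ^ 2 + 1 := by positivity
    have hnum : (0:ℝ) ≤ v ^ (2*j) := by rw [pow_mul]; positivity
    rw [Real.norm_eq_abs, abs_of_nonneg (div_nonneg hnum (by positivity))]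
    have h1 : v ^ (2*j) ≤ (v ^ 2 + 1) ^ j := by
      rw [pow_mul]; exact pow_le_pow_left₀ (sq_nonneg v) (by linarith) j
    have h2 : (v ^ 2 + 1) ^ (j+1) ≤ (v ^ 2 + 1) ^ n := by
      exact pow_le_pow_right₀ (by nlinarith [sq_nonneg v]) h
    rw [inv_eq_one_div, div_le_div_iff₀ (by positivity) (by positivity)]
    calc v ^ (2*j) * (1 + v ^ 2) ≤ (v ^ 2 + 1) ^ j * (1 + v ^ 2) :=
          mul_le_mul_of_nonneg_right h1 (by positivity)
      _ = (v ^ 2 + 1) ^ (j+1) := by ring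
      _ ≤ (v ^ 2 + 1) ^ n := h2
      _ = 1 * (v ^ 2 + 1) ^ n := (one_mul _).symm

lemma aux_scaled (j n : ℕ) (h : j < n) (a : ℝ) (ha : 0 < a) :
    Integrable (fun u : ℝ => u ^ (2*j) / (u ^ 2 + a ^ 2) ^ n) ∧
    (∫ u : ℝ, u ^ (2*j) / (u ^ 2 + a ^ 2) ^ n)
      = (a ^ (2*j+1) / a ^ (2*n)) * ∫ v : ℝ, v ^ (2*j) / (v ^ 2 + 1) ^ n := by
  have hane : a ≠ 0 := ha.ne'
  have key : ∀ u : ℝ, u ^ (2*j) / (u ^ 2 + a ^ 2) ^ n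
      = (a ^ (2*j) / a ^ (2*n)) * ((u/a) ^ (2*j) / ((u/a) ^ 2 + 1) ^ n) := by
    intro u
    have h1 : ((u/a) ^ 2 + 1) = (u ^ 2 + a ^ 2) / a ^ 2 := by field_simp
    have h2 : (u ^ 2 + a ^ 2 : ℝ) ≠ 0 := by positivity
    rw [h1, div_pow, div_pow, pow_mul, pow_mul, pow_mul, ← pow_mul a 2 n]
    field_simp
  constructor
  · simp_rw [key]
    exact (((aux_intJ j n h).comp_div hane)).const_mul _
  · simp_rw [key]
    rw [integral_const_mul,
      MeasureTheory.Measure.integral_comp_div (fun v : ℝ => v ^ (2*j) / (v ^ 2 + 1) ^ n) a,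
      abs_of_pos ha, smul_eq_mul]
    ring

set_option maxHeartbeats 1000000 in
/-- two-sided estimate for `∫ t^{2l} ∏_s (t² + a_s²)^{-2m_s} dt`
with a constant depending only on `S`, `l` and `m₁,…,m_S` (not on `a₁,…,a_S`),
assuming only `0 < a₁ < … < a_S`. -/
theorem statement7 (S : ℕ) (hS : 0 < S) (m : Fin S → ℕ) (hm : ∀ s, 0 < m s)
    (l : ℕ) (hl : l < 2 * ∑ s, m s) (κ : Fin S)
    (hκ1 : 2 * ∑ s ∈ Finset.Iio κ, m s ≤ l)
    (hκ2 : l < 2 * ∑ s ∈ Finset.Iic κ, m s) :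
    ∃ C > (0 : ℝ), ∀ a : Fin S → ℝ, StrictMono a → 0 < a ⟨0, hS⟩ →
      C⁻¹ * (a κ ^ ((2 * l + 1 : ℝ) - 4 * ∑ s ∈ Finset.Iic κ, (m s : ℝ))
            / ∏ s ∈ Finset.Ioi κ, a s ^ (4 * m s))
          ≤ (∫ t : ℝ, t ^ (2 * l) / ∏ s, (t ^ 2 + a s ^ 2) ^ (2 * m s)) ∧
      (∫ t : ℝ, t ^ (2 * l) / ∏ s, (t ^ 2 + a s ^ 2) ^ (2 * m s))
          ≤ C * (a κ ^ ((2 * l + 1 : ℝ) - 4 * ∑ s ∈ Finset.Iic κ, (m s : ℝ))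
            / ∏ s ∈ Finset.Ioi κ, a s ^ (4 * m s)) := by
  classical
  have hMκ : ∑ s ∈ Finset.Iic κ, m s = m κ + ∑ s ∈ Finset.Iio κ, m s := by
    rw [← Finset.Iio_insert κ, Finset.sum_insert (by simp)]
  set P' : ℕ := ∑ s ∈ Finset.Iio κ, m s with hP'def
  set Mκ : ℕ := ∑ s ∈ Finset.Iic κ, m s with hMκdef
  set M : ℕ := ∑ s, m s with hMdef
  set l' : ℕ := l - 2 * P' with hl'def
  have hleq : l = l' + 2 * P' := by omega
  have hlm : l' < 2 * m κ := by omega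
  set J : ℝ := ∫ v : ℝ, v ^ (2*l') / (v ^ 2 + 1) ^ (2 * m κ) with hJdef
  have hJ0 : 0 ≤ J := integral_nonneg (fun v => div_nonneg (by rw [pow_mul]; positivity) (by positivity))
  refine ⟨J + ((2*l : ℝ) + 1) * 2 ^ (2*M),
    add_pos_of_nonneg_of_pos hJ0 (by positivity), fun a ha h0 => ?_⟩
  set C : ℝ := J + ((2*l : ℝ) + 1) * 2 ^ (2*M) with hCdef
  have hCge : ((2*l : ℝ) + 1) * 2 ^ (2*M) ≤ C := le_add_of_nonneg_left hJ0
  have hCpos : (0:ℝ) < C := add_pos_of_nonneg_of_pos hJ0 (by positivity)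
  have hapos : ∀ s, 0 < a s := fun s =>
    lt_of_lt_of_le h0 (ha.monotone (by rw [Fin.le_def]; exact Nat.zero_le _))
  have hA : 0 < a κ := hapos κ
  set P : ℝ := ∏ s ∈ Finset.Ioi κ, a s ^ (4 * m s) with hPdef
  have hP : 0 < P := prod_pos (fun s _ => pow_pos (hapos s) _)
  have hdisj : Disjoint (Finset.Iic κ) (Finset.Ioi κ) :=
    Finset.disjoint_left.mpr fun x hx hx' =>
      absurd (mem_Ioi.mp hx') (not_lt.mpr (mem_Iic.mp hx))
  have huniv : Finset.Iic κ ∪ Finset.Ioi κ = Finset.univ := by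
    ext x; simp [le_or_gt]
  have hsplit : ∀ (g : Fin S → ℝ),
      ∏ s, g s = (∏ s ∈ Finset.Iic κ, g s) * ∏ s ∈ Finset.Ioi κ, g s := fun g => by
    rw [← Finset.prod_union hdisj, huniv]
  have hsplitn : M = Mκ + ∑ s ∈ Finset.Ioi κ, m s := by
    rw [hMdef, hMκdef, ← Finset.sum_union hdisj, huniv]
  have hIicp : ∀ (g : Fin S → ℝ),
      ∏ s ∈ Finset.Iic κ, g s = g κ * ∏ s ∈ Finset.Iio κ, g s := fun g => by
    rw [← Finset.Iio_insert κ, Finset.prod_insert (by simp)]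
  have hDpos : ∀ t : ℝ, 0 < ∏ s, (t ^ 2 + a s ^ 2) ^ (2 * m s) :=
    fun t => prod_pos (fun s _ =>
      pow_pos (add_pos_of_nonneg_of_pos (sq_nonneg t) (pow_pos (hapos s) 2)) _)
  have hevp : ∀ (t : ℝ) (k : ℕ), 0 ≤ t ^ (2*k) := fun t k => by rw [pow_mul]; positivity
  -- upper bound pointwise
  have hDlow : ∀ t : ℝ, (t ^ 2) ^ (2 * P') * ((t ^ 2 + a κ ^ 2) ^ (2 * m κ) * P)
      ≤ ∏ s, (t ^ 2 + a s ^ 2) ^ (2 * m s) := by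
    intro t
    rw [hsplit, hIicp]
    have h1 : (t ^ 2) ^ (2 * P') ≤ ∏ s ∈ Finset.Iio κ, (t ^ 2 + a s ^ 2) ^ (2 * m s) := by
      rw [hP'def, Finset.mul_sum, ← Finset.prod_pow_eq_pow_sum]
      refine Finset.prod_le_prod (fun s _ => by rw [pow_mul]; positivity) (fun s _ => ?_)
      exact pow_le_pow_left₀ (sq_nonneg t) (by linarith [sq_nonneg (a s)]) _
    have h2 : P ≤ ∏ s ∈ Finset.Ioi κ, (t ^ 2 + a s ^ 2) ^ (2 * m s) := by
      rw [hPdef]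
      refine Finset.prod_le_prod (fun s _ => pow_nonneg (hapos s).le _) (fun s _ => ?_)
      rw [show 4 * m s = 2 * (2 * m s) by ring, pow_mul]
      exact pow_le_pow_left₀ (sq_nonneg (a s)) (by linarith [sq_nonneg t]) _
    have h3 := mul_le_mul_of_nonneg_left
      (mul_le_mul h1 h2 hP.le (prod_nonneg (fun s _ => by rw [pow_mul]; positivity)))
      (pow_nonneg (by positivity : (0:ℝ) ≤ t ^ 2 + a κ ^ 2) (2 * m κ))
    calc (t ^ 2) ^ (2 * P') * ((t ^ 2 + a κ ^ 2) ^ (2 * m κ) * P)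
        = (t ^ 2 + a κ ^ 2) ^ (2 * m κ) * ((t ^ 2) ^ (2 * P') * P) := by ring
      _ ≤ (t ^ 2 + a κ ^ 2) ^ (2 * m κ) *
          ((∏ s ∈ Finset.Iio κ, (t ^ 2 + a s ^ 2) ^ (2 * m s)) *
            ∏ s ∈ Finset.Ioi κ, (t ^ 2 + a s ^ 2) ^ (2 * m s)) := h3
      _ = ((t ^ 2 + a κ ^ 2) ^ (2 * m κ) * ∏ s ∈ Finset.Iio κ, (t ^ 2 + a s ^ 2) ^ (2 * m s)) *
          ∏ s ∈ Finset.Ioi κ, (t ^ 2 + a s ^ 2) ^ (2 * m s) := by ring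
  have hfB : ∀ t : ℝ, t ^ (2*l) / ∏ s, (t ^ 2 + a s ^ 2) ^ (2 * m s)
      ≤ t ^ (2*l') / ((t ^ 2 + a κ ^ 2) ^ (2 * m κ) * P) := by
    intro t
    rw [div_le_div_iff₀ (hDpos t)
      (mul_pos (pow_pos (add_pos_of_nonneg_of_pos (sq_nonneg t) (pow_pos hA 2)) _) hP)]
    have ht : t ^ (2*l) = t ^ (2*l') * (t ^ 2) ^ (2 * P') := by
      rw [← pow_mul, ← pow_add]; congr 1; omega
    rw [ht, mul_assoc]
    exact mul_le_mul_of_nonneg_left (hDlow t) (hevp t l')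
  have hBint : Integrable (fun t : ℝ => t ^ (2*l') / ((t ^ 2 + a κ ^ 2) ^ (2 * m κ) * P)) := by
    simp_rw [← div_div]
    exact ((aux_scaled l' (2 * m κ) hlm (a κ) hA).1).div_const P
  have hfcont : Continuous (fun t : ℝ => t ^ (2*l) / ∏ s, (t ^ 2 + a s ^ 2) ^ (2 * m s)) := by
    apply (continuous_pow _).div
    · exact continuous_finset_prod _ (fun s _ => ((continuous_pow 2).add continuous_const).pow _)
    · exact fun t => (hDpos t).ne'
  have hfnn : ∀ t : ℝ, 0 ≤ t ^ (2*l) / ∏ s, (t ^ 2 + a s ^ 2) ^ (2 * m s) :=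
    fun t => div_nonneg (hevp t l) (hDpos t).le
  have hfint : Integrable (fun t : ℝ => t ^ (2*l) / ∏ s, (t ^ 2 + a s ^ 2) ^ (2 * m s)) := by
    refine hBint.mono' hfcont.aestronglyMeasurable (Filter.Eventually.of_forall fun t => ?_)
    rw [Real.norm_eq_abs, abs_of_nonneg (hfnn t)]
    exact hfB t
  -- upper bound on the integral
  have hIub : (∫ t : ℝ, t ^ (2*l) / ∏ s, (t ^ 2 + a s ^ 2) ^ (2 * m s))
      ≤ (a κ ^ (2*l'+1) / a κ ^ (2*(2*m κ)) * J) / P := by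
    calc (∫ t : ℝ, t ^ (2*l) / ∏ s, (t ^ 2 + a s ^ 2) ^ (2 * m s))
        ≤ ∫ t : ℝ, t ^ (2*l') / ((t ^ 2 + a κ ^ 2) ^ (2 * m κ) * P) :=
          integral_mono hfint hBint hfB
      _ = (∫ t : ℝ, t ^ (2*l') / (t ^ 2 + a κ ^ 2) ^ (2 * m κ)) / P := by
          simp_rw [← div_div]
          exact integral_div P _
      _ = (a κ ^ (2*l'+1) / a κ ^ (2*(2*m κ)) * J) / P := by
          rw [(aux_scaled l' (2 * m κ) hlm (a κ) hA).2]
  have hXdef : a κ ^ ((2 * l + 1 : ℝ) - 4 * ∑ s ∈ Finset.Iic κ, (m s : ℝ))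
      = a κ ^ (2*l+1) / a κ ^ (4*Mκ) := by
    rw [show ((2 * l + 1 : ℝ) - 4 * ∑ s ∈ Finset.Iic κ, (m s : ℝ))
        = ((2*l+1 : ℕ) : ℝ) - ((4*Mκ : ℕ) : ℝ) by rw [hMκdef]; push_cast; ring]
    rw [Real.rpow_sub hA, Real.rpow_natCast, Real.rpow_natCast]
  have hpoweq : a κ ^ (2*l'+1) / a κ ^ (2*(2*m κ)) = a κ ^ (2*l+1) / a κ ^ (4*Mκ) := by
    rw [div_eq_div_iff (pow_ne_zero _ hA.ne') (pow_ne_zero _ hA.ne'), ← pow_add, ← pow_add]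
    congr 1; omega
  have hXpos : 0 < a κ ^ (2*l+1) / a κ ^ (4*Mκ) / P :=
    div_pos (div_pos (pow_pos hA _) (pow_pos hA _)) hP
  constructor
  · -- lower bound
    rw [hXdef]
    set K : ℝ := 2 ^ (2*M) * a κ ^ (4*Mκ) * P with hKdef
    have hKpos : 0 < K :=
      mul_pos (mul_pos (pow_pos two_pos _) (pow_pos hA _)) hP
    have hKup : ∀ t ∈ Set.Ioc (-(a κ)) (a κ),
        ∏ s, (t ^ 2 + a s ^ 2) ^ (2 * m s) ≤ K := by
      intro t ht
      have ht2 : t ^ 2 ≤ a κ ^ 2 := sq_le_sq' (le_of_lt ht.1) ht.2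
      rw [hsplit]
      have h1 : ∏ s ∈ Finset.Iic κ, (t ^ 2 + a s ^ 2) ^ (2 * m s)
          ≤ ∏ s ∈ Finset.Iic κ, (2 * a κ ^ 2) ^ (2 * m s) := by
        refine Finset.prod_le_prod (fun s _ => pow_nonneg (by positivity) _) (fun s hs => ?_)
        have has : a s ^ 2 ≤ a κ ^ 2 := pow_le_pow_left₀ (hapos s).le (ha.monotone (mem_Iic.mp hs)) 2
        exact pow_le_pow_left₀ (by positivity) (by linarith) _
      have h2 : ∏ s ∈ Finset.Ioi κ, (t ^ 2 + a s ^ 2) ^ (2 * m s)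
          ≤ ∏ s ∈ Finset.Ioi κ, (2 * a s ^ 2) ^ (2 * m s) := by
        refine Finset.prod_le_prod (fun s _ => pow_nonneg (by positivity) _) (fun s hs => ?_)
        have has : a κ ^ 2 ≤ a s ^ 2 := pow_le_pow_left₀ hA.le (ha (mem_Ioi.mp hs)).le 2
        exact pow_le_pow_left₀ (by positivity) (by linarith) _
      have e1 : ∏ s ∈ Finset.Iic κ, ((2:ℝ) * a κ ^ 2) ^ (2 * m s)
          = 2 ^ (2*Mκ) * a κ ^ (4*Mκ) := by
        rw [Finset.prod_pow_eq_pow_sum, ← Finset.mul_sum, ← hMκdef, mul_pow, ← pow_mul]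
        congr 2; omega
      have e2 : ∏ s ∈ Finset.Ioi κ, ((2:ℝ) * a s ^ 2) ^ (2 * m s)
          = 2 ^ (2 * ∑ s ∈ Finset.Ioi κ, m s) * P := by
        rw [hPdef]
        rw [Finset.prod_congr rfl (fun s _ => mul_pow 2 (a s ^ 2) (2 * m s)),
          Finset.prod_mul_distrib, Finset.prod_pow_eq_pow_sum, ← Finset.mul_sum]
        congr 1
        refine Finset.prod_congr rfl (fun s _ => ?_)
        rw [← pow_mul]; congr 1; omega
      calc (∏ s ∈ Finset.Iic κ, (t ^ 2 + a s ^ 2) ^ (2 * m s)) *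
            ∏ s ∈ Finset.Ioi κ, (t ^ 2 + a s ^ 2) ^ (2 * m s)
          ≤ (∏ s ∈ Finset.Iic κ, ((2:ℝ) * a κ ^ 2) ^ (2 * m s)) *
            ∏ s ∈ Finset.Ioi κ, ((2:ℝ) * a s ^ 2) ^ (2 * m s) := by
            refine mul_le_mul h1 h2 (prod_nonneg (fun s _ => pow_nonneg (by positivity) _))
              (prod_nonneg (fun s _ => pow_nonneg (by positivity) _))
        _ = K := by
            rw [e1, e2, hKdef, hsplitn]
            rw [show 2 * (Mκ + ∑ s ∈ Finset.Ioi κ, m s)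
              = 2*Mκ + 2 * ∑ s ∈ Finset.Ioi κ, m s by ring, pow_add]
            ring
    have hlow : ∀ t ∈ Set.Ioc (-(a κ)) (a κ),
        t ^ (2*l) / K ≤ t ^ (2*l) / ∏ s, (t ^ 2 + a s ^ 2) ^ (2 * m s) := by
      intro t ht
      exact div_le_div_of_nonneg_left (hevp t l) (hDpos t) (hKup t ht)
    have hint1 : (∫ t in Set.Ioc (-(a κ)) (a κ), t ^ (2*l) / K)
        ≤ ∫ t in Set.Ioc (-(a κ)) (a κ), t ^ (2*l) / ∏ s, (t ^ 2 + a s ^ 2) ^ (2 * m s) := by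
      refine setIntegral_mono_on ?_ (hfint.integrableOn) measurableSet_Ioc hlow
      exact ((continuous_pow _).div_const K).integrableOn_Ioc
    have hint2 : (∫ t in Set.Ioc (-(a κ)) (a κ), t ^ (2*l) / ∏ s, (t ^ 2 + a s ^ 2) ^ (2 * m s))
        ≤ ∫ t : ℝ, t ^ (2*l) / ∏ s, (t ^ 2 + a s ^ 2) ^ (2 * m s) :=
      setIntegral_le_integral hfint (Filter.Eventually.of_forall hfnn)
    have hval : (∫ t in Set.Ioc (-(a κ)) (a κ), t ^ (2*l) / K)
        = (2 * a κ ^ (2*l+1) / ((2*l : ℝ) + 1)) / K := by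
      rw [← intervalIntegral.integral_of_le (by linarith), intervalIntegral.integral_div,
        integral_pow]
      rw [Odd.neg_pow (odd_two_mul_add_one l) (a κ)]
      push_cast
      ring
    have hfinal : C⁻¹ * (a κ ^ (2*l+1) / a κ ^ (4*Mκ) / P)
        ≤ (2 * a κ ^ (2*l+1) / ((2*l : ℝ) + 1)) / K := by
      have hCinv : C⁻¹ ≤ (((2*l : ℝ) + 1) * 2 ^ (2*M))⁻¹ := by
        apply inv_anti₀ (by positivity) hCge
      have heq : (2 * a κ ^ (2*l+1) / ((2*l : ℝ) + 1)) / K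
          = 2 * ((((2*l : ℝ) + 1) * 2 ^ (2*M))⁻¹ * (a κ ^ (2*l+1) / a κ ^ (4*Mκ) / P)) := by
        have h2l : ((2*l:ℝ)+1) ≠ 0 := by positivity
        rw [hKdef]
        field_simp
      rw [heq]
      have h4 : C⁻¹ * (a κ ^ (2*l+1) / a κ ^ (4*Mκ) / P)
          ≤ (((2*l : ℝ) + 1) * 2 ^ (2*M))⁻¹ * (a κ ^ (2*l+1) / a κ ^ (4*Mκ) / P) :=
        mul_le_mul_of_nonneg_right hCinv hXpos.le
      nlinarith [mul_nonneg (inv_nonneg.mpr (by positivity : (0:ℝ) ≤ ((2*l : ℝ) + 1) * 2 ^ (2*M))) hXpos.le]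
    calc C⁻¹ * (a κ ^ (2*l+1) / a κ ^ (4*Mκ) / P) ≤ (2 * a κ ^ (2*l+1) / ((2*l : ℝ) + 1)) / K :=
          hfinal
      _ = ∫ t in Set.Ioc (-(a κ)) (a κ), t ^ (2*l) / K := hval.symm
      _ ≤ ∫ t : ℝ, t ^ (2*l) / ∏ s, (t ^ 2 + a s ^ 2) ^ (2 * m s) := le_trans hint1 hint2
  · -- upper bound
    rw [hXdef]
    calc (∫ t : ℝ, t ^ (2*l) / ∏ s, (t ^ 2 + a s ^ 2) ^ (2 * m s))
        ≤ (a κ ^ (2*l'+1) / a κ ^ (2*(2*m κ)) * J) / P := hIub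
      _ = J * (a κ ^ (2*l+1) / a κ ^ (4*Mκ) / P) := by rw [hpoweq]; ring
      _ ≤ C * (a κ ^ (2*l+1) / a κ ^ (4*Mκ) / P) :=
          mul_le_mul_of_nonneg_right (le_add_of_nonneg_right (by positivity)) hXpos.le

end
end

section
/- Let S ≥ 1, let r_1 > r_2 > … > r_S > 0 be real numbers, let m_1, …, m_S be positive integers, and set M = 2(m_1 + … + m_S). Define Ξ(ξ,λ) = ∏_{s=1}^S (|ξ|² + λ^{2/r_s})^{m_s} for ξ ∈ ℝⁿ and λ > 0. Fix an integer l with 0 ≤ l < M and let κ ∈ {1,…,S} satisfy 2(m_1+…+m_{κ−1}) ≤ l < 2(m_1+…+m_κ) (empty sum = 0), and define Ξ^{(−l−1/2)}(ξ',λ) = (|ξ'|² + λ^{2/r_κ})^{m_1+…+m_κ − l/2 − 1/4} · ∏_{s=κ+1}^S (|ξ'|² + λ^{2/r_s})^{m_s} for ξ' ∈ ℝ^{n−1}. Then for every λ₀ > 0 there exist constants C₁, C₂ > 0 such that for all λ ≥ λ₀ and all ξ' ∈ ℝ^{n−1}: C₁ Ξ^{(−l−1/2)}(ξ',λ) ≤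 ( ∫_{−∞}^{∞} ξ_n^{2l} Ξ((ξ',ξ_n),λ)^{−2} dξ_n )^{−1/2} ≤ C₂ Ξ^{(−l−1/2)}(ξ',λ). -/
open MeasureTheory Finset
open scoped ENNReal

noncomputable section

/-- The weight function `Ξ(ξ,λ) = ∏_s (|ξ|² + λ^{2/r_s})^{m_s}` of a Newton polygon. -/
def XiWeight {n S : ℕ} (r : Fin S → ℝ) (m : Fin S → ℕ)
    (ξ : EuclideanSpace ℝ (Fin n)) (lam : ℝ) : ℝ :=
  ∏ s, (‖ξ‖ ^ 2 + lam ^ (2 / r s)) ^ m s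

/-- The shifted weight function
`Ξ^{(-l-1/2)}(ξ',λ) = (|ξ'|² + λ^{2/r_κ})^{m₁+…+m_κ − l/2 − 1/4} ∏_{s>κ} (|ξ'|² + λ^{2/r_s})^{m_s}`. -/
def XiShift {k S : ℕ} (r : Fin S → ℝ) (m : Fin S → ℕ) (l : ℕ) (κ : Fin S)
    (ξ' : EuclideanSpace ℝ (Fin k)) (lam : ℝ) : ℝ :=
  (‖ξ'‖ ^ 2 + lam ^ (2 / r κ)) ^ ((∑ s ∈ Finset.Iic κ, (m s : ℝ)) - l / 2 - 1 / 4)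
    * ∏ s ∈ Finset.Ioi κ, (‖ξ'‖ ^ 2 + lam ^ (2 / r s)) ^ m s

lemma norm_snocVec_sq {k : ℕ} (ξ' : EuclideanSpace ℝ (Fin k)) (t : ℝ) :
    ‖snocVec ξ' t‖ ^ 2 = ‖ξ'‖ ^ 2 + t ^ 2 := by
  rw [EuclideanSpace.norm_eq, EuclideanSpace.norm_eq,
    Real.sq_sqrt (by positivity), Real.sq_sqrt (by positivity)]
  simp [snocVec, Fin.sum_univ_castSucc, WithLp.equiv_symm_apply,
    Real.norm_eq_abs, sq_abs]

lemma aux_integrable (j mm : ℕ) (hjm : j + 1 ≤ 2 * mm) {a : ℝ} (ha : 0 < a) :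
    Integrable (fun t : ℝ => t ^ (2 * j) / (a + t ^ 2) ^ (2 * mm)) := by
  set c := min a 1 with hcdef
  have hc : 0 < c := lt_min ha one_pos
  have hc1 : c ≤ 1 := min_le_right _ _
  apply Integrable.mono' (integrable_inv_one_add_sq.const_mul (c ^ (2 * mm))⁻¹)
  · exact (Continuous.div (continuous_pow _)
      ((continuous_const.add (continuous_pow 2)).pow _)
      (fun t => (pow_pos (show (0:ℝ) < a + t ^ 2 by positivity) (2 * mm)).ne')).aestronglyMeasurable
  · refine ae_of_all _ fun t => ?_
    have ht2j : (0:ℝ) ≤ t ^ (2 * j) := by rw [pow_mul]; positivity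
    have h1t : (0:ℝ) < 1 + t ^ 2 := by positivity
    have hat : (0:ℝ) < a + t ^ 2 := by positivity
    rw [Real.norm_eq_abs, abs_of_nonneg (by positivity)]
    have key : c * (1 + t ^ 2) ≤ a + t ^ 2 := by
      have h1 : c ≤ a := min_le_left _ _
      have h2 : c * t ^ 2 ≤ t ^ 2 := by nlinarith [sq_nonneg t]
      nlinarith
    have hden : c ^ (2 * mm) * (1 + t ^ 2) ^ (2 * mm) ≤ (a + t ^ 2) ^ (2 * mm) := by
      rw [← mul_pow]; exact pow_le_pow_left₀ (by positivity) key _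
    have hnum : t ^ (2 * j) * (1 + t ^ 2) ≤ (1 + t ^ 2) ^ (2 * mm) := by
      have e1 : t ^ (2 * j) ≤ (1 + t ^ 2) ^ j := by
        rw [pow_mul]; exact pow_le_pow_left₀ (sq_nonneg t) (by nlinarith [sq_nonneg t]) _
      calc t ^ (2 * j) * (1 + t ^ 2) ≤ (1 + t ^ 2) ^ j * (1 + t ^ 2) :=
            mul_le_mul_of_nonneg_right e1 h1t.le
        _ = (1 + t ^ 2) ^ (j + 1) := by ring
        _ ≤ (1 + t ^ 2) ^ (2 * mm) := pow_le_pow_right₀ (by nlinarith [sq_nonneg t]) hjm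
    have final : t ^ (2 * j) * (c ^ (2 * mm) * (1 + t ^ 2)) ≤ 1 * (a + t ^ 2) ^ (2 * mm) := by
      calc t ^ (2 * j) * (c ^ (2 * mm) * (1 + t ^ 2))
          = c ^ (2 * mm) * (t ^ (2 * j) * (1 + t ^ 2)) := by ring
        _ ≤ c ^ (2 * mm) * (1 + t ^ 2) ^ (2 * mm) :=
            mul_le_mul_of_nonneg_left hnum (by positivity)
        _ ≤ 1 * (a + t ^ 2) ^ (2 * mm) := by rw [one_mul]; exact hden
    rw [show (c ^ (2 * mm))⁻¹ * (1 + t ^ 2)⁻¹ = 1 / (c ^ (2 * mm) * (1 + t ^ 2)) by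
      rw [one_div, mul_inv]]
    exact (div_le_div_iff₀ (by positivity) (by positivity)).mpr final

lemma aux_pos (j mm : ℕ) (hjm : j + 1 ≤ 2 * mm) :
    0 < ∫ t : ℝ, t ^ (2 * j) / (1 + t ^ 2) ^ (2 * mm) := by
  have hint := aux_integrable j mm hjm (one_pos (α := ℝ))
  rw [integral_pos_iff_support_of_nonneg
    (fun t => by rw [Pi.zero_apply, pow_mul]; positivity) hint]
  have hsub : Set.Ioi (0:ℝ) ⊆ Function.support fun t : ℝ => t ^ (2 * j) / (1 + t ^ 2) ^ (2 * mm) := by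
    intro t ht
    have ht0 : (0:ℝ) < t := ht
    have : (0:ℝ) < t ^ (2 * j) / (1 + t ^ 2) ^ (2 * mm) :=
      div_pos (pow_pos ht0 _) (by positivity)
    exact this.ne'
  calc (0:ℝ≥0∞) < volume (Set.Ioi (0:ℝ)) := by rw [Real.volume_Ioi]; exact ENNReal.zero_lt_top
    _ ≤ _ := measure_mono hsub

lemma aux_scale (j mm : ℕ) {a c : ℝ} (hc : 0 < c) (hc2 : c ^ 2 = a) :
    ∫ t : ℝ, t ^ (2 * j) / (a + t ^ 2) ^ (2 * mm)
      = (c ^ (2 * j + 1) / a ^ (2 * mm)) * ∫ t : ℝ, t ^ (2 * j) / (1 + t ^ 2) ^ (2 * mm) := by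
  have ha : 0 < a := hc2 ▸ (by positivity)
  have key := Measure.integral_comp_mul_left
    (fun t : ℝ => t ^ (2 * j) / (a + t ^ 2) ^ (2 * mm)) c
  have heq : (fun x : ℝ => (c * x) ^ (2 * j) / (a + (c * x) ^ 2) ^ (2 * mm))
      = fun x : ℝ => (c ^ (2 * j) / a ^ (2 * mm)) * (x ^ (2 * j) / (1 + x ^ 2) ^ (2 * mm)) := by
    funext x
    have h1 : a + (c * x) ^ 2 = a * (1 + x ^ 2) := by rw [mul_pow, hc2]; ring
    rw [h1, mul_pow c x, mul_pow a, div_mul_div_comm]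
  rw [heq] at key
  rw [integral_const_mul] at key
  have habs : |c⁻¹| = c⁻¹ := abs_of_pos (by positivity)
  rw [habs, smul_eq_mul] at key
  have := key.symm
  field_simp at this ⊢
  rw [this]; ring


lemma rpow_helper1 (A Q J e : ℝ) (hA : 0 < A) (hQ : 0 < Q) (hJ : 0 < J) (mm : ℕ) :
    (A ^ e / A ^ (2*mm) * J / Q ^ 2) ^ (-(1:ℝ)/2)
      = J ^ (-(1:ℝ)/2) * (A ^ ((mm:ℝ) - e/2) * Q) := by
  have h1 : A ^ e / A ^ (2*mm) * J / Q ^ 2 = J * (A ^ (e - 2*(mm:ℝ)) * Q ^ (-(2:ℝ))) := by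
    rw [Real.rpow_sub hA, Real.rpow_neg hQ.le, Real.rpow_two, ← Real.rpow_natCast A (2*mm)]
    push_cast
    ring
  rw [h1, Real.mul_rpow hJ.le (by positivity),
    Real.mul_rpow (Real.rpow_pos_of_pos hA _).le (Real.rpow_pos_of_pos hQ _).le,
    ← Real.rpow_mul hA.le, ← Real.rpow_mul hQ.le,
    show (-(2:ℝ))*(-(1:ℝ)/2) = 1 by norm_num, Real.rpow_one,
    show (e - 2*(mm:ℝ))*(-(1:ℝ)/2) = (mm:ℝ) - e/2 by ring]

lemma rpow_helper2 (A Q D e L : ℝ) (hA : 0 < A) (hQ : 0 < Q) (hD : 0 < D) (hL : 0 < L)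
    (P : ℕ) :
    (A ^ e / L / (D * A ^ P * Q) ^ 2) ^ (-(1:ℝ)/2)
      = L ^ ((1:ℝ)/2) * D * (A ^ ((P:ℝ) - e/2) * Q) := by
  have h1 : A ^ e / L / (D * A ^ P * Q) ^ 2
      = L ^ (-(1:ℝ)) * (D ^ (-(2:ℝ)) * (Q ^ (-(2:ℝ)) * A ^ (e - 2*(P:ℝ)))) := by
    rw [Real.rpow_sub hA, Real.rpow_neg hQ.le, Real.rpow_neg hD.le, Real.rpow_neg hL.le,
      Real.rpow_one, Real.rpow_two, Real.rpow_two, ← Real.rpow_natCast A P]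
    rw [show (2:ℝ) * (P:ℝ) = (P:ℝ) * 2 by ring, Real.rpow_mul hA.le, Real.rpow_two]
    ring
  rw [h1, Real.mul_rpow (Real.rpow_pos_of_pos hL _).le (by positivity),
    Real.mul_rpow (Real.rpow_pos_of_pos hD _).le (by positivity),
    Real.mul_rpow (Real.rpow_pos_of_pos hQ _).le (Real.rpow_pos_of_pos hA _).le,
    ← Real.rpow_mul hL.le, ← Real.rpow_mul hD.le, ← Real.rpow_mul hQ.le,
    ← Real.rpow_mul hA.le,
    show (-(1:ℝ))*(-(1:ℝ)/2) = (1:ℝ)/2 by norm_num,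
    show (-(2:ℝ))*(-(1:ℝ)/2) = 1 by norm_num, Real.rpow_one, Real.rpow_one,
    show (e - 2*(P:ℝ))*(-(1:ℝ)/2) = (P:ℝ) - e/2 by ring]
  ring

open intervalIntegral in
lemma aux_intpow (c : ℝ) (n : ℕ) : ∫ x in (0:ℝ)..c, x ^ n = c ^ (n+1) / (n+1) := by
  rw [integral_pow, zero_pow (by omega : n + 1 ≠ 0), sub_zero]


set_option maxHeartbeats 2000000 in
/-- `(∫ ξₙ^{2l} Ξ(ξ,λ)^{-2} dξₙ)^{-1/2}` is equivalent, uniformly in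
`λ ≥ λ₀` and `ξ'`, to the shifted weight `Ξ^{(-l-1/2)}(ξ',λ)`. -/
theorem statement9 (k S : ℕ) (hS : 0 < S) (r : Fin S → ℝ) (m : Fin S → ℕ)
    (hm : ∀ s, 0 < m s) (hrpos : ∀ s, 0 < r s) (hr : StrictAnti r)
    (l : ℕ) (hl : l < 2 * ∑ s, m s) (κ : Fin S)
    (hκ1 : 2 * ∑ s ∈ Finset.Iio κ, m s ≤ l)
    (hκ2 : l < 2 * ∑ s ∈ Finset.Iic κ, m s) :
    ∀ lam0 : ℝ, 0 < lam0 →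
      ∃ C₁ > (0 : ℝ), ∃ C₂ > (0 : ℝ), ∀ lam : ℝ, lam0 ≤ lam →
        ∀ ξ' : EuclideanSpace ℝ (Fin k),
          C₁ * XiShift r m l κ ξ' lam
              ≤ (∫ t : ℝ, t ^ (2 * l) / XiWeight r m (snocVec ξ' t) lam ^ 2) ^ (-(1 : ℝ) / 2) ∧
          (∫ t : ℝ, t ^ (2 * l) / XiWeight r m (snocVec ξ' t) lam ^ 2) ^ (-(1 : ℝ) / 2)
              ≤ C₂ * XiShift r m l κ ξ' lam := by
  intro lam0 hlam0
  classical
  set Pm : ℕ := ∑ s ∈ Finset.Iio κ, m s with hPmdef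
  set P : ℕ := ∑ s ∈ Finset.Iic κ, m s with hPdef
  have hκnotin : κ ∉ Finset.Iio κ := by simp
  have hPsplit : P = m κ + Pm := by
    rw [hPdef, hPmdef, ← Finset.Iio_insert, Finset.sum_insert hκnotin]
  set j : ℕ := l - 2 * Pm with hjdef
  have hlj : l = j + 2 * Pm := by omega
  have hjm : j + 1 ≤ 2 * m κ := by omega
  set J : ℝ := ∫ t : ℝ, t ^ (2 * j) / (1 + t ^ 2) ^ (2 * m κ) with hJdef
  have hJ : 0 < J := aux_pos j (m κ) hjm
  set K : Fin S → ℝ := fun s => max 1 (lam0 ^ (2 / r s - 2 / r κ)) with hKdef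
  set K' : Fin S → ℝ := fun s => max 1 (lam0 ^ (2 / r κ - 2 / r s)) with hK'def
  have hK1 : ∀ s, (1:ℝ) ≤ K s := fun s => le_max_left _ _
  have hK'1 : ∀ s, (1:ℝ) ≤ K' s := fun s => le_max_left _ _
  set D1 : ℝ := ∏ s ∈ Finset.Iic κ, (K s + 1) ^ (m s) with hD1def
  set D2 : ℝ := ∏ s ∈ Finset.Ioi κ, (1 + K' s) ^ (m s) with hD2def
  have hD1p : (0:ℝ) < D1 :=
    Finset.prod_pos fun s _ => pow_pos (by linarith [hK1 s]) _
  have hD2p : (0:ℝ) < D2 :=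
    Finset.prod_pos fun s _ => pow_pos (by linarith [hK'1 s]) _
  refine ⟨J ^ (-(1:ℝ)/2), Real.rpow_pos_of_pos hJ _,
    (2*(l:ℝ)+1) ^ ((1:ℝ)/2) * (D1 * D2), by positivity, ?_⟩
  intro lam hlam ξ'
  have hlamp : 0 < lam := lt_of_lt_of_le hlam0 hlam
  set x : ℝ := ‖ξ'‖ ^ 2 with hxdef
  have hx0 : (0:ℝ) ≤ x := by positivity
  set a : Fin S → ℝ := fun s => x + lam ^ (2 / r s) with hadef
  have hap : ∀ s, 0 < a s := fun s => by
    have := Real.rpow_pos_of_pos hlamp (2 / r s)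
    simp only [hadef]; positivity
  set A : ℝ := a κ with hAdef
  have hA : (0:ℝ) < A := hap κ
  set c : ℝ := A ^ ((1:ℝ)/2) with hcdef
  have hcp : 0 < c := Real.rpow_pos_of_pos hA _
  have hc2 : c ^ 2 = A := by
    rw [hcdef, ← Real.rpow_natCast (A ^ ((1:ℝ)/2)) 2, ← Real.rpow_mul hA.le]
    norm_num
  -- rewrite the integrand
  have hXi : (fun t : ℝ => t ^ (2 * l) / XiWeight r m (snocVec ξ' t) lam ^ 2)
      = fun t : ℝ => t ^ (2 * l) / (∏ s, (a s + t ^ 2) ^ m s) ^ 2 := by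
    funext t
    congr 2
    unfold XiWeight
    refine Finset.prod_congr rfl fun s _ => ?_
    rw [norm_snocVec_sq]
    simp only [hadef, ← hxdef]
    ring_nf
  rw [hXi]
  set F : ℝ → ℝ := fun t => t ^ (2 * l) / (∏ s, (a s + t ^ 2) ^ m s) ^ 2 with hFdef
  have haddpos : ∀ (s : Fin S) (t : ℝ), 0 < a s + t ^ 2 := fun s t => by
    have := hap s; positivity
  have hPtpos : ∀ t : ℝ, 0 < ∏ s, (a s + t ^ 2) ^ m s := fun t =>
    Finset.prod_pos fun s _ => pow_pos (haddpos s t) _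
  have hFnn : ∀ t, 0 ≤ F t := fun t => by
    simp only [hFdef]
    have h1 : (0:ℝ) ≤ t ^ (2*l) := by rw [pow_mul]; positivity
    positivity
  -- decomposition of the index set
  have huniv : Finset.Iic κ ∪ Finset.Ioi κ = (Finset.univ : Finset (Fin S)) := by
    ext s; simp [le_or_gt]
  have hdisj : Disjoint (Finset.Iic κ) (Finset.Ioi κ) := by
    rw [Finset.disjoint_left]
    intro s hs hs'
    rw [Finset.mem_Iic] at hs
    rw [Finset.mem_Ioi] at hs'
    exact absurd hs' (not_lt.mpr hs)
  have hsplit : ∀ t : ℝ, (∏ s, (a s + t ^ 2) ^ m s)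
      = (∏ s ∈ Finset.Iic κ, (a s + t ^ 2) ^ m s)
        * ∏ s ∈ Finset.Ioi κ, (a s + t ^ 2) ^ m s := by
    intro t
    rw [← Finset.prod_union hdisj, huniv]
  have hsplit' : ∀ t : ℝ, (∏ s ∈ Finset.Iic κ, (a s + t ^ 2) ^ m s)
      = (∏ s ∈ Finset.Iio κ, (a s + t ^ 2) ^ m s) * (A + t ^ 2) ^ m κ := by
    intro t
    rw [← Finset.Iio_insert, Finset.prod_insert hκnotin, hAdef]
    ring
  set Q : ℝ := ∏ s ∈ Finset.Ioi κ, (a s) ^ m s with hQdef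
  have hQp : (0:ℝ) < Q := Finset.prod_pos fun s _ => pow_pos (hap s) _
  -- pointwise upper bound
  have hub : ∀ t : ℝ, F t ≤ t ^ (2*j) / (A + t ^ 2) ^ (2 * m κ) / Q ^ 2 := by
    intro t
    have ht2 : (0:ℝ) ≤ t ^ 2 := sq_nonneg t
    have hPio : (t ^ 2) ^ Pm ≤ ∏ s ∈ Finset.Iio κ, (a s + t ^ 2) ^ m s := by
      rw [hPmdef, ← Finset.prod_pow_eq_pow_sum]
      exact Finset.prod_le_prod (fun s _ => pow_nonneg ht2 _)
        (fun s _ => pow_le_pow_left₀ ht2 (by linarith [hap s]) _)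
    have hPoi : Q ≤ ∏ s ∈ Finset.Ioi κ, (a s + t ^ 2) ^ m s := by
      rw [hQdef]
      exact Finset.prod_le_prod (fun s _ => pow_nonneg (hap s).le _)
        (fun s _ => pow_le_pow_left₀ (hap s).le (by linarith) _)
    have hden0 : (t ^ 2) ^ Pm * ((A + t ^ 2) ^ m κ * Q) ≤ ∏ s, (a s + t ^ 2) ^ m s := by
      rw [hsplit t, hsplit' t]
      calc (t ^ 2) ^ Pm * ((A + t ^ 2) ^ m κ * Q)
          ≤ (∏ s ∈ Finset.Iio κ, (a s + t ^ 2) ^ m s) * ((A + t ^ 2) ^ m κ * Q) :=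
            mul_le_mul_of_nonneg_right hPio (by positivity)
        _ ≤ (∏ s ∈ Finset.Iio κ, (a s + t ^ 2) ^ m s)
              * ((A + t ^ 2) ^ m κ * ∏ s ∈ Finset.Ioi κ, (a s + t ^ 2) ^ m s) := by
            have := mul_le_mul_of_nonneg_left hPoi
              (pow_nonneg (haddpos κ t).le (m κ))
            exact mul_le_mul_of_nonneg_left this
              (Finset.prod_nonneg fun s _ => pow_nonneg (haddpos s t).le _)
        _ = _ := by ring
    have hden : ((t ^ 2) ^ Pm) ^ 2 * ((A + t ^ 2) ^ (2 * m κ) * Q ^ 2)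
        ≤ (∏ s, (a s + t ^ 2) ^ m s) ^ 2 := by
      have h2 := pow_le_pow_left₀ (by positivity) hden0 2
      calc ((t ^ 2) ^ Pm) ^ 2 * ((A + t ^ 2) ^ (2 * m κ) * Q ^ 2)
          = ((t ^ 2) ^ Pm * ((A + t ^ 2) ^ m κ * Q)) ^ 2 := by
            rw [show (A + t ^ 2) ^ (2 * m κ) = ((A + t ^ 2) ^ m κ) ^ 2 by
              rw [← pow_mul, Nat.mul_comm]]
            ring
        _ ≤ _ := h2
    have hq : (0:ℝ) < (A + t ^ 2) ^ (2 * m κ) * Q ^ 2 := by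
      have := haddpos κ t; positivity
    have ht2j : (0:ℝ) ≤ t ^ (2*j) := by rw [pow_mul]; positivity
    simp only [hFdef]
    rw [div_div, div_le_div_iff₀ (pow_pos (hPtpos t) 2) hq]
    calc t ^ (2*l) * ((A + t ^ 2) ^ (2 * m κ) * Q ^ 2)
        = t ^ (2*j) * (((t ^ 2) ^ Pm) ^ 2 * ((A + t ^ 2) ^ (2 * m κ) * Q ^ 2)) := by
          rw [hlj]
          rw [show ((t ^ 2) ^ Pm) ^ 2 = t ^ (4 * Pm) by rw [← pow_mul, ← pow_mul]; ring_nf]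
          rw [show t ^ (2 * (j + 2 * Pm)) = t ^ (2 * j) * t ^ (4 * Pm) by
            rw [← pow_add]; ring_nf]
          ring
      _ ≤ t ^ (2*j) * (∏ s, (a s + t ^ 2) ^ m s) ^ 2 :=
          mul_le_mul_of_nonneg_left hden ht2j
  -- integrability
  have hFcont : Continuous F := by
    apply Continuous.div (continuous_pow _)
    · exact (continuous_finset_prod _ fun s _ =>
        (continuous_const.add (continuous_pow 2)).pow _).pow 2
    · exact fun t => (pow_pos (hPtpos t) 2).ne'
  have hint_base := aux_integrable j (m κ) hjm (hA.trans_le (le_refl A)) -- 0 < A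
  have hint_g : Integrable (fun t : ℝ => t ^ (2*j) / (A + t ^ 2) ^ (2 * m κ) / Q ^ 2) :=
    hint_base.div_const _
  have hint_F : Integrable F :=
    hint_g.mono' hFcont.aestronglyMeasurable
      (ae_of_all _ fun t => by
        rw [Real.norm_eq_abs, abs_of_nonneg (hFnn t)]; exact hub t)
  -- integral upper bound
  have hI_ub : ∫ t, F t ≤ c ^ (2*j+1) / A ^ (2 * m κ) * J / Q ^ 2 := by
    calc ∫ t, F t ≤ ∫ t, t ^ (2*j) / (A + t ^ 2) ^ (2 * m κ) / Q ^ 2 :=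
          integral_mono hint_F hint_g hub
      _ = (∫ t, t ^ (2*j) / (A + t ^ 2) ^ (2 * m κ)) / Q ^ 2 := integral_div _ _
      _ = c ^ (2*j+1) / A ^ (2 * m κ) * J / Q ^ 2 := by
          rw [aux_scale j (m κ) hcp hc2, hJdef]
  -- pointwise lower bound on (0, c]
  have hlb : ∀ t ∈ Set.Ioc (0:ℝ) c,
      t ^ (2*l) / (D1 * A ^ P * (D2 * Q)) ^ 2 ≤ F t := by
    intro t ht
    have ht0 : 0 < t := ht.1
    have ht2A : t ^ 2 ≤ A := by
      rw [← hc2]; exact pow_le_pow_left₀ ht0.le ht.2 2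
    have hIic : ∀ s ∈ Finset.Iic κ, a s + t ^ 2 ≤ (K s + 1) * A := by
      intro s hs
      have hs' : s ≤ κ := Finset.mem_Iic.mp hs
      have hrs : r κ ≤ r s := hr.antitone hs'
      have hdle : 2 / r s - 2 / r κ ≤ 0 := by
        have h1 : 2 / r s ≤ 2 / r κ :=
          div_le_div_of_nonneg_left (by norm_num) (hrpos κ) hrs
        linarith
      have hlmK : lam ^ (2 / r s - 2 / r κ) ≤ K s :=
        le_trans (Real.rpow_le_rpow_of_nonpos hlam0 hlam hdle) (le_max_right _ _)
      have hsplit2 : lam ^ (2 / r s) = lam ^ (2 / r s - 2 / r κ) * lam ^ (2 / r κ) := by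
        rw [← Real.rpow_add hlamp]; ring_nf
      have hlk : 0 < lam ^ (2 / r κ) := Real.rpow_pos_of_pos hlamp _
      have has : a s ≤ K s * A := by
        have e1 : x ≤ K s * x := le_mul_of_one_le_left hx0 (hK1 s)
        have e2 : lam ^ (2 / r s - 2 / r κ) * lam ^ (2 / r κ) ≤ K s * lam ^ (2 / r κ) :=
          mul_le_mul_of_nonneg_right hlmK hlk.le
        simp only [hadef, hAdef]
        rw [hsplit2, mul_add]
        exact add_le_add e1 e2
      rw [add_mul, one_mul]
      exact add_le_add has ht2A
    have hIoi : ∀ s ∈ Finset.Ioi κ, a s + t ^ 2 ≤ (1 + K' s) * a s := by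
      intro s hs
      have hs' : κ < s := Finset.mem_Ioi.mp hs
      have hrs : r s ≤ r κ := (hr hs').le
      have hdle : 2 / r κ - 2 / r s ≤ 0 := by
        have h1 : 2 / r κ ≤ 2 / r s :=
          div_le_div_of_nonneg_left (by norm_num) (hrpos s) hrs
        linarith
      have hlmK : lam ^ (2 / r κ - 2 / r s) ≤ K' s :=
        le_trans (Real.rpow_le_rpow_of_nonpos hlam0 hlam hdle) (le_max_right _ _)
      have hsplit2 : lam ^ (2 / r κ) = lam ^ (2 / r κ - 2 / r s) * lam ^ (2 / r s) := by
        rw [← Real.rpow_add hlamp]; ring_nf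
      have hlk : 0 < lam ^ (2 / r s) := Real.rpow_pos_of_pos hlamp _
      have hAs : A ≤ K' s * a s := by
        have e1 : x ≤ K' s * x := le_mul_of_one_le_left hx0 (hK'1 s)
        have e2 : lam ^ (2 / r κ - 2 / r s) * lam ^ (2 / r s) ≤ K' s * lam ^ (2 / r s) :=
          mul_le_mul_of_nonneg_right hlmK hlk.le
        simp only [hadef, hAdef]
        rw [hsplit2, mul_add]
        exact add_le_add e1 e2
      rw [add_mul, one_mul]
      exact add_le_add le_rfl (le_trans ht2A hAs)
    have hPic : ∏ s ∈ Finset.Iic κ, (a s + t ^ 2) ^ m s ≤ D1 * A ^ P := by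
      calc ∏ s ∈ Finset.Iic κ, (a s + t ^ 2) ^ m s
          ≤ ∏ s ∈ Finset.Iic κ, ((K s + 1) * A) ^ m s :=
            Finset.prod_le_prod (fun s _ => pow_nonneg (haddpos s t).le _)
              (fun s hs => pow_le_pow_left₀ (haddpos s t).le (hIic s hs) _)
        _ = D1 * A ^ P := by
            simp_rw [mul_pow]
            rw [Finset.prod_mul_distrib, Finset.prod_pow_eq_pow_sum, hD1def, hPdef]
    have hPoi : ∏ s ∈ Finset.Ioi κ, (a s + t ^ 2) ^ m s ≤ D2 * Q := by
      calc ∏ s ∈ Finset.Ioi κ, (a s + t ^ 2) ^ m s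
          ≤ ∏ s ∈ Finset.Ioi κ, ((1 + K' s) * a s) ^ m s :=
            Finset.prod_le_prod (fun s _ => pow_nonneg (haddpos s t).le _)
              (fun s hs => pow_le_pow_left₀ (haddpos s t).le (hIoi s hs) _)
        _ = D2 * Q := by
            simp_rw [mul_pow]
            rw [Finset.prod_mul_distrib, hD2def, hQdef]
    have hPt_le : ∏ s, (a s + t ^ 2) ^ m s ≤ D1 * A ^ P * (D2 * Q) := by
      rw [hsplit t]
      exact mul_le_mul hPic hPoi
        (Finset.prod_nonneg fun s _ => pow_nonneg (haddpos s t).le _) (by positivity)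
    have hPt2 : (∏ s, (a s + t ^ 2) ^ m s) ^ 2 ≤ (D1 * A ^ P * (D2 * Q)) ^ 2 :=
      pow_le_pow_left₀ (Finset.prod_nonneg fun s _ => pow_nonneg (haddpos s t).le _)
        hPt_le 2
    have hBB : (0:ℝ) < (D1 * A ^ P * (D2 * Q)) ^ 2 := by positivity
    simp only [hFdef]
    rw [div_le_div_iff₀ hBB (pow_pos (hPtpos t) 2)]
    exact mul_le_mul_of_nonneg_left hPt2 (by rw [pow_mul]; positivity)
  -- integral lower bound
  set BB : ℝ := (D1 * A ^ P * (D2 * Q)) ^ 2 with hBBdef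
  have hBBp : (0:ℝ) < BB := by positivity
  have hI_lb : c ^ (2*l+1) / (2*(l:ℝ)+1) / BB ≤ ∫ t, F t := by
    have h1 : ∫ t in Set.Ioc 0 c, t ^ (2*l) / BB ≤ ∫ t in Set.Ioc 0 c, F t :=
      setIntegral_mono_on
        (((continuous_pow (2*l)).div_const _).integrableOn_Ioc)
        hint_F.integrableOn measurableSet_Ioc hlb
    have h2 : ∫ t in Set.Ioc 0 c, F t ≤ ∫ t, F t :=
      setIntegral_le_integral hint_F (ae_of_all _ hFnn)
    have h3 : ∫ t in Set.Ioc 0 c, t ^ (2*l) / BB = c ^ (2*l+1) / (2*(l:ℝ)+1) / BB := by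
      rw [integral_div]
      congr 1
      rw [← intervalIntegral.integral_of_le hcp.le, aux_intpow c (2*l)]
      push_cast
      ring
    rw [← h3]
    exact le_trans h1 h2
  have hIpos : 0 < ∫ t, F t :=
    lt_of_lt_of_le (by positivity) hI_lb
  -- XiShift in terms of A and Q
  have hXiS : XiShift r m l κ ξ' lam = A ^ ((P:ℝ) - (l:ℝ)/2 - 1/4) * Q := by
    unfold XiShift
    rw [show (∑ s ∈ Finset.Iic κ, (m s : ℝ)) = (P:ℝ) from by
      rw [hPdef]; exact (Nat.cast_sum _ _).symm]
  constructor
  · -- lower bound on the rpow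
    have step := Real.rpow_le_rpow_of_nonpos hIpos hI_ub (by norm_num : -(1:ℝ)/2 ≤ 0)
    have hc' : c ^ (2*j+1) = A ^ ((2*(j:ℝ)+1)/2) := by
      rw [hcdef, ← Real.rpow_natCast (A ^ ((1:ℝ)/2)) (2*j+1), ← Real.rpow_mul hA.le]
      congr 1
      push_cast; ring
    have hexp : ((m κ:ℕ):ℝ) - ((2*(j:ℝ)+1)/2)/2 = (P:ℝ) - (l:ℝ)/2 - 1/4 := by
      have h1 : (l:ℝ) = (j:ℝ) + 2*(Pm:ℝ) := by rw [hlj]; push_cast; ring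
      have h2 : (P:ℝ) = (m κ:ℝ) + (Pm:ℝ) := by rw [hPsplit]; push_cast; ring
      rw [h1, h2]; ring
    rw [hXiS]
    calc J ^ (-(1:ℝ)/2) * (A ^ ((P:ℝ) - (l:ℝ)/2 - 1/4) * Q)
        = (c ^ (2*j+1) / A ^ (2 * m κ) * J / Q ^ 2) ^ (-(1:ℝ)/2) := by
          rw [hc', rpow_helper1 A Q J ((2*(j:ℝ)+1)/2) hA hQp hJ (m κ), hexp]
      _ ≤ _ := step
  · -- upper bound on the rpow
    have hLpos : (0:ℝ) < c ^ (2*l+1) / (2*(l:ℝ)+1) / BB := by positivity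
    have step := Real.rpow_le_rpow_of_nonpos hLpos hI_lb (by norm_num : -(1:ℝ)/2 ≤ 0)
    have hc'' : c ^ (2*l+1) = A ^ ((2*(l:ℝ)+1)/2) := by
      rw [hcdef, ← Real.rpow_natCast (A ^ ((1:ℝ)/2)) (2*l+1), ← Real.rpow_mul hA.le]
      congr 1
      push_cast; ring
    have hexp2 : (P:ℝ) - ((2*(l:ℝ)+1)/2)/2 = (P:ℝ) - (l:ℝ)/2 - 1/4 := by ring
    rw [hXiS]
    calc (∫ t, F t) ^ (-(1:ℝ)/2)
        ≤ (c ^ (2*l+1) / (2*(l:ℝ)+1) / BB) ^ (-(1:ℝ)/2) := step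
      _ = (2*(l:ℝ)+1) ^ ((1:ℝ)/2) * D1 * (A ^ ((P:ℝ) - (l:ℝ)/2 - 1/4) * (D2 * Q)) := by
          rw [hBBdef, hc'',
            rpow_helper2 A (D2*Q) D1 ((2*(l:ℝ)+1)/2) (2*(l:ℝ)+1) hA (by positivity) hD1p
              (by positivity) P, hexp2]
      _ = (2*(l:ℝ)+1) ^ ((1:ℝ)/2) * (D1 * D2) * (A ^ ((P:ℝ) - (l:ℝ)/2 - 1/4) * Q) := by
          ring

end
end

section
/- Let S ≥ 1 and let (a_1,b_1), …, (a_{S+1},b_{S+1}) be points with nonnegative integer coordinates such that 0 = a_1 < a_2 < … < a_{S+1}, b_1 > b_2 > … > b_{S+1} = 0, each difference a_{s+1} − a_s is even, and the numbers r_s := (a_{s+1} − a_s)/(b_s − b_{s+1}) satisfy r_1 > r_2 > … > r_S > 0. Let N ⊂ ℝ² be the convex hull of the point (0,0) together with the points (a_s,b_s), s = 1, …, S+1. Then there exist constants C₁, C₂ > 0 such that for all ξ ∈ ℝⁿ and all λ ∈ ℂ with |λ| ≥ 1: C₁ ∏_{s=1}^S (|ξ| + |λ|^{1/r_s})^{a_{s+1}−a_s}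 ≤ Σ_{(i,k) ∈ N ∩ ℤ²} |ξ|^i |λ|^k ≤ C₂ ∏_{s=1}^S (|ξ| + |λ|^{1/r_s})^{a_{s+1}−a_s}. -/
open MeasureTheory Finset

open scoped Classical

noncomputable section

/-- equivalence between the lattice-point sum `Σ_{(i,k)∈N∩ℤ²} |ξ|^i |λ|^k`
over the Newton polygon `N` with vertices `(0,0), (a₁,b₁), …, (a_{S+1},b_{S+1})` and the
product `∏_{s=1}^S (|ξ| + |λ|^{1/r_s})^{a_{s+1}-a_s}`, for `|λ| ≥ 1`. -/
theorem statement12 (n S : ℕ) (hS : 0 < S)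
    (a b : Fin (S + 1) → ℕ) (ha0 : a 0 = 0) (hbS : b (Fin.last S) = 0)
    (hamono : StrictMono a) (hbanti : StrictAnti b)
    (heven : ∀ i : Fin S, Even (a i.succ - a i.castSucc))
    (r : Fin S → ℝ)
    (hrdef : ∀ i : Fin S,
      r i * ((b i.castSucc : ℝ) - (b i.succ : ℝ)) = (a i.succ : ℝ) - (a i.castSucc : ℝ))
    (hrpos : ∀ i, 0 < r i) (hranti : StrictAnti r) :
    ∃ C₁ > (0 : ℝ), ∃ C₂ > (0 : ℝ), ∀ ξ : EuclideanSpace ℝ (Fin n), ∀ lam : ℂ,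
      1 ≤ ‖lam‖ →
      C₁ * ∏ i : Fin S, (‖ξ‖ + ‖lam‖ ^ (1 / r i)) ^ (a i.succ - a i.castSucc)
          ≤ (∑ p ∈ (Finset.Iic (a (Fin.last S)) ×ˢ Finset.Iic (b 0)).filter
                (fun p : ℕ × ℕ => ((p.1 : ℝ), (p.2 : ℝ)) ∈
                  convexHull ℝ (insert ((0 : ℝ), (0 : ℝ))
                    (Set.range fun i : Fin (S + 1) => ((a i : ℝ), (b i : ℝ))))),
              ‖ξ‖ ^ p.1 * ‖lam‖ ^ p.2) ∧
      (∑ p ∈ (Finset.Iic (a (Fin.last S)) ×ˢ Finset.Iic (b 0)).filter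
                (fun p : ℕ × ℕ => ((p.1 : ℝ), (p.2 : ℝ)) ∈
                  convexHull ℝ (insert ((0 : ℝ), (0 : ℝ))
                    (Set.range fun i : Fin (S + 1) => ((a i : ℝ), (b i : ℝ))))),
              ‖ξ‖ ^ p.1 * ‖lam‖ ^ p.2)
          ≤ C₂ * ∏ i : Fin S, (‖ξ‖ + ‖lam‖ ^ (1 / r i)) ^ (a i.succ - a i.castSucc) := by
  classical
  -- abbreviations
  set d : Fin S → ℕ := fun s => a s.succ - a s.castSucc with hd
  -- basic monotonicity facts
  have hablt : ∀ s : Fin S, a s.castSucc < a s.succ := fun s => hamono (Fin.castSucc_lt_succ (i := s))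
  have hrne : ∀ s : Fin S, r s ≠ 0 := fun s => (hrpos s).ne'
  have hdr : ∀ s : Fin S, (d s : ℝ) / r s = (b s.castSucc : ℝ) - (b s.succ : ℝ) := by
    intro s
    have h1 : (d s : ℝ) = r s * ((b s.castSucc : ℝ) - (b s.succ : ℝ)) := by
      rw [hd]; simp only
      rw [Nat.cast_sub (hablt s).le]
      exact (hrdef s).symm
    rw [h1, mul_comm, mul_div_assoc, div_self (hrne s), mul_one]
  -- the functions extended to ℕ
  have hminlt : ∀ j : ℕ, min j S < S + 1 := fun j => Nat.lt_succ_of_le (min_le_right j S)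
  set A' : ℕ → ℕ := fun j => a ⟨min j S, hminlt j⟩ with hA'
  set B' : ℕ → ℝ := fun j => (b ⟨min j S, hminlt j⟩ : ℝ) with hB'
  have hA'mono : Monotone A' := by
    intro j k hjk
    exact hamono.monotone (Fin.mk_le_mk.mpr (by omega))
  have hA'succ : ∀ s : Fin S, A' (s.val + 1) = a s.succ := by
    intro s; simp only [hA']
    congr 1
    exact Fin.ext (by rw [Fin.val_succ]; exact Nat.min_eq_left s.isLt)
  have hA'cast : ∀ s : Fin S, A' s.val = a s.castSucc := by
    intro s; simp only [hA']
    congr 1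
    exact Fin.ext (by rw [Fin.coe_castSucc]; exact Nat.min_eq_left s.isLt.le)
  have hB'succ : ∀ s : Fin S, B' (s.val + 1) = (b s.succ : ℝ) := by
    intro s; simp only [hB']
    congr 2
    exact Fin.ext (by rw [Fin.val_succ]; exact Nat.min_eq_left s.isLt)
  have hB'cast : ∀ s : Fin S, B' s.val = (b s.castSucc : ℝ) := by
    intro s; simp only [hB']
    congr 2
    exact Fin.ext (by rw [Fin.coe_castSucc]; exact Nat.min_eq_left s.isLt.le)
  have hA'eval : ∀ (m : ℕ) (hm : m ≤ S), A' m = a ⟨m, Nat.lt_succ_of_le hm⟩ := by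
    intro m hm; simp only [hA']; congr 1; exact Fin.ext (Nat.min_eq_left hm)
  have hB'eval : ∀ (m : ℕ) (hm : m ≤ S), B' m = (b ⟨m, Nat.lt_succ_of_le hm⟩ : ℝ) := by
    intro m hm; simp only [hB']; congr 2; exact Fin.ext (Nat.min_eq_left hm)
  have hA'0 : A' 0 = 0 := by
    have h0 : (⟨min 0 S, hminlt 0⟩ : Fin (S+1)) = 0 := by ext; simp
    simp only [hA', h0, ha0]
  have hB'0 : B' 0 = (b 0 : ℝ) := by
    have h0 : (⟨min 0 S, hminlt 0⟩ : Fin (S+1)) = 0 := by ext; simp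
    simp only [hB', h0]
  have hB'S : B' S = 0 := by
    rw [hB'eval S le_rfl, show (⟨S, Nat.lt_succ_of_le le_rfl⟩ : Fin (S+1)) = Fin.last S from rfl,
      hbS, Nat.cast_zero]
  have hrangefilter : ∀ (m : ℕ), m ≤ S →
      (Finset.range S).filter (fun j => j < m) = Finset.range m := by
    intro m hm; ext j; simp only [Finset.mem_filter, Finset.mem_range]; omega
  -- Telescoping sum for a
  have T1 : ∀ (m : ℕ) (hm : m ≤ S),
      (∑ s : Fin S, if (s : ℕ) < m then d s else 0) = a ⟨m, Nat.lt_succ_of_le hm⟩ := by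
    intro m hm
    have e1 : (∑ s : Fin S, if (s : ℕ) < m then d s else 0)
        = ∑ j ∈ Finset.range S, (fun j => if j < m then A' (j + 1) - A' j else 0) j := by
      rw [← Fin.sum_univ_eq_sum_range]
      refine Finset.sum_congr rfl fun s _ => ?_
      simp only [hA'succ s, hA'cast s, hd]
    rw [e1, ← Finset.sum_filter, hrangefilter m hm, Finset.sum_range_tsub hA'mono, hA'0,
      hA'eval m hm, Nat.sub_zero]
  -- Telescoping sum for b
  have T2 : ∀ (m : ℕ) (hm : m ≤ S),
      (∑ s : Fin S, if (s : ℕ) < m then 0 else ((b s.castSucc : ℝ) - (b s.succ : ℝ)))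
        = (b ⟨m, Nat.lt_succ_of_le hm⟩ : ℝ) := by
    intro m hm
    have e1 : (∑ s : Fin S, if (s : ℕ) < m then 0 else ((b s.castSucc : ℝ) - (b s.succ : ℝ)))
        = ∑ j ∈ Finset.range S, (fun j => if j < m then 0 else (B' j - B' (j + 1))) j := by
      rw [← Fin.sum_univ_eq_sum_range]
      refine Finset.sum_congr rfl fun s _ => ?_
      simp only [hB'succ s, hB'cast s]
    have e2 : ∀ (k : ℕ), ∑ j ∈ Finset.range k, (B' j - B' (j + 1)) = B' 0 - B' k :=
      fun k => Finset.sum_range_sub' B' k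
    have e3 : (∑ j ∈ Finset.range S, if j < m then 0 else (B' j - B' (j + 1)))
        = (∑ j ∈ Finset.range S, (B' j - B' (j+1)))
          - (∑ j ∈ Finset.range S, if j < m then (B' j - B' (j + 1)) else 0) := by
      rw [eq_sub_iff_add_eq, ← Finset.sum_add_distrib]
      refine Finset.sum_congr rfl fun j _ => ?_
      by_cases h : j < m <;> simp [h]
    rw [e1, e3, ← Finset.sum_filter, hrangefilter m hm, e2 S, e2 m, hB'S, hB'eval m hm]
    ring
  -- choose the constants
  refine ⟨((2:ℝ) ^ (a (Fin.last S)))⁻¹, by positivity,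
    ((a (Fin.last S) + 1 : ℕ) : ℝ) * ((b 0 + 1 : ℕ) : ℝ), by positivity, ?_⟩
  intro ξ lam hlam
  set x := ‖ξ‖ with hx
  set μ := ‖lam‖ with hmu
  have hx0 : 0 ≤ x := norm_nonneg _
  have hμ0 : (0:ℝ) < μ := lt_of_lt_of_le one_pos hlam
  set P := ∏ i : Fin S, (x + μ ^ (1 / r i)) ^ d i with hP
  set F := (Finset.Iic (a (Fin.last S)) ×ˢ Finset.Iic (b 0)).filter
      (fun p : ℕ × ℕ => ((p.1 : ℝ), (p.2 : ℝ)) ∈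
        convexHull ℝ (insert ((0 : ℝ), (0 : ℝ))
          (Set.range fun i : Fin (S + 1) => ((a i : ℝ), (b i : ℝ))))) with hF
  have hμr1 : ∀ s : Fin S, (1:ℝ) ≤ μ ^ (1/r s) := by
    intro s
    calc (1:ℝ) = μ ^ (0:ℝ) := (Real.rpow_zero μ).symm
      _ ≤ μ ^ (1/r s) := Real.rpow_le_rpow_of_exponent_le hlam (le_of_lt (one_div_pos.mpr (hrpos s)))
  have hμrpos : ∀ s : Fin S, 0 < μ ^ (1/r s) := fun s => lt_of_lt_of_le one_pos (hμr1 s)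
  -- the key product computation
  have L0 : ∀ (m : ℕ) (hm : m ≤ S),
      (∏ s : Fin S, (if (s:ℕ) < m then x else μ ^ (1/r s)) ^ d s)
        = x ^ (a ⟨m, Nat.lt_succ_of_le hm⟩)
          * μ ^ ((b ⟨m, Nat.lt_succ_of_le hm⟩ : ℕ) : ℝ) := by
    intro m hm
    have e1 : ∀ s : Fin S, (if (s:ℕ) < m then x else μ ^ (1/r s)) ^ d s
        = x ^ (if (s:ℕ) < m then d s else 0)
          * μ ^ (if (s:ℕ) < m then (0:ℝ) else (d s : ℝ) / r s) := by
      intro s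
      by_cases h : (s:ℕ) < m
      · simp [h]
      · simp only [h, if_false, pow_zero, one_mul]
        rw [← Real.rpow_natCast (μ ^ (1/r s)) (d s), ← Real.rpow_mul hμ0.le]
        congr 1
        field_simp
    rw [Finset.prod_congr rfl (fun s _ => e1 s), Finset.prod_mul_distrib,
      Finset.prod_pow_eq_pow_sum, ← Real.rpow_sum_of_pos hμ0, T1 m hm]
    congr 1
    have e2 : (∑ s : Fin S, if (s:ℕ) < m then (0:ℝ) else (d s:ℝ)/r s)
        = ∑ s : Fin S, if (s:ℕ) < m then (0:ℝ) else ((b s.castSucc:ℝ) - (b s.succ:ℝ)) :=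
      Finset.sum_congr rfl fun s _ => by by_cases h : (s:ℕ) < m <;> simp [h, hdr s]
    rw [e2, T2 m hm]
  -- every vertex term is below the product
  have L1 : ∀ t : Fin (S+1), x ^ a t * μ ^ b t ≤ P := by
    intro t
    have htle : t.val ≤ S := Nat.lt_succ_iff.mp t.isLt
    have heq := L0 t.val htle
    have hfin : (⟨t.val, Nat.lt_succ_of_le htle⟩ : Fin (S+1)) = t := Fin.ext rfl
    rw [hfin] at heq
    calc x ^ a t * μ ^ b t
        = ∏ s : Fin S, (if (s:ℕ) < t.val then x else μ ^ (1/r s)) ^ d s := by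
          rw [heq, Real.rpow_natCast]
      _ ≤ P := by
          rw [hP]
          refine Finset.prod_le_prod (fun s _ => ?_) (fun s _ => ?_)
          · apply pow_nonneg
            by_cases h : (s:ℕ) < t.val
            · simp only [h, if_true]; exact hx0
            · simp only [h, if_false]; exact (hμrpos s).le
          · apply pow_le_pow_left₀
            · by_cases h : (s:ℕ) < t.val
              · simp only [h, if_true]; exact hx0
              · simp only [h, if_false]; exact (hμrpos s).le
            · by_cases h : (s:ℕ) < t.val
              · simp only [h, if_true]
                exact le_add_of_nonneg_right (hμrpos s).le
              · simp only [h, if_false]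
                exact le_add_of_nonneg_left hx0
  have hP1 : (1:ℝ) ≤ P := by
    have h := L1 0
    rw [ha0, pow_zero, one_mul] at h
    exact le_trans (one_le_pow₀ hlam) h
  have hPpos : (0:ℝ) < P := lt_of_lt_of_le one_pos hP1
  -- the product is below a single vertex term, up to a factor
  have L2 : ∃ t : Fin (S+1), P ≤ 2 ^ (a (Fin.last S)) * (x ^ a t * μ ^ b t) := by
    set T : Finset (Fin S) := Finset.univ.filter (fun s => μ ^ (1/r s) ≤ x) with hT
    have hTlow : ∀ s s' : Fin S, s' ≤ s → s ∈ T → s' ∈ T := by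
      intro s s' hss hs
      rw [hT, Finset.mem_filter] at hs ⊢
      refine ⟨Finset.mem_univ _, le_trans ?_ hs.2⟩
      apply Real.rpow_le_rpow_of_exponent_le hlam
      exact one_div_le_one_div_of_le (hrpos s) (hranti.antitone hss)
    have hcard : T.card ≤ S := le_trans (Finset.card_le_univ T) (by simp)
    have hmem : ∀ s : Fin S, s ∈ T ↔ (s:ℕ) < T.card := by
      intro s
      constructor
      · intro hs
        have hsub : Finset.Iic s ⊆ T := fun s' hs' => hTlow s s' (Finset.mem_Iic.mp hs') hs
        have hle := Finset.card_le_card hsub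
        rw [Fin.card_Iic] at hle
        omega
      · intro hlt
        by_contra hs
        have hsub : T ⊆ Finset.Iio s := by
          intro s' hs'
          rw [Finset.mem_Iio]
          by_contra hge
          exact hs (hTlow s' s (le_of_not_gt hge) hs')
        have hle := Finset.card_le_card hsub
        rw [Fin.card_Iio] at hle
        omega
    refine ⟨⟨T.card, Nat.lt_succ_of_le hcard⟩, ?_⟩
    have key := L0 T.card hcard
    have hsumd : (∑ s : Fin S, d s) = a (Fin.last S) := by
      have h := T1 S le_rfl
      rw [Finset.sum_congr rfl (fun (s : Fin S) _ => (if_pos s.isLt))] at h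
      exact h
    calc P ≤ ∏ s : Fin S, (2 * (if (s:ℕ) < T.card then x else μ ^ (1/r s))) ^ d s := by
          rw [hP]
          refine Finset.prod_le_prod (fun s _ => by positivity) (fun s _ => ?_)
          apply pow_le_pow_left₀ (by positivity)
          by_cases h : (s:ℕ) < T.card
          · have hsx : μ ^ (1/r s) ≤ x := (Finset.mem_filter.mp ((hmem s).mpr h)).2
            simp only [h, if_true]
            linarith
          · have hxs : x ≤ μ ^ (1/r s) := by
              by_contra hc
              exact h ((hmem s).mp (Finset.mem_filter.mpr
                ⟨Finset.mem_univ _, (le_of_lt (lt_of_not_ge hc))⟩))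
            simp only [h, if_false]
            linarith
      _ = (∏ s : Fin S, (2:ℝ) ^ d s)
            * ∏ s : Fin S, (if (s:ℕ) < T.card then x else μ ^ (1/r s)) ^ d s := by
          rw [← Finset.prod_mul_distrib]
          exact Finset.prod_congr rfl fun s _ => mul_pow _ _ _
      _ = 2 ^ (a (Fin.last S)) * (x ^ a ⟨T.card, Nat.lt_succ_of_le hcard⟩
            * μ ^ b ⟨T.card, Nat.lt_succ_of_le hcard⟩) := by
          rw [Finset.prod_pow_eq_pow_sum, hsumd, key, Real.rpow_natCast]
  -- each lattice point term is below the product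
  have hterm : ∀ p ∈ F, x ^ p.1 * μ ^ p.2 ≤ P := by
    intro p hp
    rw [hF, Finset.mem_filter] at hp
    obtain ⟨hpmem, hphull⟩ := hp
    rcases eq_or_lt_of_le hx0 with hxz | hxpos
    · -- x = 0
      rcases Nat.eq_zero_or_pos p.1 with h1 | h1
      · rw [h1, pow_zero, one_mul]
        have hk : p.2 ≤ b 0 := by
          rw [Finset.mem_product] at hpmem
          exact Finset.mem_Iic.mp hpmem.2
        calc μ ^ p.2 ≤ μ ^ (b 0) := pow_le_pow_right₀ hlam hk
          _ ≤ P := by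
              have h := L1 0
              rwa [ha0, pow_zero, one_mul] at h
      · rw [← hxz, zero_pow h1.ne', zero_mul]
        exact hPpos.le
    · -- x > 0 : use a convex combination
      rw [_root_.convexHull_eq] at hphull
      obtain ⟨ι, t, w, z, hw0, hw1, hz, hcm⟩ := hphull
      rw [Finset.centerMass_eq_of_sum_1 _ _ hw1] at hcm
      have h1 : (p.1 : ℝ) = ∑ i ∈ t, (z i).1 * w i := by
        have h := congrArg Prod.fst hcm
        simp only [Prod.fst_sum, Prod.smul_fst, smul_eq_mul] at h
        rw [← h]
        exact Finset.sum_congr rfl fun i _ => mul_comm _ _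
      have h2 : (p.2 : ℝ) = ∑ i ∈ t, (z i).2 * w i := by
        have h := congrArg Prod.snd hcm
        simp only [Prod.snd_sum, Prod.smul_snd, smul_eq_mul] at h
        rw [← h]
        exact Finset.sum_congr rfl fun i _ => mul_comm _ _
      have hbase : ∀ i ∈ t, (0:ℝ) ≤ x ^ (z i).1 * μ ^ (z i).2
          ∧ x ^ (z i).1 * μ ^ (z i).2 ≤ P := by
        intro i hi
        constructor
        · positivity
        · rcases hz i hi with h0 | ⟨j, hj⟩
          · rw [h0]
            simpa using hP1
          · rw [← hj]
            simp only
            rw [Real.rpow_natCast, Real.rpow_natCast]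
            exact L1 j
      calc x ^ p.1 * μ ^ p.2 = x ^ ((p.1:ℕ):ℝ) * μ ^ ((p.2:ℕ):ℝ) := by
            rw [Real.rpow_natCast, Real.rpow_natCast]
        _ = ∏ i ∈ t, (x ^ (z i).1 * μ ^ (z i).2) ^ w i := by
            rw [h1, h2, Real.rpow_sum_of_pos hxpos, Real.rpow_sum_of_pos hμ0,
              ← Finset.prod_mul_distrib]
            refine Finset.prod_congr rfl fun i hi => ?_
            rw [Real.mul_rpow (Real.rpow_nonneg hx0 _) (Real.rpow_nonneg hμ0.le _),
              ← Real.rpow_mul hx0, ← Real.rpow_mul hμ0.le]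
        _ ≤ ∏ i ∈ t, P ^ w i := by
            refine Finset.prod_le_prod (fun i hi => ?_) (fun i hi => ?_)
            · exact Real.rpow_nonneg (hbase i hi).1 _
            · exact Real.rpow_le_rpow (hbase i hi).1 (hbase i hi).2 (hw0 i hi)
        _ = P ^ (∑ i ∈ t, w i) := (Real.rpow_sum_of_pos hPpos w t).symm
        _ = P := by rw [hw1, Real.rpow_one]
  constructor
  · -- lower bound
    obtain ⟨t, hL2⟩ := L2
    have hmemF : (a t, b t) ∈ F := by
      rw [hF, Finset.mem_filter]
      constructor
      · rw [Finset.mem_product]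
        exact ⟨Finset.mem_Iic.mpr (hamono.monotone (Fin.le_last t)),
          Finset.mem_Iic.mpr (hbanti.antitone (Fin.zero_le t))⟩
      · exact subset_convexHull ℝ _ (Set.mem_insert_of_mem _ ⟨t, rfl⟩)
    have hle : x ^ a t * μ ^ b t ≤ ∑ p ∈ F, x ^ p.1 * μ ^ p.2 :=
      Finset.single_le_sum (f := fun p : ℕ × ℕ => x ^ p.1 * μ ^ p.2)
        (fun p _ => by positivity) hmemF
    have h2 : ((2:ℝ) ^ a (Fin.last S))⁻¹ * P ≤ x ^ a t * μ ^ b t := by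
      rw [inv_mul_le_iff₀ (by positivity)]
      exact hL2
    exact le_trans h2 hle
  · -- upper bound
    have hcardF : (F.card : ℝ) ≤ ((a (Fin.last S) + 1 : ℕ) : ℝ) * ((b 0 + 1 : ℕ) : ℝ) := by
      have h := Finset.card_filter_le (Finset.Iic (a (Fin.last S)) ×ˢ Finset.Iic (b 0))
        (fun p : ℕ × ℕ => ((p.1 : ℝ), (p.2 : ℝ)) ∈
          convexHull ℝ (insert ((0 : ℝ), (0 : ℝ))
            (Set.range fun i : Fin (S + 1) => ((a i : ℝ), (b i : ℝ)))))
      rw [Finset.card_product, Nat.card_Iic, Nat.card_Iic] at h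
      rw [hF]
      exact_mod_cast h
    calc (∑ p ∈ F, x ^ p.1 * μ ^ p.2) ≤ F.card • P := Finset.sum_le_card_nsmul F _ P hterm
      _ = (F.card : ℝ) * P := nsmul_eq_mul _ _
      _ ≤ ((a (Fin.last S) + 1 : ℕ) : ℝ) * ((b 0 + 1 : ℕ) : ℝ) * P :=
          mul_le_mul_of_nonneg_right hcardF hPpos.le

end
end
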